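/- arXiv:1201.1999 — 7 statements merged into one kernel-verified Lean document; each statement's English description precedes it below -/
import Mathlib

section
/- Let f : ℝ × ℝ^N → ℝ^N satisfy the Carathéodory conditions (continuity in x for each fixed t; measurability in t for each fixed x together with a locally Lebesgue-integrable bound ‖f(t,x)‖ ≤ m_x(t)) and be locally Lipschitz in x. Suppose f is quasipositive, i.e. for each i, f_i(t, x_1,…,x_{i−1}, 0, x_{i+1},…,x_N) ≥ 0 whenever x_j ≥ 0 for all j ≠ i. If x : [0,∞) → ℝ^N is a continuous function satisfying the integral equation x(t) = x(0) + ∫₀ᵗ f(s, x(s)) ds for all t ≥ 0 (equivalently, an absolutely continuous solution of x' = f(t,x) a.e.) and x(0) has all components ≥ 0, then x(t) has all components ≥ 0 for every t ≥ 0. -/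
open MeasureTheory
open Topology Filter

theorem aux_integrable {N : ℕ} (f : ℝ → (Fin N → ℝ) → (Fin N → ℝ))
    (hC1 : ∀ t : ℝ, Continuous (f t))
    (hC2meas : ∀ x : Fin N → ℝ, Measurable fun t => f t x)
    (hC2bound : ∀ x : Fin N → ℝ, ∃ m : ℝ → ℝ,
      (∀ a b : ℝ, IntegrableOn m (Set.Icc a b)) ∧ ∀ t : ℝ, ‖f t x‖ ≤ m t)
    (hLip : ∀ (t₀ : ℝ) (x₀ : Fin N → ℝ), ∃ ε > (0 : ℝ), ∃ L : ℝ,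
      ∀ t : ℝ, |t - t₀| < ε → ∀ x y : Fin N → ℝ, ‖x - x₀‖ < ε → ‖y - x₀‖ < ε →
        ‖f t x - f t y‖ ≤ L * ‖x - y‖)
    (x : ℝ → (Fin N → ℝ)) (hxcont : ContinuousOn x (Set.Ici (0 : ℝ)))
    (b : ℝ) : IntegrableOn (fun s => f s (x s)) (Set.Icc 0 b) := by
  have hF : Measurable (Function.uncurry fun (v : Fin N → ℝ) (t : ℝ) => f t v) :=
    measurable_uncurry_of_continuous_of_measurable hC1 hC2meas
  have hxm : AEMeasurable x (volume.restrict (Set.Icc 0 b)) :=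
    (hxcont.mono Set.Icc_subset_Ici_self).aemeasurable measurableSet_Icc
  have hgm : AEStronglyMeasurable (fun s => f s (x s)) (volume.restrict (Set.Icc 0 b)) := by
    have hpair : AEMeasurable (fun s => (x s, s)) (volume.restrict (Set.Icc 0 b)) :=
      hxm.prodMk aemeasurable_id
    exact (hF.comp_aemeasurable hpair).aestronglyMeasurable
  have key : ∀ s₀ : ℝ, s₀ ∈ Set.Icc (0:ℝ) b → ∃ δ > (0:ℝ),
      IntegrableOn (fun s => f s (x s)) (Set.Ioo (s₀-δ) (s₀+δ) ∩ Set.Icc 0 b) := by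
    intro s₀ hs₀
    obtain ⟨ε, hε, L, hL⟩ := hLip s₀ (x s₀)
    obtain ⟨m, hm, hmb⟩ := hC2bound (x s₀)
    obtain ⟨δ₁, hδ₁, hδ₁'⟩ : ∃ δ₁ > (0:ℝ), ∀ s ∈ Set.Ici (0:ℝ), |s - s₀| < δ₁ → ‖x s - x s₀‖ < ε := by
      have hc := hxcont s₀ hs₀.1
      rw [Metric.continuousWithinAt_iff] at hc
      obtain ⟨δ, hδ, h⟩ := hc ε hε
      exact ⟨δ, hδ, fun s hs hd => by
        simpa [dist_eq_norm] using h hs (by simpa [Real.dist_eq] using hd)⟩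
    set δ := min δ₁ ε with hδdef
    have hδpos : 0 < δ := lt_min hδ₁ hε
    refine ⟨δ, hδpos, ?_⟩
    have hbound : IntegrableOn (fun s => m s + |L| * ε) (Set.Icc (s₀-δ) (s₀+δ)) := by
      exact (hm _ _).add (integrableOn_const measure_Icc_lt_top.ne)
    refine Integrable.mono'
      (hbound.mono_set (fun s hs => ⟨(Set.Ioo_subset_Icc_self hs.1).1, (Set.Ioo_subset_Icc_self hs.1).2⟩))
      (hgm.mono_measure (Measure.restrict_mono Set.inter_subset_right le_rfl)) ?_
    refine ae_restrict_of_forall_mem (measurableSet_Ioo.inter measurableSet_Icc) ?_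
    intro s hs
    have hsd : |s - s₀| < δ := by
      rw [abs_sub_lt_iff]; constructor
      · linarith [hs.1.2]
      · linarith [hs.1.1]
    have hsε : |s - s₀| < ε := lt_of_lt_of_le hsd (min_le_right _ _)
    have hxn : ‖x s - x s₀‖ < ε :=
      hδ₁' s hs.2.1 (lt_of_lt_of_le hsd (min_le_left _ _))
    have hLip' := hL s hsε (x s) (x s₀) hxn (by simpa using hε)
    have h1 : ‖f s (x s)‖ ≤ ‖f s (x s₀)‖ + ‖f s (x s) - f s (x s₀)‖ := by
      calc ‖f s (x s)‖ = ‖f s (x s₀) + (f s (x s) - f s (x s₀))‖ := by congr 1; abel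
      _ ≤ _ := norm_add_le _ _
    have h2 : L * ‖x s - x s₀‖ ≤ |L| * ε := by
      calc L * ‖x s - x s₀‖ ≤ |L| * ‖x s - x s₀‖ :=
            mul_le_mul_of_nonneg_right (le_abs_self L) (norm_nonneg _)
      _ ≤ |L| * ε := mul_le_mul_of_nonneg_left hxn.le (abs_nonneg _)
    calc ‖f s (x s)‖ ≤ ‖f s (x s₀)‖ + ‖f s (x s) - f s (x s₀)‖ := h1
    _ ≤ m s + |L| * ε := add_le_add (hmb s) (hLip'.trans h2)
  choose! δ hδpos hδint using key
  obtain ⟨tfin, htmem, hcov⟩ := (isCompact_Icc (a := (0:ℝ)) (b := b)).elim_nhds_subcover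
    (fun s₀ => Set.Ioo (s₀ - δ s₀) (s₀ + δ s₀))
    (fun s₀ hs₀ => Ioo_mem_nhds (by linarith [hδpos s₀ hs₀]) (by linarith [hδpos s₀ hs₀]))
  have hsub : Set.Icc (0:ℝ) b ⊆ ⋃ s₀ ∈ tfin, (Set.Ioo (s₀ - δ s₀) (s₀ + δ s₀) ∩ Set.Icc 0 b) := by
    intro s hs
    obtain ⟨U, hU, hsU⟩ := Set.mem_iUnion₂.1 (hcov hs)
    exact Set.mem_iUnion₂.2 ⟨U, hU, hsU, hs⟩
  refine IntegrableOn.mono_set ?_ hsub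
  rw [integrableOn_finset_iUnion]
  exact fun s₀ hs₀ => hδint s₀ (htmem s₀ hs₀)


/-- **Positivity of solutions of quasipositive Carathéodory ODEs.**
Let `f : ℝ × ℝ^N → ℝ^N` satisfy the Carathéodory conditions (continuity in `x` for each
fixed `t`; measurability in `t` for each fixed `x` together with a locally integrable
bound `‖f t x‖ ≤ m_x t`) and a local Lipschitz condition in `x` near every point.
If `f` is quasipositive and `x` is a Carathéodory solution of `x' = f(t, x)` on `[0, ∞)`
(i.e. continuous on `[0, ∞)` with `x t = x 0 + ∫ s in 0..t, f s (x s)` for `t ≥ 0`)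
with all components of `x 0` nonnegative, then all components of `x t` are nonnegative
for every `t ≥ 0`. -/
theorem caratheodory_quasipositive_solution_nonneg {N : ℕ}
    (f : ℝ → (Fin N → ℝ) → (Fin N → ℝ))
    -- Carathéodory condition C1: continuity in `x` for fixed `t`
    (hC1 : ∀ t : ℝ, Continuous (f t))
    -- Carathéodory condition C2: measurability in `t` for fixed `x` and a locally
    -- integrable bound
    (hC2meas : ∀ x : Fin N → ℝ, Measurable fun t => f t x)
    (hC2bound : ∀ x : Fin N → ℝ, ∃ m : ℝ → ℝ,
      (∀ a b : ℝ, IntegrableOn m (Set.Icc a b)) ∧ ∀ t : ℝ, ‖f t x‖ ≤ m t)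
    -- local Lipschitz condition in `x` in a neighbourhood of every point `(t₀, x₀)`
    (hLip : ∀ (t₀ : ℝ) (x₀ : Fin N → ℝ), ∃ ε > (0 : ℝ), ∃ L : ℝ,
      ∀ t : ℝ, |t - t₀| < ε → ∀ x y : Fin N → ℝ, ‖x - x₀‖ < ε → ‖y - x₀‖ < ε →
        ‖f t x - f t y‖ ≤ L * ‖x - y‖)
    -- quasipositivity: `f i (t, x₁, …, x_{i-1}, 0, x_{i+1}, …, x_N) ≥ 0` whenever
    -- `x j ≥ 0` for all `j ≠ i`
    (hquasi : ∀ (t : ℝ) (x : Fin N → ℝ) (i : Fin N),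
      x i = 0 → (∀ j, j ≠ i → 0 ≤ x j) → 0 ≤ f t x i)
    (x : ℝ → (Fin N → ℝ))
    (hxcont : ContinuousOn x (Set.Ici (0 : ℝ)))
    (hxsol : ∀ t : ℝ, 0 ≤ t → x t = x 0 + ∫ s in (0 : ℝ)..t, f s (x s))
    (hx0 : ∀ i, 0 ≤ x 0 i) :
    ∀ t : ℝ, 0 ≤ t → ∀ i, 0 ≤ x t i := by
  by_contra hcon
  push_neg at hcon
  obtain ⟨t₀, ht₀, i₀, hneg⟩ := hcon
  have hInt : ∀ b : ℝ, IntegrableOn (fun s => f s (x s)) (Set.Icc 0 b) :=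
    aux_integrable f hC1 hC2meas hC2bound hLip x hxcont
  have hII : ∀ a b : ℝ, 0 ≤ a → a ≤ b → IntervalIntegrable (fun s => f s (x s)) volume a b := by
    intro a b ha hab
    rw [intervalIntegrable_iff_integrableOn_Ioc_of_le hab]
    exact (hInt b).mono_set (Set.Ioc_subset_Icc_self.trans (Set.Icc_subset_Icc_left ha))
  have hcomp : ∀ a b : ℝ, 0 ≤ a → a ≤ b → ∀ i,
      x b i - x a i = ∫ s in a..b, f s (x s) i := by
    intro a b ha hab i
    have hdiff : x b - x a = ∫ s in a..b, f s (x s) := by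
      have h1 := hxsol a ha
      have h2 := hxsol b (ha.trans hab)
      have hadd := intervalIntegral.integral_add_adjacent_intervals
        (hII 0 a le_rfl ha) (hII a b ha hab)
      rw [h1, h2, ← hadd]; abel
    have h2 := (ContinuousLinearMap.proj (R := ℝ) (φ := fun _ : Fin N => ℝ) i
      ).intervalIntegral_comp_comm (hII a b ha hab)
    calc x b i - x a i = (x b - x a) i := rfl
    _ = (∫ s in a..b, f s (x s)) i := by rw [hdiff]
    _ = ∫ s in a..b, f s (x s) i := h2.symm
  set B : Set ℝ := {t | t ∈ Set.Icc 0 t₀ ∧ ∃ i, x t i < 0} with hBdef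
  have hBne : B.Nonempty := ⟨t₀, ⟨ht₀, le_rfl⟩, i₀, hneg⟩
  have hBbdd : BddBelow B := ⟨0, fun t ht => ht.1.1⟩
  set T := sInf B with hTdef
  have hT0 : 0 ≤ T := le_csInf hBne fun t ht => ht.1.1
  have hTle : T ≤ t₀ := csInf_le hBbdd ⟨⟨ht₀, le_rfl⟩, i₀, hneg⟩
  have hTnnlt : ∀ s, 0 ≤ s → s < T → ∀ i, 0 ≤ x s i := by
    intro s hs hsT i
    by_contra hc; push_neg at hc
    exact absurd (csInf_le hBbdd ⟨⟨hs, hsT.le.trans hTle⟩, i, hc⟩) (not_le.2 hsT)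
  have hTnnT : ∀ i, 0 ≤ x T i := by
    intro i
    by_contra hc; push_neg at hc
    rcases eq_or_lt_of_le hT0 with h0 | h0
    · exact absurd (hx0 i) (by rw [← h0] at hc; exact not_le.2 hc)
    · have hc1 : ContinuousWithinAt (fun u => x u i) (Set.Ici 0) T :=
        (continuous_apply i).continuousAt.comp_continuousWithinAt (hxcont T hT0)
      have hev : ∀ᶠ u in 𝓝[Set.Ici (0:ℝ)] T, x u i < 0 :=
        Filter.Tendsto.eventually_lt_const hc hc1
      have heq : 𝓝[Set.Ici (0:ℝ)] T = 𝓝 T := nhdsWithin_eq_nhds.2 (Ici_mem_nhds h0)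
      rw [heq] at hev
      have hev2 : ∀ᶠ u in 𝓝 T, (0:ℝ) < u := eventually_gt_nhds h0
      have hev3 : ∀ᶠ u in 𝓝[<] T, x u i < 0 ∧ (0:ℝ) < u ∧ u < T :=
        (((hev.and hev2).filter_mono nhdsWithin_le_nhds).and eventually_mem_nhdsWithin).mono
          (fun u hu => ⟨hu.1.1, hu.1.2, hu.2⟩)
      obtain ⟨u, hu1, hu2, hu3⟩ := hev3.exists
      exact absurd (csInf_le hBbdd ⟨⟨hu2.le, hu3.le.trans hTle⟩, i, hu1⟩) (not_le.2 hu3)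
  have hTnn : ∀ s, 0 ≤ s → s ≤ T → ∀ i, 0 ≤ x s i := by
    intro s hs hsT i
    rcases lt_or_eq_of_le hsT with h | h
    · exact hTnnlt s hs h i
    · rw [h]; exact hTnnT i
  -- local setup at T
  obtain ⟨ε, hε, L, hL⟩ := hLip T (x T)
  set L' := max L 1 with hL'def
  have hL' : (0:ℝ) < L' := lt_of_lt_of_le one_pos (le_max_right _ _)
  obtain ⟨δ₁, hδ₁, hδ₁'⟩ : ∃ δ₁ > (0:ℝ), ∀ s ∈ Set.Ici (0:ℝ), |s - T| < δ₁ → ‖x s - x T‖ < ε := by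
    have hc := hxcont T hT0
    rw [Metric.continuousWithinAt_iff] at hc
    obtain ⟨δ, hδ, h⟩ := hc ε hε
    exact ⟨δ, hδ, fun s hs hd => by
      simpa [dist_eq_norm] using h hs (by simpa [Real.dist_eq] using hd)⟩
  set δ := min (min (ε/2) (δ₁/2)) (1/(2*L')) with hδdef
  have hδpos : 0 < δ := by
    apply lt_min (lt_min (by linarith) (by linarith))
    positivity
  have hδε : δ < ε := lt_of_le_of_lt ((min_le_left _ _).trans (min_le_left _ _)) (by linarith)
  have hδδ₁ : δ < δ₁ := lt_of_le_of_lt ((min_le_left _ _).trans (min_le_right _ _)) (by linarith)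
  have hδL : L' * δ ≤ 1/2 := by
    have h1 : δ ≤ 1/(2*L') := min_le_right _ _
    calc L' * δ ≤ L' * (1/(2*L')) := mul_le_mul_of_nonneg_left h1 hL'.le
    _ = 1/2 := by
      have h2 : L' ≠ 0 := ne_of_gt hL'
      field_simp
  set pos : ℝ → Fin N → ℝ := fun s j => max (x s j) 0 with hposdef
  set φ : ℝ → ℝ := fun s => ‖x s - pos s‖ with hφdef
  have hposcont : ContinuousOn pos (Set.Ici (0:ℝ)) :=
    (continuous_pi (fun j => (continuous_apply j).max continuous_const)).comp_continuousOn hxcont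
  have hφcont : ContinuousOn φ (Set.Ici (0:ℝ)) := (hxcont.sub hposcont).norm
  have hKsub : Set.Icc T (T+δ) ⊆ Set.Ici (0:ℝ) := fun s hs => hT0.trans hs.1
  obtain ⟨z, hzK, hzmax⟩ := isCompact_Icc.exists_isMaxOn
    ⟨T, Set.left_mem_Icc.2 (by linarith)⟩ (hφcont.mono hKsub)
  set M := φ z with hMdef
  have hM0 : 0 ≤ M := norm_nonneg _
  have hkey : ∀ t ∈ Set.Icc T (T+δ), ∀ i, -x t i ≤ L' * δ * M := by
    intro t ht i
    have hRHS : 0 ≤ L' * δ * M := by positivity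
    rcases le_or_gt 0 (x t i) with h | h
    · linarith
    set A := Set.Icc T t ∩ (fun s => x s i) ⁻¹' Set.Ici 0 with hAdef
    have hAclosed : IsClosed A :=
      ContinuousOn.preimage_isClosed_of_isClosed
        (((continuous_apply i).comp_continuousOn (hxcont.mono (fun s hs => hT0.trans hs.1))))
        isClosed_Icc isClosed_Ici
    have hAne : A.Nonempty := ⟨T, Set.left_mem_Icc.2 ht.1, hTnnT i⟩
    have hAbdd : BddAbove A := ⟨t, fun s hs => hs.1.2⟩
    set τ := sSup A with hτdef
    have hτA : τ ∈ A := hAclosed.csSup_mem hAne hAbdd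
    have hτT : T ≤ τ := hτA.1.1
    have hτt : τ ≤ t := hτA.1.2
    have hτ0 : (0:ℝ) ≤ τ := hT0.trans hτT
    have hxτ : 0 ≤ x τ i := hτA.2
    have hnegs : ∀ s ∈ Set.Ioc τ t, x s i < 0 := by
      intro s hs
      by_contra hc; push_neg at hc
      exact absurd (le_csSup hAbdd ⟨⟨hτT.trans hs.1.le, hs.2⟩, hc⟩) (not_le.2 hs.1)
    have hpt : ∀ s ∈ Set.Ioc τ t, -(L' * φ s) ≤ f s (x s) i := by
      intro s hs
      have hsx : x s i < 0 := hnegs s hs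
      have hy0 : pos s i = 0 := max_eq_right hsx.le
      have hq : 0 ≤ f s (pos s) i := hquasi s (pos s) i hy0 (fun j _ => le_max_right _ _)
      have hsT1 : T ≤ s := hτT.trans hs.1.le
      have hsT2 : s ≤ T + δ := hs.2.trans ht.2
      have hsT : |s - T| < ε := by rw [abs_sub_lt_iff]; constructor <;> linarith
      have hs0 : (0:ℝ) ≤ s := hT0.trans hsT1
      have hxs : ‖x s - x T‖ < ε := hδ₁' s hs0 (by rw [abs_sub_lt_iff]; constructor <;> linarith)
      have hys : ‖pos s - x T‖ < ε := by
        refine lt_of_le_of_lt ?_ hxs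
        refine (pi_norm_le_iff_of_nonneg (norm_nonneg _)).2 (fun j => ?_)
        have hb : 0 ≤ x T j := hTnnT j
        calc ‖(pos s - x T) j‖ = |max (x s j) 0 - max (x T j) 0| := by
              simp [hposdef, max_eq_left hb, Real.norm_eq_abs]
        _ ≤ |x s j - x T j| := abs_max_sub_max_le_abs _ _ _
        _ = ‖(x s - x T) j‖ := by simp [Real.norm_eq_abs]
        _ ≤ ‖x s - x T‖ := norm_le_pi_norm _ j
      have hLb : ‖f s (x s) - f s (pos s)‖ ≤ L' * φ s := by
        have h1 := hL s hsT (x s) (pos s) hxs hys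
        have h2 : L * ‖x s - pos s‖ ≤ L' * ‖x s - pos s‖ :=
          mul_le_mul_of_nonneg_right (le_max_left _ _) (norm_nonneg _)
        exact h1.trans h2
      have hci : |f s (x s) i - f s (pos s) i| ≤ ‖f s (x s) - f s (pos s)‖ := by
        have h3 := norm_le_pi_norm (f s (x s) - f s (pos s)) i
        simpa [Real.norm_eq_abs] using h3
      have h4 := abs_le.1 (hci.trans hLb)
      linarith [h4.1]
    have hIIτ := hII τ t hτ0 hτt
    have hsub2 : Set.Icc τ t ⊆ Set.Ici (0:ℝ) := fun s hs => hτ0.trans hs.1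
    have hφint : IntervalIntegrable φ volume τ t := by
      apply ContinuousOn.intervalIntegrable
      rw [Set.uIcc_of_le hτt]
      exact hφcont.mono hsub2
    have hψint : IntervalIntegrable (fun s => -(L' * φ s)) volume τ t := by
      apply ContinuousOn.intervalIntegrable
      rw [Set.uIcc_of_le hτt]
      exact ((continuousOn_const.mul (hφcont.mono hsub2)).neg)
    have hGiint : IntervalIntegrable (fun s => f s (x s) i) volume τ t := by
      rw [intervalIntegrable_iff_integrableOn_Ioc_of_le hτt]
      have h5 : IntegrableOn (fun s => f s (x s)) (Set.Ioc τ t) :=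
        (intervalIntegrable_iff_integrableOn_Ioc_of_le hτt).1 hIIτ
      exact (ContinuousLinearMap.proj (R := ℝ) (φ := fun _ : Fin N => ℝ) i).integrable_comp h5
    have hae : (fun s => -(L' * φ s)) ≤ᵐ[volume.restrict (Set.Icc τ t)]
        fun s => f s (x s) i := by
      have h1 : ∀ᵐ s ∂volume.restrict (Set.Icc τ t), s ∈ Set.Icc τ t :=
        ae_restrict_mem measurableSet_Icc
      have h2 : ∀ᵐ s ∂(volume : Measure ℝ), s ≠ τ := by
        rw [ae_iff]
        simpa [] using measure_singleton τ
      filter_upwards [h1, ae_restrict_of_ae h2] with s hs hsne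
      exact hpt s ⟨lt_of_le_of_ne hs.1 (Ne.symm hsne), hs.2⟩
    have hint1 : ∫ s in τ..t, -(L' * φ s) ≤ ∫ s in τ..t, f s (x s) i :=
      intervalIntegral.integral_mono_ae_restrict hτt hψint hGiint hae
    have hub : ∫ s in τ..t, φ s ≤ (t - τ) * M := by
      have h6 := intervalIntegral.integral_mono_on hτt hφint
        (intervalIntegrable_const (c := M))
        (fun s hs => (isMaxOn_iff.1 hzmax) s ⟨hτT.trans hs.1, hs.2.trans ht.2⟩)
      simpa [smul_eq_mul, mul_comm] using h6
    have hi1 : ∫ s in τ..t, -(L' * φ s) = -(L' * ∫ s in τ..t, φ s) := by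
      rw [intervalIntegral.integral_neg, intervalIntegral.integral_const_mul]
    have hxt : x t i - x τ i = ∫ s in τ..t, f s (x s) i := hcomp τ t hτ0 hτt i
    have h7 : -(L' * ((t - τ) * M)) ≤ x t i - x τ i := by
      rw [hxt]
      refine le_trans ?_ hint1
      rw [hi1]
      have h8 : L' * ∫ s in τ..t, φ s ≤ L' * ((t - τ) * M) :=
        mul_le_mul_of_nonneg_left hub hL'.le
      linarith
    have ht' : t - τ ≤ δ := by
      have := ht.2; linarith
    have h9 : L' * ((t - τ) * M) ≤ L' * (δ * M) :=
      mul_le_mul_of_nonneg_left (mul_le_mul_of_nonneg_right ht' hM0) hL'.le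
    have h10 : L' * (δ * M) = L' * δ * M := by ring
    linarith
  have hφle : ∀ t ∈ Set.Icc T (T+δ), φ t ≤ L' * δ * M := by
    intro t ht
    have hRHS : 0 ≤ L' * δ * M := by positivity
    refine (pi_norm_le_iff_of_nonneg hRHS).2 (fun j => ?_)
    rcases le_or_gt 0 (x t j) with h | h
    · have : (x t - pos t) j = 0 := by simp [hposdef, max_eq_left h]
      rw [this]; simpa using hRHS
    · have : (x t - pos t) j = x t j := by simp [hposdef, max_eq_right h.le]
      rw [this, Real.norm_eq_abs, abs_of_neg h]
      exact hkey t ht j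
  have hM2 : M ≤ L' * δ * M := hφle z hzK
  have hMz : M = 0 := by nlinarith [mul_le_mul_of_nonneg_right hδL hM0]
  have hnnK : ∀ t ∈ Set.Icc T (T+δ), ∀ i, 0 ≤ x t i := by
    intro t ht i
    have h1 : φ t ≤ 0 := by
      have := hφle t ht; rw [hMz] at this; simpa using this
    have h2 : φ t = 0 := le_antisymm h1 (norm_nonneg _)
    have h3 : x t = pos t := sub_eq_zero.1 (norm_eq_zero.1 h2)
    have := congrFun h3 i
    rw [this]; exact le_max_right _ _
  obtain ⟨b, hbB, hbδ⟩ := exists_lt_of_csInf_lt hBne (show T < T + δ by linarith)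
  have hbT : T ≤ b := csInf_le hBbdd hbB
  obtain ⟨i, hbi⟩ := hbB.2
  exact absurd (hnnK b ⟨hbT, hbδ.le⟩ i) (not_le.2 hbi)
end

section
/- Let Q be an N×N real matrix whose off-diagonal entries are all nonnegative and which has a path of nonsingularity. Then for every bounded interval [T₁, T₂] ⊂ (0, ∞) there exists a number α = α(T₁,T₂) > 0 such that for every nonzero p₀ ∈ K, every t ∈ [T₁, T₂], and every y ∈ ℝ^N with ‖y‖ ≤ α‖p₀‖ (Euclidean norm), the vector exp(tQ) p₀ + y lies in K, i.e. has all components ≥ 0. -/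
/-- An `N × N` real matrix `Q` (with nonnegative off-diagonal entries) has a
*path of nonsingularity* if there are indices `i₁, …, iₙ` with `iₙ = i₁` such that
all entries `Q (i_j) (i_{j+1})` are strictly positive and `{i₁, …, iₙ}` contains
all indices. -/
def HasPathOfNonsingularity {N : ℕ} (Q : Matrix (Fin N) (Fin N) ℝ) : Prop :=
  ∃ (n : ℕ) (idx : Fin (n + 1) → Fin N),
    idx (Fin.last n) = idx 0 ∧
    (∀ j : Fin n, 0 < Q (idx j.castSucc) (idx j.succ)) ∧
    (∀ k : Fin N, ∃ j, idx j = k)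

open scoped Nat

section Aux

variable {N : ℕ}

private lemma entry_mul_le {B C : Matrix (Fin N) (Fin N) ℝ}
    (hB : ∀ i j, 0 ≤ B i j) (hC : ∀ i j, 0 ≤ C i j) (i j k : Fin N) :
    B i j * C j k ≤ (B * C) i k := by
  rw [Matrix.mul_apply]
  exact Finset.single_le_sum (f := fun l => B i l * C l k)
    (fun l _ => mul_nonneg (hB i l) (hC l k)) (Finset.mem_univ j)

private lemma pow_entry_nonneg {A : Matrix (Fin N) (Fin N) ℝ}
    (hA : ∀ i j, 0 ≤ A i j) : ∀ (k : ℕ) (i j : Fin N), 0 ≤ (A ^ k) i j := by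
  intro k
  induction k with
  | zero => intro i j; simp [Matrix.one_apply]; positivity
  | succ m ih =>
    intro i j
    rw [pow_succ, Matrix.mul_apply]
    exact Finset.sum_nonneg fun l _ => mul_nonneg (ih i l) (hA l j)

private lemma expHasSum (M : Matrix (Fin N) (Fin N) ℝ) :
    HasSum (fun k : ℕ => (k !⁻¹ : ℝ) • M ^ k) (NormedSpace.exp M) := by
  letI : SeminormedRing (Matrix (Fin N) (Fin N) ℝ) := Matrix.linftyOpSemiNormedRing
  letI : NormedRing (Matrix (Fin N) (Fin N) ℝ) := Matrix.linftyOpNormedRing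
  letI : NormedAlgebra ℝ (Matrix (Fin N) (Fin N) ℝ) := Matrix.linftyOpNormedAlgebra
  exact NormedSpace.exp_series_hasSum_exp' (𝕂 := ℝ) M

private lemma expHasSum_entry (M : Matrix (Fin N) (Fin N) ℝ) (i j : Fin N) :
    HasSum (fun k : ℕ => (k !⁻¹ : ℝ) * (M ^ k) i j) ((NormedSpace.exp M) i j) := by
  have h := (expHasSum M).map
    (AddMonoidHom.mk' (fun B : Matrix (Fin N) (Fin N) ℝ => B i j) (fun _ _ => rfl))
    (continuous_id.matrix_elem i j)
  exact h

private lemma exp_smul_one (s : ℝ) :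
    NormedSpace.exp (s • (1 : Matrix (Fin N) (Fin N) ℝ)) = Real.exp s • 1 := by
  letI : SeminormedRing (Matrix (Fin N) (Fin N) ℝ) := Matrix.linftyOpSemiNormedRing
  letI : NormedRing (Matrix (Fin N) (Fin N) ℝ) := Matrix.linftyOpNormedRing
  letI : NormedAlgebra ℝ (Matrix (Fin N) (Fin N) ℝ) := Matrix.linftyOpNormedAlgebra
  have h := NormedSpace.algebraMap_exp_comm (𝕂 := ℝ) (𝔸 := Matrix (Fin N) (Fin N) ℝ) s
  rw [Algebra.algebraMap_eq_smul_one, Algebra.algebraMap_eq_smul_one] at h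
  rw [Real.exp_eq_exp_ℝ]
  exact h.symm

private lemma exp_cont (Q : Matrix (Fin N) (Fin N) ℝ) :
    Continuous fun t : ℝ => NormedSpace.exp (t • Q) := by
  letI : SeminormedRing (Matrix (Fin N) (Fin N) ℝ) := Matrix.linftyOpSemiNormedRing
  letI : NormedRing (Matrix (Fin N) (Fin N) ℝ) := Matrix.linftyOpNormedRing
  letI : NormedAlgebra ℝ (Matrix (Fin N) (Fin N) ℝ) := Matrix.linftyOpNormedAlgebra
  letI : NormedAlgebra ℚ (Matrix (Fin N) (Fin N) ℝ) := Matrix.linftyOpNormedAlgebra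
  exact NormedSpace.exp_continuous.comp (continuous_id.smul continuous_const)

/-- All entries of `exp (t Q)` are strictly positive for `t > 0`. -/
private lemma exp_entry_pos (Q : Matrix (Fin N) (Fin N) ℝ)
    (hoff : ∀ i j : Fin N, i ≠ j → 0 ≤ Q i j)
    (hpath : HasPathOfNonsingularity Q) {t : ℝ} (ht : 0 < t) (i j : Fin N) :
    0 < (NormedSpace.exp (t • Q)) i j := by
  obtain ⟨n, idx, hcyc, hedge, hsurj⟩ := hpath
  set c : ℝ := ∑ k : Fin N, |Q k k| with hc
  have hc0 : 0 ≤ c := Finset.sum_nonneg fun k _ => abs_nonneg _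
  have hcge : ∀ k : Fin N, |Q k k| ≤ c :=
    fun k => Finset.single_le_sum (fun l _ => abs_nonneg (Q l l)) (Finset.mem_univ k)
  set A : Matrix (Fin N) (Fin N) ℝ := Q + c • 1 with hAdef
  have hAapp : ∀ i j, A i j = Q i j + (if i = j then c else 0) := by
    intro i j
    simp [hAdef, Matrix.one_apply, mul_ite]
  have hA0 : ∀ i j, 0 ≤ A i j := by
    intro i j
    rw [hAapp]
    split_ifs with h
    · subst h
      have := hcge i
      have := neg_abs_le (Q i i)
      linarith
    · simpa using hoff i j h
  -- positivity of path edges in A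
  have hAedge : ∀ j : Fin n, 0 < A (idx j.castSucc) (idx j.succ) := by
    intro j
    rw [hAapp]
    split_ifs with h
    · have := hedge j
      linarith
    · simpa using hedge j
  -- segment reachability
  have seg : ∀ (d a : ℕ) (h : a + d ≤ n),
      ∃ m : ℕ, 0 < (A ^ m) (idx ⟨a, by omega⟩) (idx ⟨a + d, by omega⟩) := by
    intro d
    induction d with
    | zero => intro a h; exact ⟨0, by simp [Matrix.one_apply]⟩
    | succ e ih =>
      intro a h
      obtain ⟨m, hm⟩ := ih a (by omega)
      refine ⟨m + 1, ?_⟩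
      have hlt : a + e < n := by omega
      have hedge' := hAedge ⟨a + e, hlt⟩
      have hcs : (Fin.castSucc ⟨a + e, hlt⟩ : Fin (n + 1)) = ⟨a + e, by omega⟩ := rfl
      have hsc : (Fin.succ ⟨a + e, hlt⟩ : Fin (n + 1)) = ⟨a + e + 1, by omega⟩ := rfl
      rw [hcs, hsc] at hedge'
      have hle := entry_mul_le (B := A ^ m) (C := A)
        (pow_entry_nonneg hA0 m) hA0 (idx ⟨a, by omega⟩) (idx ⟨a + e, by omega⟩)
        (idx ⟨a + e + 1, by omega⟩)
      rw [pow_succ]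
      calc (0 : ℝ) < (A ^ m) (idx ⟨a, by omega⟩) (idx ⟨a + e, by omega⟩) *
            A (idx ⟨a + e, by omega⟩) (idx ⟨a + e + 1, by omega⟩) := mul_pos hm hedge'
        _ ≤ _ := hle
  -- reach idx 0 from anything, and anything from idx 0
  have reach : ∀ i j : Fin N, ∃ m : ℕ, 0 < (A ^ m) i j := by
    intro i j
    obtain ⟨a, ha⟩ := hsurj i
    obtain ⟨b, hb⟩ := hsurj j
    obtain ⟨m₁, hm₁⟩ := seg (n - a.val) a.val (by omega)
    obtain ⟨m₂, hm₂⟩ := seg b.val 0 (by omega)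
    have e1 : (⟨a.val, by omega⟩ : Fin (n + 1)) = a := by ext; rfl
    have e2 : (⟨a.val + (n - a.val), by omega⟩ : Fin (n + 1)) = Fin.last n := by
      ext; simp; omega
    have e3 : (⟨0, by omega⟩ : Fin (n + 1)) = 0 := rfl
    have e4 : (⟨0 + b.val, by omega⟩ : Fin (n + 1)) = b := by ext; simp
    rw [e1, e2, hcyc, ha] at hm₁
    rw [e3, e4, hb] at hm₂
    refine ⟨m₁ + m₂, ?_⟩
    have hle := entry_mul_le (B := A ^ m₁) (C := A ^ m₂)
      (pow_entry_nonneg hA0 m₁) (pow_entry_nonneg hA0 m₂) i (idx 0) j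
    rw [pow_add]
    exact lt_of_lt_of_le (mul_pos hm₁ hm₂) hle
  -- exp (t A) has positive entries
  have hExpA : ∀ i j, 0 < (NormedSpace.exp (t • A)) i j := by
    intro i j
    obtain ⟨m, hm⟩ := reach i j
    have hsum := expHasSum_entry (t • A) i j
    have hterm : ∀ k : ℕ, 0 ≤ (k !⁻¹ : ℝ) * ((t • A) ^ k) i j := by
      intro k
      have : ((t • A) ^ k) i j = t ^ k * (A ^ k) i j := by
        rw [smul_pow]; rfl
      rw [this]
      exact mul_nonneg (by positivity) (mul_nonneg (by positivity) (pow_entry_nonneg hA0 k i j))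
    have hge := le_hasSum hsum m (fun k _ => hterm k)
    have hpos : 0 < (m !⁻¹ : ℝ) * ((t • A) ^ m) i j := by
      have : ((t • A) ^ m) i j = t ^ m * (A ^ m) i j := by
        rw [smul_pow]; rfl
      rw [this]
      have : (0:ℝ) < (m ! : ℝ)⁻¹ := by positivity
      positivity
    linarith
  -- exp (t Q) = exp(-tc) • exp (t A)
  have hsplit : t • Q = t • A + (-(t * c)) • (1 : Matrix (Fin N) (Fin N) ℝ) := by
    rw [hAdef]
    module
  have hcomm : Commute (t • A) ((-(t * c)) • (1 : Matrix (Fin N) (Fin N) ℝ)) :=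
    (Commute.one_right (t • A)).smul_right _
  have hmul : NormedSpace.exp (t • Q)
      = NormedSpace.exp (t • A) * (Real.exp (-(t * c)) • 1) := by
    rw [hsplit, Matrix.exp_add_of_commute _ _ hcomm, exp_smul_one]
  rw [hmul, mul_smul_comm, mul_one]
  have : (Real.exp (-(t * c)) • NormedSpace.exp (t • A)) i j
      = Real.exp (-(t * c)) * (NormedSpace.exp (t • A)) i j := rfl
  rw [this]
  exact mul_pos (Real.exp_pos _) (hExpA i j)

end Aux

/-- If `Q` has nonnegative off-diagonal entries and a path of nonsingularity, then for every
bounded interval `[T₁, T₂] ⊂ (0, ∞)` there is `α > 0` such that, for every nonzero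
componentwise-nonnegative `p₀`, every `t ∈ [T₁, T₂]` and every `y` with `‖y‖ ≤ α ‖p₀‖`
(Euclidean norm), the vector `exp (t Q) p₀ + y` has all components nonnegative. -/
theorem exp_mulVec_interior_uniform {N : ℕ}
    (Q : Matrix (Fin N) (Fin N) ℝ)
    (hoff : ∀ i j : Fin N, i ≠ j → 0 ≤ Q i j)
    (hpath : HasPathOfNonsingularity Q)
    (T₁ T₂ : ℝ) (hT₁ : 0 < T₁) (hT₁₂ : T₁ ≤ T₂) :
    ∃ α > (0 : ℝ), ∀ p₀ : EuclideanSpace ℝ (Fin N), (∀ i, 0 ≤ p₀ i) → p₀ ≠ 0 →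
      ∀ t ∈ Set.Icc T₁ T₂, ∀ y : EuclideanSpace ℝ (Fin N), ‖y‖ ≤ α * ‖p₀‖ →
        ∀ i, 0 ≤ (NormedSpace.exp (t • Q)).mulVec p₀.ofLp i + y i := by
  rcases Nat.eq_zero_or_pos N with hN | hN
  · subst hN
    exact ⟨1, one_pos, fun p₀ _ _ t _ y _ i => i.elim0⟩
  haveI : NeZero N := ⟨hN.ne'⟩
  -- the compact set of unit, componentwise-nonnegative vectors times the time interval
  set S : Set (EuclideanSpace ℝ (Fin N)) :=
    Metric.sphere 0 1 ∩ {p | ∀ i, 0 ≤ p i} with hSdef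
  have hSclosed : IsClosed {p : EuclideanSpace ℝ (Fin N) | ∀ i, 0 ≤ p i} := by
    have : {p : EuclideanSpace ℝ (Fin N) | ∀ i, 0 ≤ p i}
        = ⋂ i, {p : EuclideanSpace ℝ (Fin N) | 0 ≤ p i} := by
      ext p; simp
    rw [this]
    exact isClosed_iInter fun i =>
      isClosed_le continuous_const (EuclideanSpace.proj i).continuous
  have hScompact : IsCompact S :=
    (isCompact_sphere 0 1).inter_right hSclosed
  set C : Set (ℝ × EuclideanSpace ℝ (Fin N)) := Set.Icc T₁ T₂ ×ˢ S with hCdef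
  have hCcompact : IsCompact C := (isCompact_Icc).prod hScompact
  have hCne : C.Nonempty := by
    refine ⟨(T₁, EuclideanSpace.single ⟨0, hN⟩ 1), ?_⟩
    constructor
    · exact ⟨le_refl _, hT₁₂⟩
    constructor
    · simp [EuclideanSpace.norm_single]
    · intro i
      simp only [EuclideanSpace.single_apply]
      split <;> norm_num
  -- continuity of each coordinate function
  have hfc : ∀ i : Fin N, Continuous fun x : ℝ × EuclideanSpace ℝ (Fin N) =>
      (NormedSpace.exp (x.1 • Q)).mulVec x.2.ofLp i := by
    intro i
    have : (fun x : ℝ × EuclideanSpace ℝ (Fin N) =>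
        (NormedSpace.exp (x.1 • Q)).mulVec x.2.ofLp i)
        = fun x => ∑ j, (NormedSpace.exp (x.1 • Q)) i j * x.2 j := by
      funext x
      simp [Matrix.mulVec, dotProduct]
    rw [this]
    refine continuous_finset_sum _ fun j _ => Continuous.mul ?_ ?_
    · exact ((exp_cont Q).comp continuous_fst).matrix_elem i j
    · exact (EuclideanSpace.proj j).continuous.comp continuous_snd
  -- positivity on C
  have hfpos : ∀ i : Fin N, ∀ x ∈ C,
      0 < (NormedSpace.exp (x.1 • Q)).mulVec x.2.ofLp i := by
    rintro i ⟨t, p⟩ ⟨ht, hpS⟩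
    obtain ⟨hpn, hpnn⟩ := hpS
    have ht0 : 0 < t := lt_of_lt_of_le hT₁ ht.1
    have hp0 : p ≠ 0 := by
      intro h
      rw [h] at hpn
      simp at hpn
    obtain ⟨j₀, hj₀⟩ : ∃ j, p j ≠ 0 := by
      by_contra h
      push_neg at h
      exact hp0 (by ext j; exact h j)
    have hj₀pos : 0 < p j₀ := lt_of_le_of_ne (hpnn j₀) (Ne.symm hj₀)
    rw [show (NormedSpace.exp (t • Q)).mulVec p.ofLp i
        = ∑ j, (NormedSpace.exp (t • Q)) i j * p j by
      simp [Matrix.mulVec, dotProduct]]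
    refine Finset.sum_pos' (fun j _ => mul_nonneg
      (le_of_lt (exp_entry_pos Q hoff hpath ht0 i j)) (hpnn j)) ?_
    exact ⟨j₀, Finset.mem_univ j₀,
      mul_pos (exp_entry_pos Q hoff hpath ht0 i j₀) hj₀pos⟩
  -- for each coordinate, a positive lower bound on C
  have hβ : ∀ i : Fin N, ∃ β > (0:ℝ), ∀ x ∈ C,
      β ≤ (NormedSpace.exp (x.1 • Q)).mulVec x.2.ofLp i := by
    intro i
    obtain ⟨x₀, hx₀C, hx₀min⟩ :=
      hCcompact.exists_isMinOn hCne ((hfc i).continuousOn)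
    exact ⟨_, hfpos i x₀ hx₀C, fun x hx => hx₀min hx⟩
  choose βf hβpos hβle using hβ
  have huniv : (Finset.univ : Finset (Fin N)).Nonempty := Finset.univ_nonempty
  set α : ℝ := Finset.univ.inf' huniv βf with hα
  have hα0 : 0 < α := by
    rw [hα, Finset.lt_inf'_iff]
    exact fun i _ => hβpos i
  refine ⟨α, hα0, ?_⟩
  intro p₀ hp₀nn hp₀ t ht y hy i
  have hnp : 0 < ‖p₀‖ := norm_pos_iff.mpr hp₀
  set q : EuclideanSpace ℝ (Fin N) := ‖p₀‖⁻¹ • p₀ with hq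
  have hqC : (t, q) ∈ C := by
    constructor
    · exact ht
    constructor
    · simp [hq, norm_smul, abs_of_pos (inv_pos.mpr hnp), inv_mul_cancel₀ hnp.ne']
    · intro k
      exact mul_nonneg (inv_pos.mpr hnp).le (hp₀nn k)
  have hlow : α * ‖p₀‖ ≤ (NormedSpace.exp (t • Q)).mulVec p₀.ofLp i := by
    have h1 : βf i ≤ (NormedSpace.exp (t • Q)).mulVec q.ofLp i := hβle i (t, q) hqC
    have h2 : (NormedSpace.exp (t • Q)).mulVec p₀.ofLp i
        = ‖p₀‖ * (NormedSpace.exp (t • Q)).mulVec q.ofLp i := by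
      have hpq : (‖p₀‖ • q : EuclideanSpace ℝ (Fin N)) = p₀ := by
        rw [hq, smul_smul, mul_inv_cancel₀ hnp.ne', one_smul]
      calc (NormedSpace.exp (t • Q)).mulVec p₀.ofLp i
          = (NormedSpace.exp (t • Q)).mulVec (‖p₀‖ • q).ofLp i := by rw [hpq]
        _ = (‖p₀‖ • (NormedSpace.exp (t • Q)).mulVec q.ofLp) i := by
            rw [show (‖p₀‖ • q).ofLp = ‖p₀‖ • q.ofLp from rfl, Matrix.mulVec_smul]
        _ = ‖p₀‖ * (NormedSpace.exp (t • Q)).mulVec q.ofLp i := rfl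
    have hαβ : α ≤ βf i := Finset.inf'_le _ (Finset.mem_univ i)
    rw [h2]
    calc α * ‖p₀‖ ≤ βf i * ‖p₀‖ := by nlinarith
      _ ≤ ‖p₀‖ * (NormedSpace.exp (t • Q)).mulVec q.ofLp i := by nlinarith
  have hyi : |y i| ≤ ‖y‖ := by
    have := EuclideanSpace.norm_eq y
    have h2 : |y i| = Real.sqrt ((y i) ^ 2) := (Real.sqrt_sq_eq_abs _).symm
    rw [this, h2]
    apply Real.sqrt_le_sqrt
    have : (y i) ^ 2 ≤ ∑ j, ‖y j‖ ^ 2 := by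
      have := Finset.single_le_sum (f := fun j => ‖y j‖ ^ 2)
        (fun j _ => sq_nonneg _) (Finset.mem_univ i)
      simpa [sq_abs] using this
    simpa using this
  have : -(α * ‖p₀‖) ≤ y i := by
    have := neg_abs_le (y i)
    linarith
  linarith
end

section
/- Let Q be an N×N real matrix whose off-diagonal entries are all nonnegative, which has a path of nonsingularity, and which satisfies 1ᵀ Q = 0 (every column of Q sums to zero). Then for every t ≥ 0 the map p₀ ↦ exp(tQ) p₀ maps the simplex Σ_N into Σ_N, and for every t > 0 it maps Σ_N into the relative interior of Σ_N (i.e. for p₀ ∈ Σ_N and t > 0, exp(tQ) p₀ has all components strictly positive and they sum to 1). -/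
/-- The probability simplex `Σ_N` in `ℝ^N`. -/
def probSimplex (N : ℕ) : Set (Fin N → ℝ) :=
  {p | (∑ j, p j) = 1 ∧ ∀ j, 0 ≤ p j}

namespace ExpSimplexAux

open Matrix
open scoped Nat

variable {N : ℕ}

/-- The entry functional as a continuous linear map. -/
noncomputable def entryCLM (i j : Fin N) : Matrix (Fin N) (Fin N) ℝ →L[ℝ] ℝ :=
  LinearMap.toContinuousLinearMap
    { toFun := fun A => A i j
      map_add' := fun _ _ => rfl
      map_smul' := fun _ _ => rfl }

@[simp] lemma entryCLM_apply (i j : Fin N) (A : Matrix (Fin N) (Fin N) ℝ) :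
    entryCLM i j A = A i j := rfl

/-- `vecMul` by a fixed vector as a continuous linear map in the matrix. -/
noncomputable def vecMulCLM (v : Fin N → ℝ) :
    Matrix (Fin N) (Fin N) ℝ →L[ℝ] (Fin N → ℝ) :=
  LinearMap.toContinuousLinearMap
    { toFun := fun A => v ᵥ* A
      map_add' := by
        intro A B; funext j
        simp [Matrix.vecMul, dotProduct, mul_add, Finset.sum_add_distrib]
      map_smul' := by
        intro c A; funext j
        simp [Matrix.vecMul, dotProduct, Finset.mul_sum, mul_left_comm] }

@[simp] lemma vecMulCLM_apply (v : Fin N → ℝ) (A : Matrix (Fin N) (Fin N) ℝ) :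
    vecMulCLM v A = v ᵥ* A := rfl

lemma expSummable (A : Matrix (Fin N) (Fin N) ℝ) :
    Summable fun n : ℕ => (n ! : ℝ)⁻¹ • A ^ n := by
  letI : SeminormedRing (Matrix (Fin N) (Fin N) ℝ) := Matrix.linftyOpSemiNormedRing
  letI : NormedRing (Matrix (Fin N) (Fin N) ℝ) := Matrix.linftyOpNormedRing
  letI : NormedAlgebra ℝ (Matrix (Fin N) (Fin N) ℝ) := Matrix.linftyOpNormedAlgebra
  exact NormedSpace.expSeries_summable' A

lemma exp_entry_eq_tsum (A : Matrix (Fin N) (Fin N) ℝ) (i j : Fin N) :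
    NormedSpace.exp A i j = ∑' n : ℕ, (n ! : ℝ)⁻¹ * (A ^ n) i j := by
  have h := (entryCLM i j).map_tsum (expSummable A)
  rw [NormedSpace.exp_eq_tsum ℝ]
  simpa [smul_eq_mul] using h

lemma exp_entry_summable (A : Matrix (Fin N) (Fin N) ℝ) (i j : Fin N) :
    Summable fun n : ℕ => (n ! : ℝ)⁻¹ * (A ^ n) i j := by
  have := (expSummable A).map (entryCLM i j).toLinearMap.toAddMonoidHom
    (entryCLM i j).continuous
  simpa [Function.comp_def, smul_eq_mul] using this

lemma pow_entry_nonneg {A : Matrix (Fin N) (Fin N) ℝ} (hA : ∀ i j, 0 ≤ A i j) :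
    ∀ (m : ℕ) (i j : Fin N), 0 ≤ (A ^ m) i j := by
  intro m
  induction m with
  | zero =>
    intro i j
    simp only [pow_zero, Matrix.one_apply]
    split <;> norm_num
  | succ m ih =>
    intro i j
    rw [pow_succ, Matrix.mul_apply]
    exact Finset.sum_nonneg fun k _ => mul_nonneg (ih i k) (hA k j)

lemma exp_entry_nonneg {A : Matrix (Fin N) (Fin N) ℝ} (hA : ∀ i j, 0 ≤ A i j)
    (i j : Fin N) : 0 ≤ NormedSpace.exp A i j := by
  rw [exp_entry_eq_tsum]
  exact tsum_nonneg fun n => mul_nonneg (by positivity) (pow_entry_nonneg hA n i j)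

lemma exp_entry_pos {A : Matrix (Fin N) (Fin N) ℝ} (hA : ∀ i j, 0 ≤ A i j)
    {i j : Fin N} {m : ℕ} (hm : 0 < (A ^ m) i j) : 0 < NormedSpace.exp A i j := by
  rw [exp_entry_eq_tsum]
  refine Summable.tsum_pos (exp_entry_summable A i j)
    (fun n => mul_nonneg (by positivity) (pow_entry_nonneg hA n i j)) m ?_
  exact mul_pos (by positivity) hm

lemma one_vecMul_exp {M : Matrix (Fin N) (Fin N) ℝ}
    (h : (fun _ => (1 : ℝ)) ᵥ* M = 0) :
    (fun _ => (1 : ℝ)) ᵥ* NormedSpace.exp M = fun _ => (1 : ℝ) := by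
  have hm : ∀ n : ℕ, n ≠ 0 → (fun _ => (1 : ℝ)) ᵥ* (M ^ n) = 0 := by
    intro n hn
    obtain ⟨k, rfl⟩ := Nat.exists_eq_succ_of_ne_zero hn
    rw [pow_succ']
    rw [← Matrix.vecMul_vecMul, h, Matrix.zero_vecMul]
  have h1 := (vecMulCLM (fun _ => (1 : ℝ))).map_tsum (expSummable M)
  rw [NormedSpace.exp_eq_tsum ℝ]
  rw [show ((fun _ => (1:ℝ)) ᵥ* ∑' n : ℕ, (n ! : ℝ)⁻¹ • M ^ n)
      = ∑' n : ℕ, (n ! : ℝ)⁻¹ • ((fun _ => (1:ℝ)) ᵥ* M ^ n) by simpa using h1]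
  rw [tsum_eq_single 0 (by
    intro n hn
    rw [hm n hn]
    simp)]
  simp [Matrix.vecMul_one]

/-- From a path of nonsingularity, consecutive positions give positive power entries. -/
lemma chain_pow_pos {A : Matrix (Fin N) (Fin N) ℝ} (hA : ∀ i j, 0 ≤ A i j)
    {n : ℕ} {idx : Fin (n + 1) → Fin N}
    (hstep : ∀ j : Fin n, 0 < A (idx j.castSucc) (idx j.succ)) :
    ∀ (d : ℕ) (j k : Fin (n + 1)), (j : ℕ) + d = (k : ℕ) →
      0 < (A ^ d) (idx j) (idx k) := by
  intro d
  induction d with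
  | zero =>
    intro j k hjk
    have : j = k := Fin.ext (by omega)
    subst this
    simp [Matrix.one_apply]
  | succ d ih =>
    intro j k hjk
    have hjn : (j : ℕ) < n := by have := k.isLt; omega
    set j' : Fin (n + 1) := ⟨(j : ℕ) + 1, by omega⟩ with hj'
    have hIH : 0 < (A ^ d) (idx j') (idx k) := ih j' k (by simp [hj']; omega)
    have hstep' : 0 < A (idx j) (idx j') := by
      have := hstep ⟨(j : ℕ), hjn⟩
      have e1 : (⟨(j : ℕ), hjn⟩ : Fin n).castSucc = j := Fin.ext rfl
      have e2 : (⟨(j : ℕ), hjn⟩ : Fin n).succ = j' := Fin.ext rfl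
      rwa [e1, e2] at this
    rw [pow_succ', Matrix.mul_apply]
    have hterm : 0 < A (idx j) (idx j') * (A ^ d) (idx j') (idx k) :=
      mul_pos hstep' hIH
    refine lt_of_lt_of_le hterm ?_
    refine Finset.single_le_sum (f := fun l => A (idx j) l * (A ^ d) l (idx k))
      (fun l _ => mul_nonneg (hA _ _) (pow_entry_nonneg hA d _ _)) (Finset.mem_univ _)

lemma path_pow_pos {A : Matrix (Fin N) (Fin N) ℝ} (hA : ∀ i j, 0 ≤ A i j)
    {n : ℕ} {idx : Fin (n + 1) → Fin N}
    (hcyc : idx (Fin.last n) = idx 0)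
    (hstep : ∀ j : Fin n, 0 < A (idx j.castSucc) (idx j.succ))
    (hsurj : ∀ k : Fin N, ∃ j, idx j = k) (a b : Fin N) :
    ∃ m : ℕ, 0 < (A ^ m) a b := by
  obtain ⟨ja, hja⟩ := hsurj a
  obtain ⟨jb, hjb⟩ := hsurj b
  refine ⟨(n - (ja : ℕ)) + (jb : ℕ), ?_⟩
  have h1 : 0 < (A ^ (n - (ja : ℕ))) a (idx 0) := by
    have := chain_pow_pos hA hstep (n - (ja : ℕ)) ja (Fin.last n)
      (by simp [Fin.last]; omega)
    rwa [hja, hcyc] at this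
  have h2 : 0 < (A ^ (jb : ℕ)) (idx 0) b := by
    have := chain_pow_pos hA hstep (jb : ℕ) 0 jb (by simp)
    rwa [hjb] at this
  rw [pow_add, Matrix.mul_apply]
  refine lt_of_lt_of_le (mul_pos h1 h2) ?_
  exact Finset.single_le_sum
    (f := fun l => (A ^ (n - (ja : ℕ))) a l * (A ^ (jb : ℕ)) l b)
    (fun l _ => mul_nonneg (pow_entry_nonneg hA _ _ _) (pow_entry_nonneg hA _ _ _))
    (Finset.mem_univ _)

end ExpSimplexAux

open ExpSimplexAux Matrix in
/-- If `Q` has nonnegative off-diagonal entries, a path of nonsingularity, and all its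
columns sum to zero, then `exp (t Q)` maps the simplex `Σ_N` into itself for `t ≥ 0`,
and into its relative interior (componentwise strictly positive vectors summing to `1`)
for `t > 0`. -/
theorem exp_mulVec_simplex_invariant {N : ℕ}
    (Q : Matrix (Fin N) (Fin N) ℝ)
    (hoff : ∀ i j : Fin N, i ≠ j → 0 ≤ Q i j)
    (hpath : HasPathOfNonsingularity Q)
    (hcol : ∀ j, ∑ i, Q i j = 0) :
    (∀ t : ℝ, 0 ≤ t → ∀ p₀ ∈ probSimplex N,
        (NormedSpace.exp (t • Q)).mulVec p₀ ∈ probSimplex N) ∧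
    (∀ t : ℝ, 0 < t → ∀ p₀ ∈ probSimplex N,
        (∑ i, (NormedSpace.exp (t • Q)).mulVec p₀ i) = 1 ∧
          ∀ i, 0 < (NormedSpace.exp (t • Q)).mulVec p₀ i) := by
  classical
  -- column sums of the exponential are 1
  have hsum : ∀ (t : ℝ) (p₀ : Fin N → ℝ), p₀ ∈ probSimplex N →
      (∑ i, (NormedSpace.exp (t • Q)).mulVec p₀ i) = 1 := by
    intro t p₀ hp₀
    have hv : (fun _ => (1 : ℝ)) ᵥ* (t • Q) = 0 := by
      funext j
      simp only [Matrix.vecMul, dotProduct, Matrix.smul_apply, smul_eq_mul,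
        one_mul, Pi.zero_apply]
      rw [← Finset.mul_sum, hcol j, mul_zero]
    have hone := one_vecMul_exp hv
    have hcolsum : ∀ j, (∑ i, NormedSpace.exp (t • Q) i j) = 1 := by
      intro j
      have := congrFun hone j
      simpa [Matrix.vecMul, dotProduct] using this
    calc ∑ i, (NormedSpace.exp (t • Q)).mulVec p₀ i
        = ∑ i, ∑ j, NormedSpace.exp (t • Q) i j * p₀ j := by
          simp [Matrix.mulVec, dotProduct]
      _ = ∑ j, (∑ i, NormedSpace.exp (t • Q) i j) * p₀ j := by
          rw [Finset.sum_comm]; simp [Finset.sum_mul]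
      _ = ∑ j, p₀ j := by simp [hcolsum]
      _ = 1 := hp₀.1
  -- decomposition exp (t • Q) = exp (-c) • exp A with A entrywise nonneg
  have key : ∀ t : ℝ, 0 ≤ t →
      ∃ (A : Matrix (Fin N) (Fin N) ℝ) (c : ℝ),
        (∀ i j, 0 ≤ A i j) ∧ (∀ i, 0 < A i i) ∧
        (∀ i j, i ≠ j → A i j = t * Q i j) ∧
        NormedSpace.exp (t • Q) = Real.exp (-c) • NormedSpace.exp A := by
    intro t ht
    set c : ℝ := 1 + t * ∑ i, |Q i i| with hc
    refine ⟨t • Q + c • (1 : Matrix (Fin N) (Fin N) ℝ), c, ?_, ?_, ?_, ?_⟩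
    · intro i j
      by_cases hij : i = j
      · subst hij
        simp only [Matrix.add_apply, Matrix.smul_apply, Matrix.one_apply_eq, smul_eq_mul,
          mul_one, hc]
        have h1 : |Q i i| ≤ ∑ k, |Q k k| :=
          Finset.single_le_sum (f := fun k => |Q k k|) (fun k _ => abs_nonneg _)
            (Finset.mem_univ i)
        nlinarith [neg_abs_le (Q i i), abs_nonneg (Q i i)]
      · simp only [Matrix.add_apply, Matrix.smul_apply, Matrix.one_apply_ne hij, smul_eq_mul,
          mul_zero, add_zero]
        exact mul_nonneg ht (hoff i j hij)
    · intro i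
      simp only [Matrix.add_apply, Matrix.smul_apply, Matrix.one_apply_eq, smul_eq_mul,
        mul_one, hc]
      have h1 : |Q i i| ≤ ∑ k, |Q k k| :=
        Finset.single_le_sum (f := fun k => |Q k k|) (fun k _ => abs_nonneg _)
          (Finset.mem_univ i)
      nlinarith [neg_abs_le (Q i i), abs_nonneg (Q i i)]
    · intro i j hij
      simp [Matrix.add_apply, Matrix.smul_apply, Matrix.one_apply_ne hij]
    · have hcomm : Commute (t • Q + c • (1 : Matrix (Fin N) (Fin N) ℝ))
          ((-c) • (1 : Matrix (Fin N) (Fin N) ℝ)) :=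
        (Commute.one_right _).smul_right (-c)
      have hsplit : t • Q = (t • Q + c • (1 : Matrix (Fin N) (Fin N) ℝ)) +
          (-c) • (1 : Matrix (Fin N) (Fin N) ℝ) := by
        rw [add_assoc, ← add_smul]
        simp
      conv_lhs => rw [hsplit]
      rw [Matrix.exp_add_of_commute _ _ hcomm]
      have halg : ((-c) • (1 : Matrix (Fin N) (Fin N) ℝ)) =
          algebraMap ℝ (Matrix (Fin N) (Fin N) ℝ) (-c) :=
        (Algebra.algebraMap_eq_smul_one (-c)).symm
      have hmapexp : NormedSpace.exp ((-c) • (1 : Matrix (Fin N) (Fin N) ℝ)) =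
          Real.exp (-c) • (1 : Matrix (Fin N) (Fin N) ℝ) := by
        rw [halg]
        letI : SeminormedRing (Matrix (Fin N) (Fin N) ℝ) := Matrix.linftyOpSemiNormedRing
        letI : NormedRing (Matrix (Fin N) (Fin N) ℝ) := Matrix.linftyOpNormedRing
        letI : NormedAlgebra ℝ (Matrix (Fin N) (Fin N) ℝ) := Matrix.linftyOpNormedAlgebra
        have hcont : Continuous (algebraMap ℝ (Matrix (Fin N) (Fin N) ℝ)) := by
          simp only [Algebra.algebraMap_eq_smul_one']
          exact continuous_id.smul continuous_const
        erw [← NormedSpace.map_exp (algebraMap ℝ (Matrix (Fin N) (Fin N) ℝ)) hcont (-c)]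
        rw [← Real.exp_eq_exp_ℝ, Algebra.algebraMap_eq_smul_one]
      rw [hmapexp, mul_smul_comm, mul_one]
  obtain ⟨n, idx, hcyc, hstep, hsurj⟩ := hpath
  constructor
  · -- t ≥ 0 : maps into the simplex
    intro t ht p₀ hp₀
    obtain ⟨A, c, hAnn, _, _, hdecomp⟩ := key t ht
    refine ⟨hsum t p₀ hp₀, ?_⟩
    intro i
    rw [hdecomp]
    simp only [Matrix.mulVec, dotProduct, Matrix.smul_apply, smul_eq_mul]
    refine Finset.sum_nonneg fun j _ => ?_
    have h1 : 0 ≤ NormedSpace.exp A i j := exp_entry_nonneg hAnn i j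
    have h2 : 0 ≤ p₀ j := hp₀.2 j
    have h3 : 0 ≤ Real.exp (-c) := (Real.exp_pos _).le
    exact mul_nonneg (mul_nonneg h3 h1) h2
  · -- t > 0 : strictly positive components
    intro t ht p₀ hp₀
    obtain ⟨A, c, hAnn, hAdiag, hAoff, hdecomp⟩ := key t ht.le
    refine ⟨hsum t p₀ hp₀, ?_⟩
    -- every entry of exp A is positive
    have hstepA : ∀ j : Fin n, 0 < A (idx j.castSucc) (idx j.succ) := by
      intro j
      by_cases h : idx j.castSucc = idx j.succ
      · rw [h]; exact hAdiag _
      · rw [hAoff _ _ h]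
        exact mul_pos ht (hstep j)
    have hexpA : ∀ i j, 0 < NormedSpace.exp A i j := by
      intro i j
      obtain ⟨m, hm⟩ := path_pow_pos hAnn hcyc hstepA hsurj i j
      exact exp_entry_pos hAnn hm
    -- there is a strictly positive component of p₀
    have hex : ∃ j₀, 0 < p₀ j₀ := by
      by_contra h
      push_neg at h
      have hz : ∀ j, p₀ j = 0 := fun j => le_antisymm (h j) (hp₀.2 j)
      have h0 : (∑ j, p₀ j) = 0 := Finset.sum_eq_zero fun j _ => hz j
      rw [hp₀.1] at h0
      exact one_ne_zero h0
    obtain ⟨j₀, hj₀⟩ := hex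
    intro i
    rw [hdecomp]
    simp only [Matrix.mulVec, dotProduct, Matrix.smul_apply, smul_eq_mul]
    have hterm : 0 < NormedSpace.exp A i j₀ * p₀ j₀ := mul_pos (hexpA i j₀) hj₀
    have hle : NormedSpace.exp A i j₀ * p₀ j₀ ≤ ∑ j, NormedSpace.exp A i j * p₀ j :=
      Finset.single_le_sum
        (f := fun j => NormedSpace.exp A i j * p₀ j)
        (fun j _ => mul_nonneg (exp_entry_nonneg hAnn i j) (hp₀.2 j))
        (Finset.mem_univ j₀)
    have hpos : 0 < ∑ j, NormedSpace.exp A i j * p₀ j := lt_of_lt_of_le hterm hle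
    calc (0:ℝ) < Real.exp (-c) * ∑ j, NormedSpace.exp A i j * p₀ j :=
          mul_pos (Real.exp_pos _) hpos
      _ = ∑ j, Real.exp (-c) * NormedSpace.exp A i j * p₀ j := by
          rw [Finset.mul_sum]
          exact Finset.sum_congr rfl fun j _ => (mul_assoc _ _ _).symm
end

section
/- Let Q : ℝ → M_N(ℝ) be a measurable matrix-valued function with uniformly bounded entries such that Q(t) has nonnegative off-diagonal entries for every t (so the vector field x ↦ Q(t)x is quasipositive). Let w : ℝ → ℝ^N be a measurable, locally integrable function with all components w_i(t) ≥ 0 for all t ≥ 0. If x : [0,∞) → ℝ^N is a continuous function satisfying x(t) = ∫₀ᵗ (Q(s) x(s) + w(s)) ds for all t ≥ 0 (i.e. a Carathéodory solution of dx/dt = Q(t)x + w(t) with x(0) = 0), then x(t) has all components ≥ 0 for every t ≥ 0. -/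
open MeasureTheory

private lemma interval_integral_apply {N : ℕ} {f : ℝ → Fin N → ℝ} {a b : ℝ}
    (h : IntervalIntegrable f volume a b) (i : Fin N) :
    (∫ s in a..b, f s) i = ∫ s in a..b, f s i := by
  have h1 := (ContinuousLinearMap.proj (R := ℝ) (φ := fun _ : Fin N => ℝ) i).integral_comp_comm h.1
  have h2 := (ContinuousLinearMap.proj (R := ℝ) (φ := fun _ : Fin N => ℝ) i).integral_comp_comm h.2
  simp only [ContinuousLinearMap.proj_apply] at h1 h2
  rw [intervalIntegral, intervalIntegral, Pi.sub_apply, ← h1, ← h2]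

/-- **Positivity for linear Carathéodory ODEs with quasipositive matrices and
nonnegative forcing.** Let `Q : ℝ → M_N(ℝ)` be measurable with uniformly bounded
entries and with nonnegative off-diagonal entries for every `t`, and let
`w : ℝ → ℝ^N` be measurable, locally integrable, with nonnegative components for
`t ≥ 0`. If `x : [0, ∞) → ℝ^N` is a continuous function with
`x t = ∫ s in 0..t, (Q s (x s) + w s)` for all `t ≥ 0` (a Carathéodory solution of
`x' = Q(t) x + w(t)`, `x 0 = 0`), then all components of `x t` are nonnegative for
every `t ≥ 0`. -/
theorem linear_caratheodory_forced_solution_nonneg {N : ℕ}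
    (Q : ℝ → Matrix (Fin N) (Fin N) ℝ)
    (hQmeas : ∀ i j : Fin N, Measurable fun t => Q t i j)
    (C : ℝ) (hC : 0 < C)
    (hQbound : ∀ (t : ℝ) (i j : Fin N), |Q t i j| ≤ C)
    (hQoff : ∀ (t : ℝ) (i j : Fin N), i ≠ j → 0 ≤ Q t i j)
    (w : ℝ → (Fin N → ℝ))
    (hwmeas : Measurable w)
    (hwint : LocallyIntegrable w volume)
    (hwpos : ∀ t : ℝ, 0 ≤ t → ∀ i, 0 ≤ w t i)
    (x : ℝ → (Fin N → ℝ))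
    (hxcont : ContinuousOn x (Set.Ici (0 : ℝ)))
    (hxsol : ∀ t : ℝ, 0 ≤ t → x t = ∫ s in (0 : ℝ)..t, ((Q s).mulVec (x s) + w s)) :
    ∀ t : ℝ, 0 ≤ t → ∀ i, 0 ≤ x t i := by
  -- extend x continuously to all of ℝ
  set y : ℝ → Fin N → ℝ := fun t => x (max t 0) with hy_def
  have hy_cont : Continuous y := by
    apply hxcont.comp_continuous (continuous_id.max continuous_const)
    intro t; exact Set.mem_Ici.2 (le_max_right _ _)
  have hyx : ∀ t : ℝ, 0 ≤ t → y t = x t := fun t ht => by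
    simp [hy_def, max_eq_left ht]
  -- the vector field along the extended solution
  set f : ℝ → Fin N → ℝ := fun s => (Q s).mulVec (y s) + w s with hf_def
  have hf_meas : Measurable f := by
    apply Measurable.add _ hwmeas
    apply measurable_pi_lambda
    intro i
    simp only [Matrix.mulVec, dotProduct]
    exact Finset.measurable_sum _ fun j _ => (hQmeas i j).mul (hy_cont.measurable.eval)
  -- interval integrability of f
  have hf_int : ∀ a b : ℝ, IntervalIntegrable f volume a b := by
    intro a b
    rw [intervalIntegrable_iff]
    have hsub : Set.uIoc a b ⊆ Set.uIcc a b := Set.Ioc_subset_Icc_self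
    obtain ⟨M, hM⟩ := (isCompact_uIcc (a := a) (b := b)).exists_bound_of_continuousOn
      hy_cont.continuousOn
    have hM0 : 0 ≤ M := le_trans (norm_nonneg _) (hM a Set.left_mem_uIcc)
    have hg : IntegrableOn (fun s => (Q s).mulVec (y s)) (Set.uIoc a b) volume := by
      refine Integrable.mono' (g := fun _ => (N : ℝ) * C * M)
        (integrableOn_const measure_Ioc_lt_top.ne) ?_ ?_
      · refine (measurable_pi_lambda _ fun i => ?_).aestronglyMeasurable.restrict
        simp only [Matrix.mulVec, dotProduct]
        exact Finset.measurable_sum _ fun j _ => (hQmeas i j).mul (hy_cont.measurable.eval)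
      · filter_upwards [ae_restrict_mem measurableSet_uIoc] with s hs
        have hyM : ‖y s‖ ≤ M := hM s (hsub hs)
        rw [pi_norm_le_iff_of_nonneg (by positivity)]
        intro i
        calc ‖(Q s).mulVec (y s) i‖ = |∑ j, Q s i j * y s j| := rfl
          _ ≤ ∑ j, |Q s i j * y s j| := Finset.abs_sum_le_sum_abs _ _
          _ ≤ ∑ _j : Fin N, C * M := by
              refine Finset.sum_le_sum fun j _ => ?_
              rw [abs_mul]
              exact mul_le_mul (hQbound s i j)
                (le_trans (norm_le_pi_norm (y s) j) hyM) (abs_nonneg _) hC.le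
          _ = (N : ℝ) * C * M := by simp [mul_assoc]
    have hw : IntegrableOn w (Set.uIoc a b) volume :=
      (hwint.integrableOn_isCompact isCompact_uIcc).mono_set hsub
    exact hg.add hw
  -- solution equation for y
  have hsol : ∀ t : ℝ, 0 ≤ t → y t = ∫ s in (0:ℝ)..t, f s := by
    intro t ht
    rw [hyx t ht, hxsol t ht]
    apply intervalIntegral.integral_congr
    intro s hs
    rw [Set.uIcc_of_le ht] at hs
    simp only [hf_def, hyx s hs.1]
  have hy0 : y 0 = 0 := by
    rw [hsol 0 le_rfl, intervalIntegral.integral_same]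
  -- the negative-part functional
  set u : ℝ → ℝ := fun t => ‖(fun i => max (-(y t i)) 0 : Fin N → ℝ)‖ with hu_def
  have hu_cont : Continuous u := by
    apply Continuous.norm
    exact continuous_pi fun i => (((continuous_apply i).comp hy_cont).neg).max continuous_const
  have hu_nonneg : ∀ t, 0 ≤ u t := fun t => norm_nonneg _
  have hu_comp : ∀ t i, max (-(y t i)) 0 ≤ u t := by
    intro t i
    have h := norm_le_pi_norm (fun j => max (-(y t j)) 0) i
    rw [Real.norm_eq_abs] at h
    exact le_trans (le_abs_self _) h
  set K : ℝ := (N : ℝ) * C with hK_def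
  have hK0 : 0 ≤ K := by positivity
  -- the key Grönwall-type inequality
  have key : ∀ t : ℝ, 0 ≤ t → u t ≤ K * ∫ s in (0:ℝ)..t, u s := by
    intro t ht
    have hint_u : IntervalIntegrable u volume 0 t := hu_cont.intervalIntegrable _ _
    have hRHS0 : 0 ≤ K * ∫ s in (0:ℝ)..t, u s := by
      apply mul_nonneg hK0
      exact intervalIntegral.integral_nonneg ht fun s _ => hu_nonneg s
    rw [hu_def]
    rw [pi_norm_le_iff_of_nonneg hRHS0]
    intro i
    rw [Real.norm_eq_abs, abs_of_nonneg (le_max_right _ _)]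
    rcases le_or_gt 0 (y t i) with hyt | hyt
    · rw [max_eq_right (by linarith)]; exact hRHS0
    -- y t i < 0 : find the last time r ≤ t where y · i was ≥ 0
    rw [max_eq_left (by linarith)]
    set S : Set ℝ := {s | s ∈ Set.Icc 0 t ∧ 0 ≤ y s i} with hS_def
    have hS_ne : S.Nonempty := ⟨0, ⟨le_rfl, ht⟩, by rw [hy0]; exact le_rfl⟩
    have hS_bdd : BddAbove S := ⟨t, fun s hs => hs.1.2⟩
    have hS_closed : IsClosed S := by
      apply IsClosed.inter isClosed_Icc
      exact isClosed_le continuous_const ((continuous_apply i).comp hy_cont)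
    set r : ℝ := sSup S with hr_def
    have hrS : r ∈ S := hS_closed.csSup_mem hS_ne hS_bdd
    have hr0 : 0 ≤ r := hrS.1.1
    have hrt : r ≤ t := hrS.1.2
    have hyr : 0 ≤ y r i := hrS.2
    have hneg : ∀ s ∈ Set.Ioc r t, y s i ≤ 0 := by
      intro s hs
      by_contra hpos
      push_neg at hpos
      have : s ∈ S := ⟨⟨le_trans hr0 hs.1.le, hs.2⟩, hpos.le⟩
      exact absurd (le_csSup hS_bdd this) (not_le.2 hs.1)
    -- the integral identity on [r, t]
    have hid : y t i - y r i = ∫ s in r..t, f s i := by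
      have h1 : y t - y r = ∫ s in r..t, f s := by
        rw [hsol t ht, hsol r hr0]
        exact intervalIntegral.integral_interval_sub_left (hf_int 0 t) (hf_int 0 r)
      have h2 : y t i - y r i = (∫ s in r..t, f s) i := congrFun h1 i
      rw [h2, interval_integral_apply (hf_int r t) i]
    -- pointwise bound on (r, t]
    have hptwise : ∀ s ∈ Set.Ioc r t, -(f s i) ≤ K * u s := by
      intro s hs
      have hs0 : 0 ≤ s := le_trans hr0 hs.1.le
      have hwi : 0 ≤ w s i := hwpos s hs0 i
      have hterm : ∀ j, -(Q s i j * y s j) ≤ C * u s := by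
        intro j
        have humax : max (-(y s j)) 0 ≤ u s := hu_comp s j
        rcases eq_or_ne i j with rfl | hij
        · -- diagonal: y s i ≤ 0 on (r, t]
          have hyneg : y s i ≤ 0 := hneg s hs
          have : -(Q s i i * y s i) = Q s i i * (-(y s i)) := by ring
          rw [this]
          calc Q s i i * (-(y s i)) ≤ |Q s i i| * (-(y s i)) :=
                mul_le_mul_of_nonneg_right (le_abs_self _) (by linarith)
            _ ≤ C * (-(y s i)) := mul_le_mul_of_nonneg_right (hQbound s i i) (by linarith)
            _ ≤ C * u s := by
                apply mul_le_mul_of_nonneg_left _ hC.le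
                exact le_trans (le_max_left _ _) humax
        · -- off-diagonal: Q s i j ≥ 0
          have hq := hQoff s i j hij
          have : -(Q s i j * y s j) = Q s i j * (-(y s j)) := by ring
          rw [this]
          calc Q s i j * (-(y s j)) ≤ Q s i j * max (-(y s j)) 0 :=
                mul_le_mul_of_nonneg_left (le_max_left _ _) hq
            _ ≤ C * max (-(y s j)) 0 := by
                apply mul_le_mul_of_nonneg_right _ (le_max_right _ _)
                exact le_trans (le_abs_self _) (hQbound s i j)
            _ ≤ C * u s := mul_le_mul_of_nonneg_left humax hC.le
      calc -(f s i) = -(∑ j, Q s i j * y s j) - w s i := by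
            simp [hf_def, Matrix.mulVec, dotProduct]; ring
        _ ≤ -(∑ j, Q s i j * y s j) := by linarith
        _ = ∑ j, -(Q s i j * y s j) := by rw [← Finset.sum_neg_distrib]
        _ ≤ ∑ _j : Fin N, C * u s := Finset.sum_le_sum fun j _ => hterm j
        _ = K * u s := by rw [hK_def]; simp [mul_assoc]
    -- assemble
    have hfi_int : IntegrableOn (fun s => f s i) (Set.Ioc r t) volume := by
      have h := (hf_int r t).1
      exact (ContinuousLinearMap.proj (R := ℝ) (φ := fun _ : Fin N => ℝ) i).integrable_comp h
    have hu_int : IntegrableOn (fun s => K * u s) (Set.Ioc r t) volume :=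
      (Continuous.integrableOn_Ioc (continuous_const.mul hu_cont))
    have hint_le : ∫ s in Set.Ioc r t, -(f s i) ∂volume ≤ ∫ s in Set.Ioc r t, K * u s ∂volume := by
      refine setIntegral_mono_on hfi_int.neg hu_int measurableSet_Ioc ?_
      exact fun s hs => hptwise s hs
    have hstep : -(y t i) ≤ ∫ s in Set.Ioc r t, K * u s ∂volume := by
      have : -(y t i) ≤ -(y t i - y r i) := by linarith
      rw [hid] at this
      calc -(y t i) ≤ -(∫ s in r..t, f s i) := this
        _ = ∫ s in Set.Ioc r t, -(f s i) ∂volume := by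
            rw [intervalIntegral.integral_of_le hrt, ← integral_neg]
        _ ≤ ∫ s in Set.Ioc r t, K * u s ∂volume := hint_le
    have hmono : ∫ s in Set.Ioc r t, K * u s ∂volume ≤ ∫ s in Set.Ioc 0 t, K * u s ∂volume := by
      apply setIntegral_mono_set (Continuous.integrableOn_Ioc (continuous_const.mul hu_cont))
      · exact Filter.Eventually.of_forall fun s => mul_nonneg hK0 (hu_nonneg s)
      · exact Filter.Eventually.of_forall (Set.Ioc_subset_Ioc_left hr0)
    calc -(y t i) ≤ ∫ s in Set.Ioc 0 t, K * u s ∂volume := le_trans hstep hmono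
      _ = K * ∫ s in (0:ℝ)..t, u s := by
          rw [intervalIntegral.integral_of_le ht, ← integral_const_mul]
  -- Grönwall: conclude u ≡ 0 on [0, ∞)
  have hu_zero : ∀ t : ℝ, 0 ≤ t → u t = 0 := by
    intro t ht
    set v : ℝ → ℝ := fun t => ∫ s in (0:ℝ)..t, u s with hv_def
    have hv_deriv : ∀ s : ℝ, HasDerivAt v (u s) s := by
      intro s
      exact intervalIntegral.integral_hasDerivAt_right (hu_cont.intervalIntegrable _ _)
        (hu_cont.stronglyMeasurable.stronglyMeasurableAtFilter) hu_cont.continuousAt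
    have hv_cont : Continuous v := continuous_iff_continuousAt.2 fun s => (hv_deriv s).continuousAt
    set g : ℝ → ℝ := fun t => Real.exp (-K * t) * v t with hg_def
    have hg_deriv : ∀ s : ℝ, HasDerivAt g (Real.exp (-K * s) * (-K) * v s + Real.exp (-K * s) * u s) s := by
      intro s
      have hlin : HasDerivAt (fun t : ℝ => -K * t) (-K) s := by
        simpa using (hasDerivAt_id s).const_mul (-K)
      have he := hlin.exp
      exact he.mul (hv_deriv s)
    have hg_anti : AntitoneOn g (Set.Ici (0:ℝ)) := by
      apply antitoneOn_of_deriv_nonpos (convex_Ici 0)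
      · exact ((Real.continuous_exp.comp (continuous_const.mul continuous_id)).mul hv_cont).continuousOn
      · intro s hs
        exact ((hg_deriv s).differentiableAt).differentiableWithinAt
      · intro s hs
        rw [interior_Ici] at hs
        rw [(hg_deriv s).deriv]
        have hus : u s ≤ K * v s := key s (le_of_lt hs)
        have hexp : 0 < Real.exp (-K * s) := Real.exp_pos _
        nlinarith [mul_le_mul_of_nonneg_left hus hexp.le]
    have hv0 : v 0 = 0 := intervalIntegral.integral_same
    have hgt : g t ≤ g 0 := hg_anti Set.self_mem_Ici ht ht
    have hg0 : g 0 = 0 := by simp [hg_def, hv0]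
    have hvt : v t ≤ 0 := by
      rw [hg0] at hgt
      have hexp : 0 < Real.exp (-K * t) := Real.exp_pos _
      have hgt' : Real.exp (-K * t) * v t ≤ 0 := hgt
      by_contra hpos
      push_neg at hpos
      nlinarith [mul_pos hexp hpos]
    have h1 : u t ≤ K * v t := key t ht
    have h2 : K * v t ≤ 0 := mul_nonpos_of_nonneg_of_nonpos hK0 hvt
    linarith [hu_nonneg t]
  -- conclude
  intro t ht i
  have h0 : max (-(y t i)) 0 ≤ 0 :=
    le_trans (hu_comp t i) (le_of_eq (hu_zero t ht))
  have h1 : -(y t i) ≤ 0 := le_trans (le_max_left _ _) h0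
  have h2 : y t i = x t i := congrFun (hyx t ht) i
  linarith [h2 ▸ h1]
end

section
/- Fix constants 0 < c ≤ C and N ≥ 2. Let Q : ℝ → M_N(ℝ) be a measurable family of tridiagonal generators with off-diagonal entries in [c, C]. Let Q̄ be a constant N×N matrix such that Q̄_{ij} ≤ Q(t)_{ij} for all i, j and all t (entrywise), and such that the off-diagonal entries of Q̄ on the sub- and superdiagonal are ≥ c > 0 and all other off-diagonal entries of Q̄ are 0. Then for every p₀ ∈ ℝ^N with all components ≥ 0 and every continuous p : [0,∞) → ℝ^N satisfying p(t) = p₀ + ∫₀ᵗ Q(s) p(s) ds for all t ≥ 0, one has the componentwise inequality p(t) ≥ exp(tQ̄) p₀ for all t ≥ 0. -/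
open MeasureTheory

section AuxiliaryLemmas

/-- Measurable and bounded on every compact interval. -/
def LocBM (g : ℝ → ℝ) : Prop :=
  Measurable g ∧ ∀ r : ℝ, ∃ B : ℝ, ∀ s : ℝ, |s| ≤ r → |g s| ≤ B

lemma LocBM.intervalIntegrable {g : ℝ → ℝ} (hg : LocBM g) (a b : ℝ) :
    IntervalIntegrable g volume a b := by
  obtain ⟨B, hB⟩ := hg.2 (max |a| |b|)
  rw [intervalIntegrable_iff]
  refine Integrable.mono' (g := fun _ : ℝ => B)
    (integrableOn_const measure_Ioc_lt_top.ne)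
    hg.1.aestronglyMeasurable.restrict ?_
  refine (ae_restrict_iff' measurableSet_uIoc).2 (Filter.Eventually.of_forall fun s hs => ?_)
  have h1 : min a b < s := hs.1
  have h2 : s ≤ max a b := hs.2
  have habs : |s| ≤ max |a| |b| := by
    rw [abs_le]
    constructor
    · have ha : -(max |a| |b|) ≤ a := le_trans (neg_le_neg (le_max_left _ _)) (neg_abs_le a)
      have hb : -(max |a| |b|) ≤ b := le_trans (neg_le_neg (le_max_right _ _)) (neg_abs_le b)
      exact le_trans (le_min ha hb) h1.le
    · exact h2.trans (max_le_max (le_abs_self a) (le_abs_self b))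
  simpa [Real.norm_eq_abs] using hB s habs

lemma LocBM.of_continuous {g : ℝ → ℝ} (hg : Continuous g) : LocBM g := by
  refine ⟨hg.measurable, fun r => ?_⟩
  obtain ⟨B, hB⟩ := (isCompact_Icc (a := -r) (b := r)).exists_bound_of_continuousOn hg.continuousOn
  exact ⟨B, fun s hs => by simpa [Real.norm_eq_abs] using hB s (abs_le.1 hs)⟩

lemma LocBM.const (c : ℝ) : LocBM fun _ => c := LocBM.of_continuous continuous_const

lemma LocBM.add {g h : ℝ → ℝ} (hg : LocBM g) (hh : LocBM h) : LocBM fun s => g s + h s := by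
  refine ⟨hg.1.add hh.1, fun r => ?_⟩
  obtain ⟨B1, hB1⟩ := hg.2 r; obtain ⟨B2, hB2⟩ := hh.2 r
  exact ⟨B1 + B2, fun s hs => (abs_add_le _ _).trans (add_le_add (hB1 s hs) (hB2 s hs))⟩

lemma LocBM.mul {g h : ℝ → ℝ} (hg : LocBM g) (hh : LocBM h) : LocBM fun s => g s * h s := by
  refine ⟨hg.1.mul hh.1, fun r => ?_⟩
  obtain ⟨B1, hB1⟩ := hg.2 r; obtain ⟨B2, hB2⟩ := hh.2 r
  refine ⟨|B1| * |B2|, fun s hs => ?_⟩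
  rw [abs_mul]
  exact mul_le_mul ((hB1 s hs).trans (le_abs_self _)) ((hB2 s hs).trans (le_abs_self _))
    (abs_nonneg _) (abs_nonneg _)

lemma LocBM.neg {g : ℝ → ℝ} (hg : LocBM g) : LocBM fun s => -(g s) := by
  refine ⟨hg.1.neg, fun r => ?_⟩
  obtain ⟨B, hB⟩ := hg.2 r
  exact ⟨B, fun s hs => by simpa using hB s hs⟩

lemma LocBM.sub {g h : ℝ → ℝ} (hg : LocBM g) (hh : LocBM h) : LocBM fun s => g s - h s := by
  simpa [sub_eq_add_neg] using hg.add hh.neg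

lemma LocBM.sum {ι : Type*} (F : Finset ι) (f : ι → ℝ → ℝ) (h : ∀ j ∈ F, LocBM (f j)) :
    LocBM fun s => ∑ j ∈ F, f j s := by
  classical
  induction F using Finset.induction with
  | empty => simpa using LocBM.const 0
  | @insert a F ha ih =>
      have := (h a (Finset.mem_insert_self a F)).add
        (ih fun j hj => h j (Finset.mem_insert_of_mem hj))
      simpa [Finset.sum_insert ha] using this

lemma abs_le_max_of_mem_uIoc {a b s : ℝ} (hs : s ∈ Set.uIoc a b) : |s| ≤ max |a| |b| := by
  have h1 : min a b < s := hs.1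
  have h2 : s ≤ max a b := hs.2
  rw [abs_le]
  constructor
  · have ha : -(max |a| |b|) ≤ a := le_trans (neg_le_neg (le_max_left _ _)) (neg_abs_le a)
    have hb : -(max |a| |b|) ≤ b := le_trans (neg_le_neg (le_max_right _ _)) (neg_abs_le b)
    exact le_trans (le_min ha hb) h1.le
  · exact h2.trans (max_le_max (le_abs_self a) (le_abs_self b))

lemma pi_intervalIntegrable {N : ℕ} {f : ℝ → Fin N → ℝ} (h : ∀ i, LocBM fun s => f s i)
    (a b : ℝ) : IntervalIntegrable f volume a b := by
  rw [intervalIntegrable_iff]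
  have hmeas : Measurable f := measurable_pi_lambda _ fun i => (h i).1
  choose B hB using fun i => (h i).2 (max |a| |b|)
  refine Integrable.mono' (g := fun _ : ℝ => ∑ i, |B i|)
    (integrableOn_const measure_Ioc_lt_top.ne)
    hmeas.aestronglyMeasurable.restrict ?_
  refine (ae_restrict_iff' measurableSet_uIoc).2 (Filter.Eventually.of_forall fun s hs => ?_)
  have habs := abs_le_max_of_mem_uIoc hs
  rw [pi_norm_le_iff_of_nonneg (Finset.sum_nonneg fun i _ => abs_nonneg (B i))]
  intro i
  calc ‖f s i‖ = |f s i| := rfl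
  _ ≤ B i := hB i s habs
  _ ≤ |B i| := le_abs_self _
  _ ≤ ∑ i, |B i| := Finset.single_le_sum (f := fun i => |B i|)
        (fun j _ => abs_nonneg _) (Finset.mem_univ i)

lemma sum_bound {N : ℕ} {K : ℝ} (d z : Fin N → ℝ)
    (hd : ∀ j, 0 ≤ d j ∧ d j ≤ K) :
    -(K * ∑ j, max (-(z j)) 0) ≤ ∑ j, d j * z j := by
  have h1 : ∀ j : Fin N, -(K * max (-(z j)) 0) ≤ d j * z j := by
    intro j
    rcases hd j with ⟨h0, hK⟩
    have hm0 : 0 ≤ max (-(z j)) 0 := le_max_right _ _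
    have h2 : d j * (-(z j)) ≤ d j * max (-(z j)) 0 :=
      mul_le_mul_of_nonneg_left (le_max_left _ _) h0
    have h3 : d j * max (-(z j)) 0 ≤ K * max (-(z j)) 0 :=
      mul_le_mul_of_nonneg_right hK hm0
    nlinarith
  calc -(K * ∑ j, max (-(z j)) 0) = ∑ j, -(K * max (-(z j)) 0) := by
        rw [Finset.mul_sum, ← Finset.sum_neg_distrib]
  _ ≤ ∑ j, d j * z j := Finset.sum_le_sum fun j _ => h1 j

lemma gronwall_zero {K : ℝ} (hK : 0 ≤ K) {m : ℝ → ℝ} (hm : Continuous m)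
    (hm0 : ∀ s, 0 ≤ m s) (hq : ∀ t, 0 ≤ t → m t ≤ K * ∫ s in (0:ℝ)..t, m s) :
    ∀ t, 0 ≤ t → m t = 0 := by
  set M : ℝ → ℝ := fun t => ∫ s in (0:ℝ)..t, m s with hMdef
  have hMd : ∀ t : ℝ, HasDerivAt M (m t) t := fun t =>
    (hm.integral_hasStrictDerivAt 0 t).hasDerivAt
  set h : ℝ → ℝ := fun t => Real.exp (-K * t) * M t with hhdef
  have hd : ∀ t : ℝ, HasDerivAt h (Real.exp (-K * t) * (-K) * M t + Real.exp (-K * t) * m t) t := by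
    intro t
    have e1 : HasDerivAt (fun t : ℝ => -K * t) (-K) t := by
      simpa using (hasDerivAt_id t).const_mul (-K)
    have e2 : HasDerivAt (fun t : ℝ => Real.exp (-K * t)) (Real.exp (-K * t) * (-K)) t :=
      (Real.hasDerivAt_exp (-K * t)).comp t e1
    exact e2.mul (hMd t)
  have hanti : AntitoneOn h (Set.Ici (0:ℝ)) := by
    apply antitoneOn_of_deriv_nonpos (convex_Ici 0)
    · exact (Continuous.mul (by continuity) (continuous_iff_continuousAt.2 fun t => (hMd t).continuousAt)).continuousOn
    · intro x _
      exact (hd x).differentiableAt.differentiableWithinAt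
    · intro x hx
      rw [interior_Ici] at hx
      rw [(hd x).deriv]
      have h1 := hq x (le_of_lt hx)
      have h2 := Real.exp_pos (-K * x)
      nlinarith [h2.le]
  intro t ht
  have h0 : h 0 = 0 := by simp [hhdef, hMdef]
  have hle : h t ≤ 0 := by
    have := hanti (Set.self_mem_Ici) (Set.mem_Ici.2 ht) ht
    simpa [h0] using this
  have hle' : Real.exp (-K * t) * M t ≤ 0 := hle
  have hMt0 : M t ≤ 0 := by
    have h2 := Real.exp_pos (-K * t)
    nlinarith [hle']
  have hMtnn : 0 ≤ M t := intervalIntegral.integral_nonneg ht fun u _ => hm0 u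
  have : m t ≤ 0 := by
    have := hq t ht
    nlinarith
  linarith [hm0 t]

lemma exp_shift {g : ℝ → ℝ} (hg : LocBM g) (l v₀ t : ℝ) :
    Real.exp (l * t) * (v₀ + ∫ s in (0:ℝ)..t, g s)
      = v₀ + ∫ s in (0:ℝ)..t,
          Real.exp (l * s) * (g s + l * (v₀ + ∫ r in (0:ℝ)..s, g r)) := by
  have hgi : ∀ a b : ℝ, IntervalIntegrable g volume a b := fun a b => hg.intervalIntegrable a b
  set P : ℝ → ℝ := fun u => ∫ s in (0:ℝ)..u, g s with hPdef
  have hPc : Continuous P := intervalIntegral.continuous_primitive hgi 0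
  have hegi : ∀ a b : ℝ, IntervalIntegrable (fun s => Real.exp (l * s) * g s) volume a b :=
    fun a b => ((LocBM.of_continuous (by continuity)).mul hg).intervalIntegrable a b
  set G : ℝ → ℝ := fun u => ∫ s in (0:ℝ)..u, Real.exp (l * s) * g s with hGdef
  have key : ∀ u : ℝ, HasDerivAt (fun w => Real.exp (l * w) * P w - G w)
      (l * Real.exp (l * u) * P u) u := by
    intro u
    rw [hasDerivAt_iff_isLittleO]
    have hexp : HasDerivAt (fun w : ℝ => Real.exp (l * w)) (Real.exp (l * u) * l) u :=
      (Real.hasDerivAt_exp (l * u)).comp u (by simpa using (hasDerivAt_id u).const_mul l)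
    have h1 : (fun w => (Real.exp (l * w) - Real.exp (l * u) - (w - u) * (Real.exp (l * u) * l)) * P w)
        =o[nhds u] fun w => w - u := by
      have ha := hasDerivAt_iff_isLittleO.1 hexp
      simp only [smul_eq_mul] at ha
      have hb : (fun w => P w) =O[nhds u] (fun _ => (1:ℝ)) :=
        (hPc.continuousAt (x := u)).isBigO_one ℝ
      simpa using ha.mul_isBigO hb
    have h2 : (fun w => (w - u) * ((Real.exp (l * u) * l) * (P w - P u))) =o[nhds u] fun w => w - u := by
      have hb : (fun w => (Real.exp (l * u) * l) * (P w - P u)) =o[nhds u] (fun _ => (1:ℝ)) := by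
        rw [Asymptotics.isLittleO_one_iff]
        have h0 : Filter.Tendsto (fun w => P w - P u) (nhds u) (nhds (P u - P u)) :=
          (hPc.tendsto u).sub tendsto_const_nhds
        simpa using h0.const_mul (Real.exp (l * u) * l)
      have := (Asymptotics.isBigO_refl (fun w : ℝ => w - u) (nhds u)).mul_isLittleO hb
      simpa using this
    have h3 : (fun w => Real.exp (l * u) * (P w - P u) - (G w - G u)) =o[nhds u] fun w => w - u := by
      rw [Asymptotics.isLittleO_iff]
      intro ε hε
      obtain ⟨B, hB⟩ := hg.2 (|u| + 1)
      set B₀ : ℝ := max B 0 with hB₀def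
      have hB₀nn : (0:ℝ) ≤ B₀ := le_max_right _ _
      have hBbd : ∀ s : ℝ, |s| ≤ |u| + 1 → |g s| ≤ B₀ := fun s hs => (hB s hs).trans (le_max_left _ _)
      have hεB : 0 < ε / (B₀ + 1) := by positivity
      have hcont : ContinuousAt (fun w : ℝ => Real.exp (l * w)) u :=
        (Real.continuous_exp.comp (continuous_const.mul continuous_id)).continuousAt
      obtain ⟨δ, hδpos, hδ⟩ := Metric.continuousAt_iff.1 hcont (ε / (B₀ + 1)) hεB
      have hδ'pos : 0 < min δ 1 := lt_min hδpos one_pos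
      filter_upwards [Metric.ball_mem_nhds u hδ'pos] with w hw
      rw [Metric.mem_ball, Real.dist_eq] at hw
      have hrepr : Real.exp (l * u) * (P w - P u) - (G w - G u)
          = ∫ s in u..w, (Real.exp (l * u) - Real.exp (l * s)) * g s := by
        have e1 : P w - P u = ∫ s in u..w, g s :=
          (intervalIntegral.integral_interval_sub_left (hgi 0 w) (hgi 0 u))
        have e2 : G w - G u = ∫ s in u..w, Real.exp (l * s) * g s :=
          (intervalIntegral.integral_interval_sub_left (hegi 0 w) (hegi 0 u))
        rw [e1, e2, ← intervalIntegral.integral_const_mul,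
          ← intervalIntegral.integral_sub ((hgi u w).const_mul _) (hegi u w)]
        congr 1; funext s; ring
      rw [hrepr]
      have hbound : ∀ s ∈ Set.uIoc u w,
          ‖(Real.exp (l * u) - Real.exp (l * s)) * g s‖ ≤ ε / (B₀ + 1) * B₀ := by
        intro s hs
        have hs1 : |s - u| ≤ |w - u| := by
          rcases Set.mem_uIoc.1 hs with h | h
          · rw [abs_sub_le_iff]; constructor
            · have := h.2; have := h.1
              have hwu : u ≤ w := le_of_lt (lt_of_lt_of_le h.1 h.2)
              rw [abs_of_nonneg (by linarith : (0:ℝ) ≤ w - u)]; linarith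
            · have hwu : u ≤ w := le_of_lt (lt_of_lt_of_le h.1 h.2)
              have : (0:ℝ) ≤ |w - u| := abs_nonneg _
              linarith [h.1.le]
          · rw [abs_sub_le_iff]; constructor
            · have : (0:ℝ) ≤ |w - u| := abs_nonneg _
              linarith [h.2, h.1.le]
            · have hwu : w ≤ u := le_of_lt (lt_of_lt_of_le h.1 h.2)
              rw [abs_of_nonpos (by linarith : w - u ≤ 0)]; linarith [h.1]
        have hsδ : |s - u| < min δ 1 := lt_of_le_of_lt hs1 hw
        have hs2 : |s| ≤ |u| + 1 := by
          have h1 : |s - u| ≤ 1 := le_of_lt (lt_of_lt_of_le hsδ (min_le_right _ _))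
          calc |s| = |u + (s - u)| := by ring_nf
          _ ≤ |u| + |s - u| := abs_add_le _ _
          _ ≤ |u| + 1 := by linarith
        have hexps : |Real.exp (l * u) - Real.exp (l * s)| ≤ ε / (B₀ + 1) := by
          have hds : dist s u < δ := by
            rw [Real.dist_eq]; exact lt_of_lt_of_le hsδ (min_le_left _ _)
          have := hδ hds
          rw [Real.dist_eq, abs_sub_comm] at this
          exact this.le
        rw [Real.norm_eq_abs, abs_mul]
        exact mul_le_mul hexps (hBbd s hs2) (abs_nonneg _) (le_of_lt hεB)
      have := intervalIntegral.norm_integral_le_of_norm_le_const hbound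
      refine this.trans ?_
      rw [Real.norm_eq_abs]
      have hC : ε / (B₀ + 1) * B₀ ≤ ε := by
        rw [div_mul_eq_mul_div, div_le_iff₀ (by positivity)]
        nlinarith
      have : |w - u| ≥ 0 := abs_nonneg _
      calc ε / (B₀ + 1) * B₀ * |w - u| ≤ ε * |w - u| :=
            mul_le_mul_of_nonneg_right hC (abs_nonneg _)
      _ = ε * ‖w - u‖ := by rw [Real.norm_eq_abs]
    have hsum := (h1.add h2).add h3
    have hfn : (fun w => (Real.exp (l * w) * P w - G w) - (Real.exp (l * u) * P u - G u)
          - (w - u) • (l * Real.exp (l * u) * P u))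
        = (fun w => ((Real.exp (l * w) - Real.exp (l * u) - (w - u) * (Real.exp (l * u) * l)) * P w
            + (w - u) * ((Real.exp (l * u) * l) * (P w - P u)))
            + (Real.exp (l * u) * (P w - P u) - (G w - G u))) := by
      funext w; simp only [smul_eq_mul]; ring
    rw [hfn]
    exact hsum
  -- FTC
  have hintc : Continuous fun u => l * Real.exp (l * u) * P u := by
    exact (continuous_const.mul (Real.continuous_exp.comp (continuous_const.mul continuous_id))).mul hPc
  have hFTC := intervalIntegral.integral_eq_sub_of_hasDerivAt (f' := fun u => l * Real.exp (l * u) * P u)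
    (fun x _ => key x) (hintc.intervalIntegrable 0 t)
  have hP0 : P 0 = 0 := intervalIntegral.integral_same
  have hG0 : G 0 = 0 := intervalIntegral.integral_same
  -- constant piece
  have hconst : ∫ s in (0:ℝ)..t, v₀ * (Real.exp (l * s) * l) = v₀ * Real.exp (l * t) - v₀ * Real.exp (l * 0) := by
    apply intervalIntegral.integral_eq_sub_of_hasDerivAt
    · intro x _
      exact ((Real.hasDerivAt_exp (l * x)).comp x
        (by simpa using (hasDerivAt_id x).const_mul l)).const_mul v₀
    · exact (by continuity : Continuous fun s => v₀ * (Real.exp (l * s) * l)).intervalIntegrable 0 t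
  -- split RHS integral
  have hsplit : (∫ s in (0:ℝ)..t, Real.exp (l * s) * (g s + l * (v₀ + P s)))
      = G t + ((∫ s in (0:ℝ)..t, v₀ * (Real.exp (l * s) * l))
          + ∫ s in (0:ℝ)..t, l * Real.exp (l * s) * P s) := by
    rw [← intervalIntegral.integral_add ((by continuity : Continuous fun s => v₀ * (Real.exp (l * s) * l)).intervalIntegrable 0 t) (hintc.intervalIntegrable 0 t),
      ← intervalIntegral.integral_add (hegi 0 t) (((by continuity : Continuous fun s => v₀ * (Real.exp (l * s) * l)).intervalIntegrable 0 t).add (hintc.intervalIntegrable 0 t))]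
    congr 1; funext s; ring
  rw [hsplit, hconst, hFTC]
  simp only [hP0, hG0, mul_zero, Real.exp_zero]
  ring

lemma key_nonneg {N : ℕ} {K : ℝ} (hK : 0 ≤ K)
    {w F : ℝ → Fin N → ℝ} {v₀ : Fin N → ℝ}
    (hwc : ∀ i, Continuous fun s => w s i)
    (hv₀ : ∀ i, 0 ≤ v₀ i)
    (hFi : ∀ i, ∀ a b : ℝ, IntervalIntegrable (fun s => F s i) volume a b)
    (hF : ∀ s, 0 ≤ s → ∀ i, -(K * (∑ j, max (-(w s j)) 0)) ≤ F s i)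
    (heq : ∀ t, 0 ≤ t → ∀ i, w t i = v₀ i + ∫ s in (0:ℝ)..t, F s i) :
    ∀ t, 0 ≤ t → ∀ i, 0 ≤ w t i := by
  set m : ℝ → ℝ := fun s => ∑ j, max (-(w s j)) 0 with hmdef
  have hmc : Continuous m := continuous_finset_sum _ fun j _ => ((hwc j).neg.max continuous_const)
  have hm0 : ∀ s, 0 ≤ m s := fun s => Finset.sum_nonneg fun j _ => le_max_right _ _
  have hmle : ∀ t, 0 ≤ t → m t ≤ ((N : ℝ) * K) * ∫ s in (0:ℝ)..t, m s := by
    intro t ht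
    have hMnn : 0 ≤ ∫ s in (0:ℝ)..t, m s := intervalIntegral.integral_nonneg ht fun u _ => hm0 u
    have hterm : ∀ i : Fin N, max (-(w t i)) 0 ≤ K * ∫ s in (0:ℝ)..t, m s := by
      intro i
      have hint : (∫ s in (0:ℝ)..t, -(F s i)) ≤ ∫ s in (0:ℝ)..t, K * m s :=
        intervalIntegral.integral_mono_on ht ((hFi i 0 t).neg)
          ((continuous_const.mul hmc).intervalIntegrable 0 t)
          (fun s hs => by have := hF s hs.1 i; linarith)
      rw [intervalIntegral.integral_neg, intervalIntegral.integral_const_mul] at hint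
      have h1 : -(w t i) ≤ K * ∫ s in (0:ℝ)..t, m s := by
        have he := heq t ht i
        have hv := hv₀ i
        have : -(w t i) = -(v₀ i) - ∫ s in (0:ℝ)..t, F s i := by rw [he]; ring
        linarith
      exact max_le h1 (mul_nonneg hK hMnn)
    calc m t ≤ ∑ _i : Fin N, (K * ∫ s in (0:ℝ)..t, m s) :=
          Finset.sum_le_sum fun i _ => hterm i
    _ = ((N : ℝ) * K) * ∫ s in (0:ℝ)..t, m s := by
        rw [Finset.sum_const, Finset.card_univ, Fintype.card_fin, nsmul_eq_mul]; ring
  have hz := gronwall_zero (mul_nonneg (Nat.cast_nonneg N) hK) hmc hm0 hmle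
  intro t ht i
  have hmz := hz t ht
  have hle1 : max (-(w t i)) 0 ≤ m t :=
    Finset.single_le_sum (f := fun j => max (-(w t j)) 0) (fun j _ => le_max_right _ _) (Finset.mem_univ i)
  have h0 : (0:ℝ) ≤ max (-(w t i)) 0 := le_max_right _ _
  have hmax0 : max (-(w t i)) 0 = 0 := le_antisymm (hmz ▸ hle1) h0
  have := le_max_left (-(w t i)) 0
  linarith [this.trans_eq hmax0]

lemma matexp_entry_hasDerivAt {N : ℕ} (A : Matrix (Fin N) (Fin N) ℝ) (t : ℝ) (i j : Fin N) :
    HasDerivAt (fun u : ℝ => NormedSpace.exp (u • A) i j)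
      ((A * NormedSpace.exp (t • A)) i j) t := by
  letI : SeminormedRing (Matrix (Fin N) (Fin N) ℝ) := Matrix.linftyOpSemiNormedRing
  letI : NormedRing (Matrix (Fin N) (Fin N) ℝ) := Matrix.linftyOpNormedRing
  letI : NormedAlgebra ℝ (Matrix (Fin N) (Fin N) ℝ) := Matrix.linftyOpNormedAlgebra
  have h := hasDerivAt_exp_smul_const' (𝕂 := ℝ) A t
  let L : Matrix (Fin N) (Fin N) ℝ →L[ℝ] ℝ :=
    LinearMap.toContinuousLinearMap
      ((LinearMap.proj j).comp (LinearMap.proj (R := ℝ) (φ := fun _ : Fin N => Fin N → ℝ) i))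
  exact L.hasFDerivAt.comp_hasDerivAt t h

end AuxiliaryLemmas

/-- A *measurable family of tridiagonal generators with off-diagonal entries in
`[c, C]`*: a measurable map `Q : ℝ → M_N(ℝ)` such that for every `t` the matrix
`Q t` vanishes off the three central diagonals, has its sub- and super-diagonal
entries in `[c, C]`, and all its columns sum to zero. -/
def IsTridiagGenFamily (N : ℕ) (c C : ℝ) (Q : ℝ → Matrix (Fin N) (Fin N) ℝ) : Prop :=
  (∀ i j : Fin N, Measurable fun t => Q t i j) ∧
  ∀ t : ℝ,
    (∀ i j : Fin N, ((i : ℕ) + 2 ≤ (j : ℕ) ∨ (j : ℕ) + 2 ≤ (i : ℕ)) → Q t i j = 0) ∧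
    (∀ i j : Fin N, ((i : ℕ) + 1 = (j : ℕ) ∨ (j : ℕ) + 1 = (i : ℕ)) →
      Q t i j ∈ Set.Icc c C) ∧
    (∀ j, ∑ i, Q t i j = 0)

/-- **Comparison theorem.** Let `Q` be a measurable family of tridiagonal generators
with off-diagonal entries in `[c, C]` (`0 < c ≤ C`, `N ≥ 2`), and let `Q̄` be a
constant matrix with `Q̄ ≤ Q t` entrywise for all `t`, whose sub- and super-diagonal
entries are `≥ c` and whose remaining off-diagonal entries vanish. Then any
Carathéodory solution `p` of `p' = Q(t) p`, `p 0 = p₀`, with `p₀` componentwise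
nonnegative satisfies `p t ≥ exp (t Q̄) p₀` componentwise for all `t ≥ 0`. -/
theorem tridiag_solution_ge_exp_lowerMatrix {N : ℕ} (hN : 2 ≤ N)
    (c C : ℝ) (hc : 0 < c) (hcC : c ≤ C)
    (Q : ℝ → Matrix (Fin N) (Fin N) ℝ)
    (hQ : IsTridiagGenFamily N c C Q)
    (Qbar : Matrix (Fin N) (Fin N) ℝ)
    (hle : ∀ (t : ℝ) (i j : Fin N), Qbar i j ≤ Q t i j)
    (hdiag : ∀ i j : Fin N, ((i : ℕ) + 1 = (j : ℕ) ∨ (j : ℕ) + 1 = (i : ℕ)) →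
      c ≤ Qbar i j)
    (hzero : ∀ i j : Fin N, i ≠ j →
      ¬ ((i : ℕ) + 1 = (j : ℕ) ∨ (j : ℕ) + 1 = (i : ℕ)) → Qbar i j = 0)
    (p₀ : Fin N → ℝ) (hp₀ : ∀ i, 0 ≤ p₀ i)
    (p : ℝ → (Fin N → ℝ))
    (hpcont : ContinuousOn p (Set.Ici (0 : ℝ)))
    (hpsol : ∀ t : ℝ, 0 ≤ t → p t = p₀ + ∫ s in (0 : ℝ)..t, (Q s).mulVec (p s)) :
    ∀ t : ℝ, 0 ≤ t → ∀ i, (NormedSpace.exp (t • Qbar)).mulVec p₀ i ≤ p t i := by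
  classical
  obtain ⟨hQmeas, hQstr⟩ := hQ
  have hC0 : (0:ℝ) ≤ C := le_trans hc.le hcC
  have hN1 : (1:ℝ) ≤ (N:ℝ) := by exact_mod_cast le_trans (by norm_num) hN
  -- entry bounds for Q
  have hoff : ∀ (t : ℝ) (i j : Fin N), i ≠ j → 0 ≤ Q t i j ∧ Q t i j ≤ C := by
    intro t i j hij
    by_cases hadj : ((i : ℕ) + 1 = (j : ℕ) ∨ (j : ℕ) + 1 = (i : ℕ))
    · have h := (hQstr t).2.1 i j hadj
      exact ⟨le_trans hc.le h.1, h.2⟩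
    · have hne : (i : ℕ) ≠ (j : ℕ) := fun h => hij (Fin.ext h)
      have hfar : ((i : ℕ) + 2 ≤ (j : ℕ) ∨ (j : ℕ) + 2 ≤ (i : ℕ)) := by omega
      rw [(hQstr t).1 i j hfar]
      exact ⟨le_rfl, hC0⟩
  have hdiagQb : ∀ (t : ℝ) (j : Fin N), -((N:ℝ) * C) ≤ Q t j j ∧ Q t j j ≤ 0 := by
    intro t j
    have hsum := (hQstr t).2.2 j
    have hsplit : Q t j j + ∑ i ∈ Finset.univ.erase j, Q t i j = ∑ i, Q t i j :=
      Finset.add_sum_erase _ (fun i => Q t i j) (Finset.mem_univ j)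
    have hub : ∑ i ∈ Finset.univ.erase j, Q t i j ≤ ((Finset.univ.erase j).card : ℝ) * C := by
      have := Finset.sum_le_card_nsmul (Finset.univ.erase j) (fun i => Q t i j) C
        (fun i hi => (hoff t i j (Finset.ne_of_mem_erase hi)).2)
      rwa [nsmul_eq_mul] at this
    have hlb : 0 ≤ ∑ i ∈ Finset.univ.erase j, Q t i j :=
      Finset.sum_nonneg fun i hi => (hoff t i j (Finset.ne_of_mem_erase hi)).1
    have hcard : ((Finset.univ.erase j).card : ℝ) ≤ (N:ℝ) := by
      have h1 := Finset.card_erase_le (s := (Finset.univ : Finset (Fin N))) (a := j)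
      have h2 : (Finset.univ : Finset (Fin N)).card = N := by simp
      exact_mod_cast le_trans h1 (le_of_eq h2)
    constructor
    · nlinarith
    · linarith
  have hQbd : ∀ (t : ℝ) (i j : Fin N), |Q t i j| ≤ (N:ℝ) * C := by
    intro t i j
    by_cases hij : i = j
    · subst hij
      rcases hdiagQb t i with ⟨h1, h2⟩
      rw [abs_le]; exact ⟨h1, by nlinarith⟩
    · rcases hoff t i j hij with ⟨h1, h2⟩
      rw [abs_le]
      constructor
      · nlinarith
      · nlinarith
  -- the continuous extension y of p
  set y : ℝ → Fin N → ℝ := fun s => p (max s 0) with hydef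
  have hyc : Continuous y :=
    hpcont.comp_continuous (continuous_id.max continuous_const)
      (fun x => Set.mem_Ici.2 (le_max_right _ _))
  have hyic : ∀ j, Continuous fun s => y s j := fun j => (continuous_apply j).comp hyc
  have hybd : ∀ j, LocBM fun s => y s j := fun j => LocBM.of_continuous (hyic j)
  have hQlb : ∀ i j, LocBM fun s => Q s i j := fun i j =>
    ⟨hQmeas i j, fun r => ⟨(N:ℝ)*C, fun s _ => hQbd s i j⟩⟩
  set g : Fin N → ℝ → ℝ := fun i s => ∑ j, Q s i j * y s j with hgdef
  have hglb : ∀ i, LocBM (g i) := fun i => LocBM.sum _ _ (fun j _ => (hQlb i j).mul (hybd j))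
  -- componentwise solution identity
  have hsol : ∀ t, 0 ≤ t → ∀ i, y t i = p₀ i + ∫ s in (0:ℝ)..t, g i s := by
    intro t ht i
    have h0 := hpsol t ht
    have hcongr : (∫ s in (0:ℝ)..t, (Q s).mulVec (p s)) = ∫ s in (0:ℝ)..t, (Q s).mulVec (y s) := by
      apply intervalIntegral.integral_congr
      intro s hs
      rw [Set.uIcc_of_le ht] at hs
      show (Q s).mulVec (p s) = (Q s).mulVec (p (max s 0))
      rw [max_eq_left hs.1]
    have hvbd : ∀ i', LocBM fun s => (Q s).mulVec (y s) i' := by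
      intro i'
      have : (fun s => (Q s).mulVec (y s) i') = fun s => ∑ j, Q s i' j * y s j := by
        funext s; simp [Matrix.mulVec, dotProduct]
      rw [this]
      exact LocBM.sum _ _ (fun j _ => (hQlb i' j).mul (hybd j))
    have hvint := pi_intervalIntegrable hvbd 0 t
    have hproj := (ContinuousLinearMap.proj (R := ℝ) (φ := fun _ : Fin N => ℝ) i).intervalIntegral_comp_comm hvint
    have hyt : y t i = p t i := by
      show p (max t 0) i = p t i
      rw [max_eq_left ht]
    rw [hyt, h0]
    have h2 : (p₀ + ∫ s in (0:ℝ)..t, (Q s).mulVec (p s)) i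
        = p₀ i + (∫ s in (0:ℝ)..t, (Q s).mulVec (y s)) i := by
      rw [hcongr]; rfl
    rw [h2]
    congr 1
    have h3 : (∫ s in (0:ℝ)..t, (Q s).mulVec (y s)) i
        = ∫ s in (0:ℝ)..t, (Q s).mulVec (y s) i := hproj.symm
    rw [h3]
    apply intervalIntegral.integral_congr
    intro s _
    simp [Matrix.mulVec, dotProduct, hgdef]
  -- STEP A : positivity of the solution
  set lam0 : ℝ := (N:ℝ) * C with hlam0def
  have hlam0nn : 0 ≤ lam0 := mul_nonneg (Nat.cast_nonneg N) hC0
  set K0 : ℝ := lam0 + C with hK0def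
  have hK0nn : 0 ≤ K0 := add_nonneg hlam0nn hC0
  set u : ℝ → Fin N → ℝ := fun t i => p₀ i + ∫ s in (0:ℝ)..t, g i s with hudef
  have huc : ∀ i, Continuous fun s => u s i := fun i =>
    continuous_const.add (intervalIntegral.continuous_primitive
      (fun a b => (hglb i).intervalIntegrable a b) 0)
  have hulb : ∀ i, LocBM fun s => u s i := fun i => LocBM.of_continuous (huc i)
  have huy : ∀ s, 0 ≤ s → ∀ i, u s i = y s i := fun s hs i => (hsol s hs i).symm
  set w0 : ℝ → Fin N → ℝ := fun t i => Real.exp (lam0 * t) * u t i with hw0def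
  set F0 : ℝ → Fin N → ℝ := fun s i => Real.exp (lam0 * s) * (g i s + lam0 * u s i) with hF0def
  have heq0 : ∀ t, 0 ≤ t → ∀ i, w0 t i = p₀ i + ∫ s in (0:ℝ)..t, F0 s i := by
    intro t _ i
    exact exp_shift (hglb i) lam0 (p₀ i) t
  have hw0c : ∀ i, Continuous fun s => w0 s i := fun i =>
    (Real.continuous_exp.comp (continuous_const.mul continuous_id)).mul (huc i)
  have hF0i : ∀ i (a b : ℝ), IntervalIntegrable (fun s => F0 s i) volume a b := fun i a b =>
    ((LocBM.of_continuous (Real.continuous_exp.comp (continuous_const.mul continuous_id))).mul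
      ((hglb i).add ((LocBM.const lam0).mul (hulb i)))).intervalIntegrable a b
  have hF0bd : ∀ s, 0 ≤ s → ∀ i, -(K0 * (∑ j, max (-(w0 s j)) 0)) ≤ F0 s i := by
    intro s hs i
    have hrep : F0 s i = ∑ j, (Q s i j + (if j = i then lam0 else 0)) * w0 s j := by
      have hswap : ∀ j : Fin N, (Q s i j + (if j = i then lam0 else 0)) * w0 s j
          = Real.exp (lam0 * s) * (Q s i j * y s j)
            + (if j = i then Real.exp (lam0 * s) * (lam0 * u s i) else 0) := by
        intro j
        have hw : w0 s j = Real.exp (lam0 * s) * u s j := rfl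
        have hyu : u s j = y s j := huy s hs j
        by_cases h : j = i
        · subst h
          simp only [eq_self_iff_true, if_true, hw, hyu]
          ring
        · simp only [if_neg h, hw, hyu]; ring
      rw [Finset.sum_congr rfl fun j _ => hswap j, Finset.sum_add_distrib,
        Finset.sum_ite_eq' Finset.univ i]
      simp only [Finset.mem_univ, if_true]
      rw [← Finset.mul_sum]
      show Real.exp (lam0 * s) * (g i s + lam0 * u s i)
        = Real.exp (lam0 * s) * (∑ j, Q s i j * y s j) + Real.exp (lam0 * s) * (lam0 * u s i)
      rw [hgdef]; ring
    rw [hrep]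
    apply sum_bound
    intro j
    by_cases h : j = i
    · subst h
      rcases hdiagQb s j with ⟨h1, h2⟩
      simp only [eq_self_iff_true, if_true]
      constructor
      · linarith
      · rw [hK0def]; linarith
    · rcases hoff s i j (fun hh => h hh.symm) with ⟨h1, h2⟩
      simp only [if_neg h]
      constructor
      · linarith
      · rw [hK0def]; linarith
  have hw0nn := key_nonneg hK0nn hw0c hp₀ hF0i hF0bd heq0
  have hynn : ∀ s, 0 ≤ s → ∀ j, 0 ≤ y s j := by
    intro s hs j
    have h1 := hw0nn s hs j
    have hE := Real.exp_pos (lam0 * s)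
    have h2 : 0 ≤ u s j := by
      by_contra hcon
      push_neg at hcon
      have : w0 s j < 0 := mul_neg_of_pos_of_neg hE hcon
      linarith
    rwa [huy s hs j] at h2
  -- STEP B : comparison with the constant-coefficient solution
  set q : ℝ → Fin N → ℝ := fun s => (NormedSpace.exp (s • Qbar)).mulVec p₀ with hqdef
  have hqd : ∀ (s : ℝ) (i : Fin N), HasDerivAt (fun uu => q uu i) (Qbar.mulVec (q s) i) s := by
    intro s i
    have hsum : HasDerivAt (fun uu => ∑ j, NormedSpace.exp (uu • Qbar) i j * p₀ j)
        (∑ j, (Qbar * NormedSpace.exp (s • Qbar)) i j * p₀ j) s :=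
      HasDerivAt.fun_sum fun j _ => (matexp_entry_hasDerivAt Qbar s i j).mul_const (p₀ j)
    have h1 : (fun uu => q uu i) = fun uu => ∑ j, NormedSpace.exp (uu • Qbar) i j * p₀ j := by
      funext uu; simp [hqdef, Matrix.mulVec, dotProduct]
    have h2 : Qbar.mulVec (q s) i = ∑ j, (Qbar * NormedSpace.exp (s • Qbar)) i j * p₀ j := by
      show Qbar.mulVec ((NormedSpace.exp (s • Qbar)).mulVec p₀) i = _
      rw [Matrix.mulVec_mulVec]
      simp [Matrix.mulVec, dotProduct]
    rw [h1, h2]; exact hsum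
  have hqic : ∀ i, Continuous fun s => q s i := fun i =>
    continuous_iff_continuousAt.2 fun s => (hqd s i).continuousAt
  have hqmc : ∀ i, Continuous fun s => Qbar.mulVec (q s) i := by
    intro i
    have : (fun s => Qbar.mulVec (q s) i) = fun s => ∑ j, Qbar i j * q s j := by
      funext s; simp [Matrix.mulVec, dotProduct]
    rw [this]
    exact continuous_finset_sum _ fun j _ => continuous_const.mul (hqic j)
  have hqint : ∀ (t : ℝ) (i : Fin N), q t i = p₀ i + ∫ s in (0:ℝ)..t, Qbar.mulVec (q s) i := by
    intro t i
    have hFTC := intervalIntegral.integral_eq_sub_of_hasDerivAt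
      (f := fun uu => q uu i) (f' := fun s => Qbar.mulVec (q s) i)
      (fun x _ => hqd x i) ((hqmc i).intervalIntegrable 0 t)
    have hq0 : q 0 i = p₀ i := by
      show (NormedSpace.exp ((0:ℝ) • Qbar)).mulVec p₀ i = p₀ i
      rw [zero_smul, NormedSpace.exp_zero, Matrix.one_mulVec]
    have hFTC' : (∫ s in (0:ℝ)..t, Qbar.mulVec (q s) i) = q t i - q 0 i := hFTC
    rw [hq0] at hFTC'
    linarith [hFTC']
  set lam1 : ℝ := ∑ i : Fin N, ∑ j : Fin N, |Qbar i j| with hlam1def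
  have hlam1e : ∀ i j : Fin N, |Qbar i j| ≤ lam1 := by
    intro i j
    calc |Qbar i j| ≤ ∑ j' : Fin N, |Qbar i j'| :=
          Finset.single_le_sum (f := fun j' => |Qbar i j'|) (fun _ _ => abs_nonneg _) (Finset.mem_univ j)
    _ ≤ lam1 := Finset.single_le_sum (f := fun i' => ∑ j' : Fin N, |Qbar i' j'|)
          (fun _ _ => Finset.sum_nonneg fun _ _ => abs_nonneg _) (Finset.mem_univ i)
  have hlam1nn : 0 ≤ lam1 :=
    Finset.sum_nonneg fun _ _ => Finset.sum_nonneg fun _ _ => abs_nonneg _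
  set K1 : ℝ := 2 * lam1 with hK1def
  have hK1nn : 0 ≤ K1 := by rw [hK1def]; linarith
  have hQbaroff : ∀ i j : Fin N, j ≠ i → 0 ≤ Qbar i j := by
    intro i j hji
    by_cases hadj : ((i : ℕ) + 1 = (j : ℕ) ∨ (j : ℕ) + 1 = (i : ℕ))
    · exact le_trans hc.le (hdiag i j hadj)
    · rw [hzero i j (fun hh => hji hh.symm) hadj]
  set Gf : Fin N → ℝ → ℝ := fun i s => g i s - Qbar.mulVec (q s) i with hGfdef
  have hGlb : ∀ i, LocBM (Gf i) := fun i => (hglb i).sub (LocBM.of_continuous (hqmc i))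
  set U : ℝ → Fin N → ℝ := fun t i => (0:ℝ) + ∫ s in (0:ℝ)..t, Gf i s with hUdef
  have hUyq : ∀ t, 0 ≤ t → ∀ i, U t i = y t i - q t i := by
    intro t ht i
    have h1 := hsol t ht i
    have h2 := hqint t i
    have h3 : (∫ s in (0:ℝ)..t, Gf i s)
        = (∫ s in (0:ℝ)..t, g i s) - ∫ s in (0:ℝ)..t, Qbar.mulVec (q s) i := by
      rw [hGfdef]
      exact intervalIntegral.integral_sub ((hglb i).intervalIntegrable 0 t)
        ((hqmc i).intervalIntegrable 0 t)
    show (0:ℝ) + ∫ s in (0:ℝ)..t, Gf i s = y t i - q t i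
    rw [h3, h1, h2]; ring
  have hUc : ∀ i, Continuous fun s => U s i := fun i =>
    continuous_const.add (intervalIntegral.continuous_primitive
      (fun a b => (hGlb i).intervalIntegrable a b) 0)
  have hUlb : ∀ i, LocBM fun s => U s i := fun i => LocBM.of_continuous (hUc i)
  set w1 : ℝ → Fin N → ℝ := fun t i => Real.exp (lam1 * t) * U t i with hw1def
  set F1 : ℝ → Fin N → ℝ := fun s i => Real.exp (lam1 * s) * (Gf i s + lam1 * U s i) with hF1def
  have heq1 : ∀ t, 0 ≤ t → ∀ i, w1 t i = (fun _ : Fin N => (0:ℝ)) i + ∫ s in (0:ℝ)..t, F1 s i := by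
    intro t _ i
    exact exp_shift (hGlb i) lam1 0 t
  have hw1c : ∀ i, Continuous fun s => w1 s i := fun i =>
    (Real.continuous_exp.comp (continuous_const.mul continuous_id)).mul (hUc i)
  have hF1i : ∀ i (a b : ℝ), IntervalIntegrable (fun s => F1 s i) volume a b := fun i a b =>
    ((LocBM.of_continuous (Real.continuous_exp.comp (continuous_const.mul continuous_id))).mul
      ((hGlb i).add ((LocBM.const lam1).mul (hUlb i)))).intervalIntegrable a b
  have hF1bd : ∀ s, 0 ≤ s → ∀ i, -(K1 * (∑ j, max (-(w1 s j)) 0)) ≤ F1 s i := by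
    intro s hs i
    have hU' : ∀ j, U s j = y s j - q s j := hUyq s hs
    have hrep : F1 s i = Real.exp (lam1 * s) * (∑ j, (Q s i j - Qbar i j) * y s j)
        + ∑ j, (Qbar i j + (if j = i then lam1 else 0)) * w1 s j := by
      have hswap : ∀ j : Fin N, (Qbar i j + (if j = i then lam1 else 0)) * w1 s j
          = Real.exp (lam1 * s) * (Qbar i j * (y s j - q s j))
            + (if j = i then Real.exp (lam1 * s) * (lam1 * (y s i - q s i)) else 0) := by
        intro j
        have hw : w1 s j = Real.exp (lam1 * s) * U s j := rfl
        by_cases h : j = i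
        · subst h
          simp only [eq_self_iff_true, if_true, hw, hU' j]
          ring
        · simp only [if_neg h, hw, hU' j]; ring
      rw [Finset.sum_congr rfl fun j _ => hswap j, Finset.sum_add_distrib,
        Finset.sum_ite_eq' Finset.univ i]
      simp only [Finset.mem_univ, if_true]
      have hgq : Gf i s = (∑ j, Q s i j * y s j) - ∑ j, Qbar i j * q s j := by
        have hmv : Qbar.mulVec (q s) i = ∑ j, Qbar i j * q s j := by
          simp [Matrix.mulVec, dotProduct]
        show g i s - Qbar.mulVec (q s) i = _
        rw [hmv]
      have hkey : (∑ j, Real.exp (lam1 * s) * ((Q s i j - Qbar i j) * y s j))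
            + (∑ j, Real.exp (lam1 * s) * (Qbar i j * (y s j - q s j)))
          = (Real.exp (lam1 * s) * ∑ j, Q s i j * y s j)
            - Real.exp (lam1 * s) * ∑ j, Qbar i j * q s j := by
        rw [Finset.mul_sum, Finset.mul_sum, ← Finset.sum_sub_distrib, ← Finset.sum_add_distrib]
        exact Finset.sum_congr rfl fun j _ => by ring
      show Real.exp (lam1 * s) * (Gf i s + lam1 * U s i) = _
      rw [hgq, hU' i, mul_add, mul_sub, ← hkey, Finset.mul_sum]
      ring
    rw [hrep]
    have hnn : 0 ≤ Real.exp (lam1 * s) * (∑ j, (Q s i j - Qbar i j) * y s j) :=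
      mul_nonneg (Real.exp_pos _).le (Finset.sum_nonneg fun j _ =>
        mul_nonneg (by linarith [hle s i j]) (hynn s hs j))
    have hdb : ∀ j, 0 ≤ Qbar i j + (if j = i then lam1 else 0)
        ∧ Qbar i j + (if j = i then lam1 else 0) ≤ K1 := by
      intro j
      by_cases h : j = i
      · subst h
        simp only [eq_self_iff_true, if_true]
        constructor
        · linarith [neg_abs_le (Qbar j j), hlam1e j j]
        · rw [hK1def]; linarith [le_abs_self (Qbar j j), hlam1e j j]
      · simp only [if_neg h]
        constructor
        · linarith [hQbaroff i j h]
        · rw [hK1def]; linarith [le_abs_self (Qbar i j), hlam1e i j, hlam1nn]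
    have hsb := sum_bound (K := K1) (fun j => Qbar i j + (if j = i then lam1 else 0))
      (fun j => w1 s j) hdb
    linarith [hnn, hsb]
  have hw1nn := key_nonneg (v₀ := fun _ : Fin N => (0:ℝ)) hK1nn hw1c
    (fun _ => le_rfl) hF1i hF1bd heq1
  intro t ht i
  have h1 := hw1nn t ht i
  have hE := Real.exp_pos (lam1 * t)
  have h2 : 0 ≤ U t i := by
    by_contra hcon
    push_neg at hcon
    have : w1 t i < 0 := mul_neg_of_pos_of_neg hE hcon
    have hw : w1 t i = Real.exp (lam1 * t) * U t i := rfl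
    linarith
  have h3 := hUyq t ht i
  have h4 : q t i ≤ y t i := by
    have := h3 ▸ h2
    linarith
  have h5 : y t i = p t i := by
    show p (max t 0) i = p t i
    rw [max_eq_left ht]
  have h6 : (NormedSpace.exp (t • Qbar)).mulVec p₀ i = q t i := rfl
  rw [h6]
  linarith
end

section
/- Fix constants 0 < c ≤ C and N ≥ 2, and let Q : ℝ → M_N(ℝ) be a measurable family of tridiagonal generators with off-diagonal entries in [c, C]. Then for every t > 0, every nonzero vector p₀ ∈ ℝ^N with all components ≥ 0, and every continuous p : [0,∞) → ℝ^N satisfying p(s) = p₀ + ∫₀ˢ Q(r) p(r) dr for all s ≥ 0, the vector p(t) has all components strictly positive. -/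
open MeasureTheory

lemma tridiag_persist {K a b : ℝ} {h g : ℝ → ℝ}
    (hK : 0 < K) (hab : a ≤ b)
    (hcont : ContinuousOn h (Set.Icc a b))
    (heq : ∀ s ∈ Set.Icc a b, h s = h a + ∫ r in a..s, g r)
    (hint : IntervalIntegrable g volume a b)
    (hlow : ∀ r ∈ Set.Icc a b, -(K * h r) ≤ g r)
    (hpos : 0 < h a) : 0 < h b := by
  by_contra hb
  push_neg at hb
  set δ : ℝ := h a / 2 with hδdef
  have hδ : 0 < δ := by positivity
  set β : ℝ → ℝ := fun s => δ * Real.exp (-(2*K)*(s-a)) with hβdef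
  have hβpos : ∀ s, 0 < β s := fun s => by positivity
  have hβcont : Continuous β := by fun_prop
  have hβa : β a = δ := by simp [hβdef]
  have hβderiv : ∀ r : ℝ, HasDerivAt β (-(2*K) * β r) r := by
    intro r
    have h1 : HasDerivAt (fun s : ℝ => -(2*K)*(s-a)) (-(2*K)) r := by
      simpa using ((hasDerivAt_id r).sub_const a).const_mul (-(2*K))
    have h2 := (h1.exp).const_mul δ
    exact h2.congr_deriv (by
      show δ * (Real.exp (-(2*K)*(r-a)) * -(2*K)) = -(2*K) * (δ * Real.exp (-(2*K)*(r-a))); ring)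
  -- the touching set
  set Z : Set ℝ := Set.Icc a b ∩ (fun s => h s - β s) ⁻¹' Set.Iic 0 with hZdef
  have hbZ : b ∈ Z := by
    constructor
    · exact ⟨hab, le_refl b⟩
    · simp only [Set.mem_preimage, Set.mem_Iic]
      have := hβpos b; linarith
  have hZclosed : IsClosed Z :=
    (hcont.sub hβcont.continuousOn).preimage_isClosed_of_isClosed isClosed_Icc isClosed_Iic
  have hZbdd : BddBelow Z := (bddBelow_Icc (a := b) (b := a)).mono (Set.inter_subset_left)
  set τ : ℝ := sInf Z with hτdef
  have hτZ : τ ∈ Z := hZclosed.csInf_mem ⟨b, hbZ⟩ hZbdd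
  have hτIcc : τ ∈ Set.Icc a b := hτZ.1
  have hτβ : h τ ≤ β τ := by
    have := hτZ.2; simp only [Set.mem_preimage, Set.mem_Iic] at this; linarith
  have hτa : a < τ := by
    rcases lt_or_eq_of_le hτIcc.1 with h' | h'
    · exact h'
    · exfalso
      have : h a ≤ β a := h' ▸ hτβ
      rw [hβa] at this
      simp only [hδdef] at this; linarith
  have hpretau : ∀ r ∈ Set.Icc a b, r < τ → β r < h r := by
    intro r hr hrτ
    by_contra hcon
    push_neg at hcon
    have : r ∈ Z := ⟨hr, by simp only [Set.mem_preimage, Set.mem_Iic]; linarith⟩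
    exact absurd (csInf_le hZbdd this) (not_le.2 hrτ)
  -- the last time h is above 2β
  set S : Set ℝ := Set.Icc a τ ∩ (fun r => 2 * β r - h r) ⁻¹' Set.Iic 0 with hSdef
  have haS : a ∈ S := by
    refine ⟨⟨le_refl a, hτa.le⟩, ?_⟩
    simp only [Set.mem_preimage, Set.mem_Iic, hβa]
    simp only [hδdef]; linarith
  have hSclosed : IsClosed S := by
    have hsub : Set.Icc a τ ⊆ Set.Icc a b := Set.Icc_subset_Icc le_rfl hτIcc.2
    exact ((continuousOn_const.mul hβcont.continuousOn).sub (hcont.mono hsub)).preimage_isClosed_of_isClosed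
      isClosed_Icc isClosed_Iic
  have hSbdd : BddAbove S := (bddAbove_Icc (a := a) (b := τ)).mono (Set.inter_subset_left)
  set σ : ℝ := sSup S with hσdef
  have hσS : σ ∈ S := hSclosed.csSup_mem ⟨a, haS⟩ hSbdd
  have hσIcc : σ ∈ Set.Icc a τ := hσS.1
  have hσ2β : 2 * β σ ≤ h σ := by
    have := hσS.2; simp only [Set.mem_preimage, Set.mem_Iic] at this; linarith
  have hστ : σ < τ := by
    rcases lt_or_eq_of_le hσIcc.2 with h' | h'
    · exact h'
    · exfalso
      rw [h'] at hσ2β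
      have := hβpos τ; linarith
  have hmid : ∀ r ∈ Set.Ioc σ τ, h r ≤ 2 * β r := by
    intro r hr
    by_contra hcon
    push_neg at hcon
    have : r ∈ S := ⟨⟨hσIcc.1.trans hr.1.le, hr.2⟩, by
      simp only [Set.mem_preimage, Set.mem_Iic]; linarith⟩
    exact absurd (le_csSup hSbdd this) (not_le.2 hr.1)
  -- integral inequality
  have hIccσb : Set.Icc σ τ ⊆ Set.Icc a b :=
    Set.Icc_subset_Icc hσIcc.1 hτIcc.2
  have hintστ : IntervalIntegrable g volume σ τ := by
    apply hint.mono_set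
    rw [Set.uIcc_of_le hστ.le, Set.uIcc_of_le hab]
    exact hIccσb
  have heqστ : h τ - h σ = ∫ r in σ..τ, g r := by
    have h1 := heq τ hτIcc
    have h2 := heq σ (hIccσb ⟨le_refl σ, hστ.le⟩)
    have h3 : IntervalIntegrable g volume a τ := by
      apply hint.mono_set
      rw [Set.uIcc_of_le (hτIcc.1.trans hτIcc.2 : a ≤ b), Set.uIcc_of_le hτIcc.1]
      exact Set.Icc_subset_Icc le_rfl hτIcc.2
    have h4 : IntervalIntegrable g volume a σ := by
      apply hint.mono_set
      rw [Set.uIcc_of_le hab, Set.uIcc_of_le hσIcc.1]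
      exact Set.Icc_subset_Icc le_rfl (hσIcc.2.trans hτIcc.2)
    rw [h1, h2]
    rw [← intervalIntegral.integral_interval_sub_left h3 h4]
    ring
  have hβint : IntervalIntegrable (fun r => -(2*K) * β r) volume σ τ :=
    (hβcont.const_smul (-(2*K))).intervalIntegrable σ τ
  have hmono : (∫ r in σ..τ, -(2*K) * β r) ≤ ∫ r in σ..τ, g r := by
    rw [intervalIntegral.integral_of_le hστ.le, intervalIntegral.integral_of_le hστ.le]
    apply setIntegral_mono_on
    · rw [← intervalIntegrable_iff_integrableOn_Ioc_of_le hστ.le]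
      exact hβint
    · rw [← intervalIntegrable_iff_integrableOn_Ioc_of_le hστ.le]
      exact hintστ
    · exact measurableSet_Ioc
    · intro r hr
      have hr' : r ∈ Set.Icc a b := hIccσb ⟨hr.1.le, hr.2⟩
      have h1 := hlow r hr'
      have h2 := hmid r hr
      nlinarith [hβpos r]
  have hβcalc : (∫ r in σ..τ, -(2*K) * β r) = β τ - β σ := by
    rw [intervalIntegral.integral_eq_sub_of_hasDerivAt (fun r _ => hβderiv r) hβint]
  have : β σ + β τ ≤ h τ := by
    have := heqστ
    nlinarith [hβpos σ, hβpos τ]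
  have := hβpos σ
  linarith

lemma tridiag_aemeasurable_pi {N : ℕ} {f : ℝ → Fin N → ℝ} {μ : Measure ℝ}
    (h : ∀ i, AEMeasurable (fun r => f r i) μ) : AEMeasurable f μ := by
  choose g hg hfg using h
  refine ⟨fun r i => g i r, measurable_pi_lambda _ hg, ?_⟩
  filter_upwards [(ae_all_iff.2 hfg)] with r hr
  funext i
  exact hr i


set_option maxHeartbeats 1600000 in
/-- **Strong positivity for random tridiagonal Markov generators.** Let `Q` be a
measurable family of tridiagonal generators with off-diagonal entries in `[c, C]`
(`0 < c ≤ C`, `N ≥ 2`). Then for every `t > 0`, every nonzero componentwise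
nonnegative initial value `p₀`, and every Carathéodory solution `p` of
`p' = Q(t) p`, `p 0 = p₀`, the vector `p t` has all components strictly positive. -/
theorem tridiag_solution_pos {N : ℕ} (hN : 2 ≤ N)
    (c C : ℝ) (hc : 0 < c) (hcC : c ≤ C)
    (Q : ℝ → Matrix (Fin N) (Fin N) ℝ)
    (hQ : IsTridiagGenFamily N c C Q)
    (p₀ : Fin N → ℝ) (hp₀ : ∀ i, 0 ≤ p₀ i) (hp₀ne : p₀ ≠ 0)
    (p : ℝ → (Fin N → ℝ))
    (hpcont : ContinuousOn p (Set.Ici (0 : ℝ)))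
    (hpsol : ∀ s : ℝ, 0 ≤ s → p s = p₀ + ∫ r in (0 : ℝ)..s, (Q r).mulVec (p r))
    (t : ℝ) (ht : 0 < t) :
    ∀ i, 0 < p t i := by
  have hC : 0 < C := lt_of_lt_of_le hc hcC
  -- basic entry facts
  have hoff : ∀ (r : ℝ) (i j : Fin N), i ≠ j → 0 ≤ Q r i j ∧ Q r i j ≤ C := by
    intro r i j hij
    have hne : (i : ℕ) ≠ (j : ℕ) := fun h => hij (Fin.ext h)
    rcases Nat.lt_or_ge ((i : ℕ) + 1) ((j : ℕ) + 1) with h1 | h1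
    · rcases Nat.lt_or_ge ((i : ℕ) + 1) (j : ℕ) with h2 | h2
      · have := (hQ.2 r).1 i j (Or.inl (by omega))
        rw [this]; exact ⟨le_refl 0, hC.le⟩
      · have := (hQ.2 r).2.1 i j (Or.inl (by omega))
        exact ⟨hc.le.trans this.1, this.2⟩
    · rcases Nat.lt_or_ge ((j : ℕ) + 1) (i : ℕ) with h2 | h2
      · have := (hQ.2 r).1 i j (Or.inr (by omega))
        rw [this]; exact ⟨le_refl 0, hC.le⟩
      · have := (hQ.2 r).2.1 i j (Or.inr (by omega))
        exact ⟨hc.le.trans this.1, this.2⟩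
  have hdiag : ∀ (r : ℝ) (i : Fin N), -(N * C) ≤ Q r i i ∧ Q r i i ≤ 0 := by
    intro r i
    have hcol := (hQ.2 r).2.2 i
    have hsplit : (∑ j ∈ Finset.univ.erase i, Q r j i) + Q r i i = ∑ j, Q r j i :=
      Finset.sum_erase_add _ _ (Finset.mem_univ i)
    have h1 : Q r i i = -(∑ j ∈ Finset.univ.erase i, Q r j i) := by
      rw [hcol] at hsplit; linarith
    have h2 : 0 ≤ ∑ j ∈ Finset.univ.erase i, Q r j i :=
      Finset.sum_nonneg fun j hj => (hoff r j i (Finset.ne_of_mem_erase hj)).1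
    have h3 : (∑ j ∈ Finset.univ.erase i, Q r j i) ≤ (Finset.univ.erase i).card • C :=
      Finset.sum_le_card_nsmul _ _ C fun j hj => (hoff r j i (Finset.ne_of_mem_erase hj)).2
    have hcard : ((Finset.univ.erase i).card : ℝ) ≤ (N : ℝ) := by
      have : (Finset.univ.erase i).card ≤ N := by
        simpa using Finset.card_erase_le.trans (by simp)
      exact_mod_cast this
    rw [nsmul_eq_mul] at h3
    constructor
    · rw [h1]
      have : (∑ j ∈ Finset.univ.erase i, Q r j i) ≤ N * C := by
        calc (∑ j ∈ Finset.univ.erase i, Q r j i) ≤ ((Finset.univ.erase i).card : ℝ) * C := h3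
        _ ≤ N * C := by nlinarith
      linarith
    · rw [h1]; linarith
  have hQbdd : ∀ (r : ℝ) (i j : Fin N), |Q r i j| ≤ N * C := by
    intro r i j
    have hNC : (0:ℝ) ≤ N * C := by positivity
    have hCN : C ≤ N * C := by nlinarith [show (2:ℝ) ≤ N from by exact_mod_cast hN]
    rcases eq_or_ne i j with rfl | hij
    · have := hdiag r i
      rw [abs_le]; constructor <;> linarith
    · have := hoff r i j hij
      rw [abs_le]; constructor <;> linarith
  set G : Fin N → ℝ → ℝ := fun i r => ((Q r).mulVec (p r)) i with hGdef
  have hGsum : ∀ i r, G i r = ∑ j, Q r i j * p r j := by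
    intro i r
    simp [hGdef, Matrix.mulVec, dotProduct]
  -- integrability of components
  have hpm : ∀ (j : Fin N) {a b : ℝ}, 0 ≤ a →
      AEMeasurable (fun r => p r j) (volume.restrict (Set.Ioc a b)) := by
    intro j a b ha
    have hcont : ContinuousOn (fun r => p r j) (Set.Ioc a b) :=
      ((continuous_apply j).comp_continuousOn hpcont).mono
        (fun x hx => le_trans ha hx.1.le)
    exact hcont.aemeasurable measurableSet_Ioc
  have hbound : ∀ (a b : ℝ), 0 ≤ a → ∃ M : ℝ, 0 ≤ M ∧
      ∀ r ∈ Set.Icc a b, ∀ j, |p r j| ≤ M := by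
    intro a b ha
    obtain ⟨M, hM⟩ := (isCompact_Icc (a := a) (b := b)).exists_bound_of_continuousOn
      (hpcont.mono (fun x hx => le_trans ha hx.1))
    refine ⟨max M 0, le_max_right _ _, fun r hr j => ?_⟩
    calc |p r j| ≤ ‖p r‖ := by
          simpa [Real.norm_eq_abs] using norm_le_pi_norm (p r) j
    _ ≤ M := hM r hr
    _ ≤ max M 0 := le_max_left _ _
  have hGint : ∀ (i : Fin N) (a b : ℝ), 0 ≤ a → a ≤ b →
      IntegrableOn (G i) (Set.Ioc a b) volume := by
    intro i a b ha hab
    obtain ⟨M, hM0, hM⟩ := hbound a b ha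
    have hmeas : AEMeasurable (G i) (volume.restrict (Set.Ioc a b)) := by
      have : G i = fun r => ∑ j, Q r i j * p r j := funext fun r => hGsum i r
      rw [this]
      exact Finset.aemeasurable_fun_sum _ fun j _ =>
        ((hQ.1 i j).aemeasurable).mul (hpm j ha)
    refine Integrable.mono' (g := fun _ => (N : ℝ) * ((N * C) * M))
      (integrableOn_const measure_Ioc_lt_top.ne) hmeas.aestronglyMeasurable ?_
    filter_upwards [ae_restrict_mem measurableSet_Ioc] with r hr
    rw [Real.norm_eq_abs, hGsum]
    calc |∑ j, Q r i j * p r j| ≤ ∑ j, |Q r i j * p r j| := Finset.abs_sum_le_sum_abs _ _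
    _ ≤ ∑ _j : Fin N, (N * C) * M := by
        apply Finset.sum_le_sum
        intro j _
        rw [abs_mul]
        exact mul_le_mul (hQbdd r i j) (hM r ⟨hr.1.le, hr.2⟩ j) (abs_nonneg _)
          (by positivity)
    _ = (N : ℝ) * ((N * C) * M) := by simp [Finset.sum_const, mul_comm]
  have hGii : ∀ (i : Fin N) (a b : ℝ), 0 ≤ a → a ≤ b →
      IntervalIntegrable (G i) volume a b := by
    intro i a b ha hab
    exact (intervalIntegrable_iff_integrableOn_Ioc_of_le hab).2 (hGint i a b ha hab)
  -- vector integrability and the component equation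
  have hvecint : ∀ s : ℝ, 0 ≤ s →
      IntervalIntegrable (fun r => (Q r).mulVec (p r)) volume 0 s := by
    intro s hs
    rw [intervalIntegrable_iff_integrableOn_Ioc_of_le hs]
    obtain ⟨M, hM0, hM⟩ := hbound 0 s (le_refl 0)
    have hmeas : AEMeasurable (fun r => (Q r).mulVec (p r))
        (volume.restrict (Set.Ioc (0:ℝ) s)) := by
      apply tridiag_aemeasurable_pi
      intro i
      have : (fun r => (Q r).mulVec (p r) i) = G i := rfl
      rw [this]
      have : G i = fun r => ∑ j, Q r i j * p r j := funext fun r => hGsum i r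
      rw [this]
      exact Finset.aemeasurable_fun_sum _ fun j _ =>
        ((hQ.1 i j).aemeasurable).mul (hpm j (le_refl 0))
    refine Integrable.mono' (g := fun _ => (N : ℝ) * ((N * C) * M))
      (integrableOn_const measure_Ioc_lt_top.ne) hmeas.aestronglyMeasurable ?_
    filter_upwards [ae_restrict_mem measurableSet_Ioc] with r hr
    rw [pi_norm_le_iff_of_nonneg (by positivity)]
    intro i
    rw [Real.norm_eq_abs]
    have : ((Q r).mulVec (p r)) i = G i r := rfl
    rw [this, hGsum]
    calc |∑ j, Q r i j * p r j| ≤ ∑ j, |Q r i j * p r j| := Finset.abs_sum_le_sum_abs _ _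
    _ ≤ ∑ _j : Fin N, (N * C) * M := by
        apply Finset.sum_le_sum
        intro j _
        rw [abs_mul]
        exact mul_le_mul (hQbdd r i j) (hM r ⟨hr.1.le, hr.2⟩ j) (abs_nonneg _)
          (by positivity)
    _ = (N : ℝ) * ((N * C) * M) := by simp [Finset.sum_const, mul_comm]
  have hcomp : ∀ (i : Fin N) (s : ℝ), 0 ≤ s →
      p s i = p₀ i + ∫ r in (0:ℝ)..s, G i r := by
    intro i s hs
    have h1 := congrFun (hpsol s hs) i
    rw [Pi.add_apply] at h1
    have h2 := (ContinuousLinearMap.proj (R := ℝ) (φ := fun _ : Fin N => ℝ) i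
      ).intervalIntegral_comp_comm (hvecint s hs)
    simp only [ContinuousLinearMap.proj_apply] at h2
    rw [h1, ← h2]
  have hp0 : p 0 = p₀ := by
    have := hpsol 0 (le_refl 0)
    simpa using this
  obtain ⟨K, hK, hNCK⟩ : ∃ K : ℝ, 0 < K ∧ (N : ℝ) * C < K :=
    ⟨(N : ℝ) * C + 1, by positivity, by linarith [mul_nonneg (Nat.cast_nonneg N) hC.le]⟩
  -- nonnegativity of the solution
  have hclaim : ∀ T : ℝ, 0 ≤ T → ∀ ε : ℝ, 0 < ε →
      ∀ s ∈ Set.Icc (0:ℝ) T, ∀ i, -(ε * Real.exp (K * s)) < p s i := by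
    intro T hT ε hε
    by_contra hcon
    push_neg at hcon
    obtain ⟨s₁, hs₁, i₁, hi₁⟩ := hcon
    set Z : Set ℝ := ⋃ i : Fin N,
      (Set.Icc (0:ℝ) T ∩ (fun s => p s i + ε * Real.exp (K * s)) ⁻¹' Set.Iic 0) with hZdef
    have hZclosed : IsClosed Z := by
      apply isClosed_iUnion_of_finite
      intro i
      have hconti : ContinuousOn (fun s => p s i + ε * Real.exp (K * s)) (Set.Icc (0:ℝ) T) :=
        (((continuous_apply i).comp_continuousOn hpcont).mono
          (fun x hx => hx.1)).add (by fun_prop)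
      exact hconti.preimage_isClosed_of_isClosed isClosed_Icc isClosed_Iic
    have hZne : Z.Nonempty := by
      refine ⟨s₁, Set.mem_iUnion.2 ⟨i₁, hs₁, ?_⟩⟩
      simp only [Set.mem_preimage, Set.mem_Iic]
      linarith
    have hZbdd : BddBelow Z := by
      refine ⟨0, fun z hz => ?_⟩
      obtain ⟨i, hi⟩ := Set.mem_iUnion.1 hz
      exact hi.1.1
    set τ : ℝ := sInf Z with hτdef
    have hτZ : τ ∈ Z := hZclosed.csInf_mem hZne hZbdd
    obtain ⟨i, hτi⟩ := Set.mem_iUnion.1 hτZ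
    have hτIcc : τ ∈ Set.Icc (0:ℝ) T := hτi.1
    have hτle : p τ i ≤ -(ε * Real.exp (K * τ)) := by
      have := hτi.2
      simp only [Set.mem_preimage, Set.mem_Iic] at this
      linarith
    have hτpos : 0 < τ := by
      rcases lt_or_eq_of_le hτIcc.1 with h' | h'
      · exact h'
      · exfalso
        rw [← h'] at hτle
        rw [hp0] at hτle
        have := hp₀ i
        have := Real.exp_pos (K * 0)
        nlinarith
    have hpre : ∀ r ∈ Set.Icc (0:ℝ) T, r < τ → ∀ j, -(ε * Real.exp (K * r)) < p r j := by
      intro r hr hrτ j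
      by_contra hcon2
      push_neg at hcon2
      have : r ∈ Z := Set.mem_iUnion.2 ⟨j, hr, by
        simp only [Set.mem_preimage, Set.mem_Iic]; linarith⟩
      exact absurd (csInf_le hZbdd this) (not_le.2 hrτ)
    -- last time component i was nonnegative
    set S : Set ℝ := Set.Icc (0:ℝ) τ ∩ (fun r => -(p r i)) ⁻¹' Set.Iic 0 with hSdef
    have h0S : (0:ℝ) ∈ S := by
      refine ⟨⟨le_refl 0, hτpos.le⟩, ?_⟩
      simp only [Set.mem_preimage, Set.mem_Iic, hp0]
      have := hp₀ i; linarith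
    have hSclosed : IsClosed S := by
      have hconti : ContinuousOn (fun r => -(p r i)) (Set.Icc (0:ℝ) τ) :=
        (((continuous_apply i).comp_continuousOn hpcont).mono (fun x hx => hx.1)).neg
      exact hconti.preimage_isClosed_of_isClosed isClosed_Icc isClosed_Iic
    have hSbdd : BddAbove S := (bddAbove_Icc (a := (0:ℝ)) (b := τ)).mono Set.inter_subset_left
    set σ : ℝ := sSup S with hσdef
    have hσS : σ ∈ S := hSclosed.csSup_mem ⟨0, h0S⟩ hSbdd
    have hσIcc : σ ∈ Set.Icc (0:ℝ) τ := hσS.1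
    have hσnon : 0 ≤ p σ i := by
      have := hσS.2; simp only [Set.mem_preimage, Set.mem_Iic] at this; linarith
    have hστ : σ < τ := by
      rcases lt_or_eq_of_le hσIcc.2 with h' | h'
      · exact h'
      · exfalso
        rw [h'] at hσnon
        have := Real.exp_pos (K * τ)
        nlinarith
    have hneg : ∀ r ∈ Set.Ioc σ τ, p r i ≤ 0 := by
      intro r hr
      rcases lt_or_eq_of_le hr.2 with h' | h'
      · by_contra hcon2
        push_neg at hcon2
        have : r ∈ S := ⟨⟨hσIcc.1.trans hr.1.le, hr.2⟩, by
          simp only [Set.mem_preimage, Set.mem_Iic]; linarith⟩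
        exact absurd (le_csSup hSbdd this) (not_le.2 hr.1)
      · rw [h']
        have := Real.exp_pos (K * τ)
        nlinarith
    -- pointwise lower bound on the integrand
    have hGlow : ∀ r ∈ Set.Ioo σ τ, -((N:ℝ) * C * ε * Real.exp (K * r)) ≤ G i r := by
      intro r hr
      have hr0 : 0 ≤ r := hσIcc.1.trans hr.1.le
      have hrT : r ∈ Set.Icc (0:ℝ) T := ⟨hr0, hr.2.le.trans hτIcc.2⟩
      have hbar : ∀ j, -(ε * Real.exp (K * r)) ≤ p r j := fun j =>
        (hpre r hrT hr.2 j).le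
      have hri : p r i ≤ 0 := hneg r ⟨hr.1, hr.2.le⟩
      rw [hGsum]
      have hsplit : (∑ j ∈ Finset.univ.erase i, Q r i j * p r j) + Q r i i * p r i
          = ∑ j, Q r i j * p r j :=
        Finset.sum_erase_add _ _ (Finset.mem_univ i)
      have hdterm : 0 ≤ Q r i i * p r i :=
        mul_nonneg_of_nonpos_of_nonpos (hdiag r i).2 hri
      have hoterm : ∀ j ∈ Finset.univ.erase i,
          -(C * (ε * Real.exp (K * r))) ≤ Q r i j * p r j := by
        intro j hj
        have hj' := hoff r i j (Finset.ne_of_mem_erase hj).symm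
        have h1 : Q r i j * (-(ε * Real.exp (K * r))) ≤ Q r i j * p r j :=
          mul_le_mul_of_nonneg_left (hbar j) hj'.1
        have hx : (0:ℝ) ≤ ε * Real.exp (K * r) := by positivity
        nlinarith
      have hosum : -(((Finset.univ.erase i).card : ℝ) * (C * (ε * Real.exp (K * r))))
          ≤ ∑ j ∈ Finset.univ.erase i, Q r i j * p r j := by
        have := Finset.card_nsmul_le_sum (Finset.univ.erase i)
          (fun j => Q r i j * p r j) (-(C * (ε * Real.exp (K * r)))) hoterm
        rw [nsmul_eq_mul] at this
        linarith
      have hcard : ((Finset.univ.erase i).card : ℝ) ≤ (N : ℝ) := by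
        have : (Finset.univ.erase i).card ≤ N := by
          simpa using Finset.card_erase_le.trans (by simp)
        exact_mod_cast this
      have hx : (0:ℝ) ≤ C * (ε * Real.exp (K * r)) := by positivity
      nlinarith
    -- integrate
    have heqστ : p τ i - p σ i = ∫ r in σ..τ, G i r := by
      rw [hcomp i τ hτIcc.1, hcomp i σ hσIcc.1]
      rw [← intervalIntegral.integral_interval_sub_left
        (hGii i 0 τ (le_refl 0) hτIcc.1) (hGii i 0 σ (le_refl 0) hσIcc.1)]
      ring
    have hlowint : IntervalIntegrable (fun r => -((N:ℝ) * C * ε * Real.exp (K * r)))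
        volume σ τ := (Continuous.intervalIntegrable (by fun_prop) σ τ)
    have hmono : (∫ r in σ..τ, -((N:ℝ) * C * ε * Real.exp (K * r))) ≤ ∫ r in σ..τ, G i r := by
      rw [intervalIntegral.integral_of_le hστ.le, intervalIntegral.integral_of_le hστ.le,
        integral_Ioc_eq_integral_Ioo, integral_Ioc_eq_integral_Ioo]
      apply setIntegral_mono_on
      · exact ((intervalIntegrable_iff_integrableOn_Ioc_of_le hστ.le).1 hlowint).mono_set
          Set.Ioo_subset_Ioc_self
      · exact (hGint i σ τ hσIcc.1 hστ.le).mono_set Set.Ioo_subset_Ioc_self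
      · exact measurableSet_Ioo
      · exact hGlow
    have hcalc : (∫ r in σ..τ, -((N:ℝ) * C * ε * Real.exp (K * r)))
        = -((N:ℝ) * C * ε / K * (Real.exp (K * τ) - Real.exp (K * σ))) := by
      have hderiv : ∀ r : ℝ, HasDerivAt (fun x => -((N:ℝ) * C * ε / K * Real.exp (K * x)))
          (-((N:ℝ) * C * ε * Real.exp (K * r))) r := by
        intro r
        have h1 : HasDerivAt (fun x : ℝ => K * x) K r := by
          simpa using (hasDerivAt_id r).const_mul K
        have h2 : HasDerivAt (fun x : ℝ => -((N:ℝ)*C*ε/K * Real.exp (K*x)))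
            (-((N:ℝ)*C*ε/K) * (Real.exp (K*r) * K)) r := by
          simpa [neg_mul] using (h1.exp.const_mul (-((N:ℝ)*C*ε/K)))
        have h3 : -((N:ℝ)*C*ε/K) * (Real.exp (K*r)*K) = -((N:ℝ)*C*ε*Real.exp (K*r)) := by
          rw [show -((N:ℝ)*C*ε/K) * (Real.exp (K*r)*K)
            = -(((N:ℝ)*C*ε/K*K)*Real.exp (K*r)) by ring, div_mul_cancel₀ _ hK.ne']
        exact h3 ▸ h2
      rw [intervalIntegral.integral_eq_sub_of_hasDerivAt (fun r _ => hderiv r) hlowint]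
      ring
    have hfinal : -(ε * Real.exp (K * τ)) < p τ i := by
      have h1 : p τ i ≥ p σ i - (N:ℝ) * C * ε / K * (Real.exp (K * τ) - Real.exp (K * σ)) := by
        rw [hcalc] at hmono
        linarith [heqστ, hmono]
      have h2 : (0:ℝ) < Real.exp (K * σ) := Real.exp_pos _
      have h3 : (0:ℝ) < Real.exp (K * τ) := Real.exp_pos _
      have h4 : (N:ℝ) * C * ε / K < ε := by
        rw [div_lt_iff₀ hK]
        have := mul_lt_mul_of_pos_left hNCK hε
        linarith
      have h5 : (0:ℝ) ≤ (N:ℝ) * C * ε / K := by positivity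
      have h6 : (N:ℝ)*C*ε/K*(Real.exp (K*τ) - Real.exp (K*σ))
          ≤ (N:ℝ)*C*ε/K*Real.exp (K*τ) :=
        mul_le_mul_of_nonneg_left (by linarith) h5
      have h7 : (N:ℝ)*C*ε/K*Real.exp (K*τ) < ε*Real.exp (K*τ) :=
        mul_lt_mul_of_pos_right h4 h3
      linarith
    linarith
  have hnonneg : ∀ s : ℝ, 0 ≤ s → ∀ i, 0 ≤ p s i := by
    intro s hs i
    by_contra hcon
    push_neg at hcon
    have hexp : (0:ℝ) < Real.exp (K * s) := Real.exp_pos _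
    have hε : 0 < -(p s i) / (2 * Real.exp (K * s)) :=
      div_pos (by linarith) (by positivity)
    have h1 := hclaim s hs _ hε s ⟨hs, le_refl s⟩ i
    have h2 : (-(p s i) / (2 * Real.exp (K * s))) * Real.exp (K * s) = -(p s i) / 2 := by
      rw [div_mul_eq_mul_div, mul_comm (2:ℝ) (Real.exp (K * s)), ← div_div,
        mul_div_assoc, div_self hexp.ne', mul_one]
    rw [h2] at h1
    linarith
  -- persistence of positivity for a single component
  have hpersist : ∀ (i : Fin N) (a b : ℝ), 0 ≤ a → a ≤ b → 0 < p a i → 0 < p b i := by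
    intro i a b ha hab hpa
    refine tridiag_persist (K := K) (h := fun x => p x i) (g := G i) hK hab ?_ ?_ ?_ ?_ hpa
    · exact ((continuous_apply i).comp_continuousOn hpcont).mono
        (fun x hx => le_trans ha hx.1)
    · intro s hs
      show p s i = p a i + ∫ r in a..s, G i r
      rw [hcomp i s (ha.trans hs.1), hcomp i a ha,
        ← intervalIntegral.integral_interval_sub_left
          (hGii i 0 s (le_refl 0) (ha.trans hs.1)) (hGii i 0 a (le_refl 0) ha)]
      ring
    · exact hGii i a b ha hab
    · intro r hr
      have hr0 : 0 ≤ r := ha.trans hr.1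
      show -(K * p r i) ≤ G i r
      rw [hGsum]
      have hsplit : (∑ j ∈ Finset.univ.erase i, Q r i j * p r j) + Q r i i * p r i
          = ∑ j, Q r i j * p r j := Finset.sum_erase_add _ _ (Finset.mem_univ i)
      have h2 : 0 ≤ ∑ j ∈ Finset.univ.erase i, Q r i j * p r j :=
        Finset.sum_nonneg fun j hj =>
          mul_nonneg (hoff r i j (Finset.ne_of_mem_erase hj).symm).1 (hnonneg r hr0 j)
      have hp := hnonneg r hr0 i
      have h3 : -(K * p r i) ≤ Q r i i * p r i := by
        have hx := mul_nonneg (show (0:ℝ) ≤ Q r i i + K by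
          have := (hdiag r i).1; linarith) hp
        have hy : (Q r i i + K) * p r i = Q r i i * p r i + K * p r i := by ring
        linarith
      linarith
  obtain ⟨i₀, hi₀⟩ : ∃ i₀, 0 < p₀ i₀ := by
    by_contra hcon
    push_neg at hcon
    exact hp₀ne (funext fun i => le_antisymm (hcon i) (hp₀ i))
  have hbase : ∀ s : ℝ, 0 < s → 0 < p s i₀ := fun s hs =>
    hpersist i₀ 0 s (le_refl 0) hs.le (by rw [hp0]; exact hi₀)
  have hstep : ∀ i j : Fin N, ((i:ℕ) + 1 = (j:ℕ) ∨ (j:ℕ) + 1 = (i:ℕ)) →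
      (∀ s : ℝ, 0 < s → 0 < p s j) → ∀ s : ℝ, 0 < s → 0 < p s i := by
    intro i j hadj hPj s hs
    have hex : ∃ σ, σ ∈ Set.Ioc (0:ℝ) s ∧ 0 < p σ i := by
      by_contra hcon
      push_neg at hcon
      have hzero : ∀ r ∈ Set.Ioc (0:ℝ) s, p r i = 0 := fun r hr =>
        le_antisymm (hcon r hr) (hnonneg r hr.1.le i)
      have h1 := hcomp i s hs.le
      have h2 : p s i = 0 := hzero s ⟨hs, le_refl s⟩
      have hlow : ∀ r ∈ Set.Ioc (0:ℝ) s, c * p r j ≤ G i r := by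
        intro r hr
        rw [hGsum]
        have hsplit : (∑ k ∈ Finset.univ.erase j, Q r i k * p r k) + Q r i j * p r j
            = ∑ k, Q r i k * p r k := Finset.sum_erase_add _ _ (Finset.mem_univ j)
        have hrest : 0 ≤ ∑ k ∈ Finset.univ.erase j, Q r i k * p r k := by
          apply Finset.sum_nonneg
          intro k hk
          rcases eq_or_ne k i with rfl | hki
          · rw [hzero r hr]; simp
          · exact mul_nonneg (hoff r i k hki.symm).1 (hnonneg r hr.1.le k)
        have hQij : c ≤ Q r i j := ((hQ.2 r).2.1 i j hadj).1
        have := mul_le_mul_of_nonneg_right hQij (hnonneg r hr.1.le j)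
        linarith
      have hcpj : IntervalIntegrable (fun r => c * p r j) volume 0 s := by
        apply ContinuousOn.intervalIntegrable
        rw [Set.uIcc_of_le hs.le]
        exact continuousOn_const.mul (((continuous_apply j).comp_continuousOn hpcont).mono
          (fun x hx => hx.1))
      have hmono2 : (∫ r in (0:ℝ)..s, c * p r j) ≤ ∫ r in (0:ℝ)..s, G i r := by
        rw [intervalIntegral.integral_of_le hs.le, intervalIntegral.integral_of_le hs.le]
        apply setIntegral_mono_on
        · exact (intervalIntegrable_iff_integrableOn_Ioc_of_le hs.le).1 hcpj
        · exact hGint i 0 s (le_refl 0) hs.le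
        · exact measurableSet_Ioc
        · exact hlow
      have hpos2 : 0 < ∫ r in (0:ℝ)..s, c * p r j :=
        intervalIntegral.intervalIntegral_pos_of_pos_on hcpj
          (fun r hr => mul_pos hc (hPj r hr.1)) hs
      have hp0i : 0 ≤ p₀ i := hp₀ i
      linarith
    obtain ⟨σ, hσmem, hσpos⟩ := hex
    exact hpersist i σ s hσmem.1.le hσmem.2 hσpos
  have hchain : ∀ n : ℕ, ∀ i : Fin N, ((i:ℕ) = (i₀:ℕ) + n ∨ (i₀:ℕ) = (i:ℕ) + n) →
      ∀ s : ℝ, 0 < s → 0 < p s i := by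
    intro n
    induction n with
    | zero =>
      intro i hi
      have : i = i₀ := Fin.ext (by omega)
      rw [this]; exact hbase
    | succ n ih =>
      intro i hi
      rcases hi with hi | hi
      · have hjlt : (i₀:ℕ) + n < N := by have := i.isLt; omega
        exact hstep i ⟨(i₀:ℕ) + n, hjlt⟩ (Or.inr (by simp; omega))
          (ih _ (Or.inl (by simp)))
      · have hjlt : (i:ℕ) + 1 < N := by have := i₀.isLt; omega
        exact hstep i ⟨(i:ℕ) + 1, hjlt⟩ (Or.inl (by simp))
          (ih _ (Or.inr (by simp; omega)))
  intro i
  rcases le_total (i:ℕ) (i₀:ℕ) with h | h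
  · exact hchain ((i₀:ℕ) - (i:ℕ)) i (Or.inr (by omega)) t ht
  · exact hchain ((i:ℕ) - (i₀:ℕ)) i (Or.inl (by omega)) t ht
end

section
/- Fix constants 0 < c ≤ C and N ≥ 2. There exists δ = δ(c, C, N) > 0 with the following uniform dissipativity property: for every measurable family Q : ℝ → M_N(ℝ) of tridiagonal generators with off-diagonal entries in [c, C], every p₀ ∈ Σ_N, and every continuous p : [0,∞) → ℝ^N satisfying p(s) = p₀ + ∫₀ˢ Q(r) p(r) dr for all s ≥ 0, every component of p(1) is at least δ (and p(1) ∈ Σ_N). -/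
open MeasureTheory

lemma gron_comp (K b β t T : ℝ) (hK : 0 < K) (w : ℝ → ℝ)
    (hw : ContinuousOn w (Set.Icc t T))
    (hβ : β ≤ w t) (htT : t ≤ T)
    (hineq : ∀ s₁ s₂, t ≤ s₁ → s₁ ≤ s₂ → s₂ ≤ T →
      w s₁ - K * (∫ r in s₁..s₂, w r) + b * (s₂ - s₁) ≤ w s₂) :
    ∀ s, t ≤ s → s ≤ T → (β - b / K) * Real.exp (K * (t - s)) + b / K ≤ w s := by
  intro s₀ hts₀ hs₀T
  by_contra hcon
  push_neg at hcon
  set ψ : ℝ → ℝ := fun r => (β - b / K) * Real.exp (K * (t - r)) + b / K with hψdef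
  have hψt : ψ t = β := by simp [hψdef]
  have hψcont : Continuous ψ := by fun_prop
  have hψderiv : ∀ r : ℝ, HasDerivAt ψ (b - K * ψ r) r := by
    intro r
    have h1 : HasDerivAt (fun r : ℝ => K * (t - r)) (-K) r := by
      simpa using ((hasDerivAt_id r).const_sub t).const_mul K
    have h2 := (h1.exp.const_mul (β - b / K)).add_const (b / K)
    refine h2.congr_deriv ?_
    rw [hψdef]
    field_simp
    ring
  -- crossing set
  set S : Set ℝ := {r ∈ Set.Icc t s₀ | ψ r ≤ w r} with hSdef
  have hwc : ContinuousOn w (Set.Icc t s₀) := hw.mono (Set.Icc_subset_Icc le_rfl hs₀T)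
  have hScl : IsClosed S := by
    have : S = Set.Icc t s₀ ∩ (fun r => w r - ψ r) ⁻¹' Set.Ici 0 := by
      ext r; simp [hSdef, sub_nonneg, and_comm]
    rw [this]
    exact ContinuousOn.preimage_isClosed_of_isClosed
      (hwc.sub hψcont.continuousOn) isClosed_Icc isClosed_Ici
  have hScomp : IsCompact S :=
    isCompact_Icc.of_isClosed_subset hScl (fun r hr => hr.1)
  have htS : t ∈ S := ⟨⟨le_rfl, hts₀⟩, by rw [hψt]; exact hβ⟩
  set t₁ := sSup S with ht₁def
  have ht₁S : t₁ ∈ S := hScomp.sSup_mem ⟨t, htS⟩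
  have hbdd : BddAbove S := hScomp.bddAbove
  have hlt : ∀ r, t₁ < r → r ≤ s₀ → w r < ψ r := by
    intro r h1 h2
    by_contra h
    push_neg at h
    have hrS : r ∈ S := ⟨⟨le_trans ht₁S.1.1 h1.le, h2⟩, h⟩
    exact absurd (le_csSup hbdd hrS) (not_le.2 h1)
  have ht₁s₀ : t₁ < s₀ := by
    rcases lt_or_eq_of_le ht₁S.1.2 with h | h
    · exact h
    · exact absurd (h ▸ ht₁S.2) (not_le.2 hcon)
  -- integrals
  have hwint : IntervalIntegrable w volume t₁ s₀ := by
    apply ContinuousOn.intervalIntegrable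
    apply hwc.mono
    rw [Set.uIcc_of_le ht₁s₀.le]
    exact Set.Icc_subset_Icc ht₁S.1.1 le_rfl
  have hψint : IntervalIntegrable ψ volume t₁ s₀ := hψcont.intervalIntegrable _ _
  have hmono : (∫ r in t₁..s₀, w r) ≤ ∫ r in t₁..s₀, ψ r := by
    rw [intervalIntegral.integral_of_le ht₁s₀.le, intervalIntegral.integral_of_le ht₁s₀.le]
    apply setIntegral_mono_on ((intervalIntegrable_iff_integrableOn_Ioc_of_le ht₁s₀.le).1 hwint)
      ((intervalIntegrable_iff_integrableOn_Ioc_of_le ht₁s₀.le).1 hψint) measurableSet_Ioc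
    intro r hr
    exact (hlt r hr.1 hr.2).le
  have hFTC : (∫ r in t₁..s₀, (b - K * ψ r)) = ψ s₀ - ψ t₁ := by
    apply intervalIntegral.integral_eq_sub_of_hasDerivAt
    · intro r _; exact hψderiv r
    · exact ((continuous_const.sub (continuous_const.mul hψcont)).intervalIntegrable _ _)
  have hsplit : (∫ r in t₁..s₀, (b - K * ψ r)) = b * (s₀ - t₁) - K * ∫ r in t₁..s₀, ψ r := by
    rw [intervalIntegral.integral_sub (intervalIntegrable_const) (hψint.const_mul K),
      intervalIntegral.integral_const, intervalIntegral.integral_const_mul]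
    simp [mul_comm]
  have hkey := hineq t₁ s₀ ht₁S.1.1 ht₁s₀.le hs₀T
  have h1 : ψ t₁ ≤ w t₁ := ht₁S.2
  have h2 : K * (∫ r in t₁..s₀, w r) ≤ K * ∫ r in t₁..s₀, ψ r :=
    mul_le_mul_of_nonneg_left hmono hK.le
  have h3 : w s₀ < ψ s₀ := hcon
  linarith

lemma gron_zero (K T : ℝ) (hK : 0 < K) (E : ℝ → ℝ)
    (hE : ContinuousOn E (Set.Icc 0 T))
    (h : ∀ s, 0 ≤ s → s ≤ T → E s ≤ K * ∫ r in (0:ℝ)..s, E r) :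
    ∀ s, 0 ≤ s → s ≤ T → E s ≤ 0 := by
  intro s₀ hs₀ hs₀T
  by_contra hcon
  push_neg at hcon
  set ε : ℝ := E s₀ * Real.exp (-(K * s₀)) / 2 with hεdef
  have hεpos : 0 < ε := by positivity
  set ψ : ℝ → ℝ := fun r => ε * Real.exp (K * r) with hψdef
  have hψcont : Continuous ψ := by fun_prop
  have hψderiv : ∀ r : ℝ, HasDerivAt (fun u => ψ u / K) (ψ r) r := by
    intro r
    have h1 : HasDerivAt (fun r : ℝ => K * r) K r := by
      simpa using (hasDerivAt_id r).const_mul K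
    have h2 := (h1.exp.const_mul ε).div_const K
    refine h2.congr_deriv ?_
    rw [hψdef]
    field_simp
  have hψs₀ : ψ s₀ < E s₀ := by
    rw [hψdef]
    simp only [hεdef]
    rw [div_mul_eq_mul_div, mul_assoc, ← Real.exp_add]
    simp only [neg_add_cancel, Real.exp_zero, mul_one]
    linarith
  have hEc : ContinuousOn E (Set.Icc 0 s₀) := hE.mono (Set.Icc_subset_Icc le_rfl hs₀T)
  set S : Set ℝ := {r ∈ Set.Icc 0 s₀ | ψ r ≤ E r} with hSdef
  have hScl : IsClosed S := by
    have : S = Set.Icc 0 s₀ ∩ (fun r => E r - ψ r) ⁻¹' Set.Ici 0 := by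
      ext r; simp [hSdef, sub_nonneg, and_comm]
    rw [this]
    exact ContinuousOn.preimage_isClosed_of_isClosed
      (hEc.sub hψcont.continuousOn) isClosed_Icc isClosed_Ici
  have hScomp : IsCompact S :=
    isCompact_Icc.of_isClosed_subset hScl (fun r hr => hr.1)
  have hs₀S : s₀ ∈ S := ⟨⟨hs₀, le_rfl⟩, hψs₀.le⟩
  set t₁ := sInf S with ht₁def
  have ht₁S : t₁ ∈ S := hScomp.sInf_mem ⟨s₀, hs₀S⟩
  have hbdd : BddBelow S := hScomp.bddBelow
  have hlt : ∀ r, 0 ≤ r → r < t₁ → E r < ψ r := by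
    intro r h0 h1
    by_contra hcontra
    push_neg at hcontra
    have hrS : r ∈ S := ⟨⟨h0, le_trans h1.le ht₁S.1.2⟩, hcontra⟩
    exact absurd (csInf_le hbdd hrS) (not_le.2 h1)
  have ht₁pos : 0 < t₁ := by
    rcases lt_or_eq_of_le ht₁S.1.1 with hlt0 | heq
    · exact hlt0
    · exfalso
      have hE0 : E 0 ≤ 0 := by simpa using h 0 le_rfl (le_trans hs₀ hs₀T)
      have hh2 : ψ 0 ≤ E 0 := by rw [heq]; exact ht₁S.2
      have hh3 : ψ 0 = ε := by simp [hψdef]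
      linarith
  -- integrability
  have hEint : IntervalIntegrable E volume 0 t₁ := by
    apply ContinuousOn.intervalIntegrable
    apply hEc.mono
    rw [Set.uIcc_of_le ht₁S.1.1]
    exact Set.Icc_subset_Icc le_rfl ht₁S.1.2
  have hψint : IntervalIntegrable ψ volume 0 t₁ := hψcont.intervalIntegrable _ _
  have hmono : (∫ r in (0:ℝ)..t₁, E r) ≤ ∫ r in (0:ℝ)..t₁, ψ r := by
    rw [intervalIntegral.integral_of_le ht₁pos.le, intervalIntegral.integral_of_le ht₁pos.le,
      integral_Ioc_eq_integral_Ioo, integral_Ioc_eq_integral_Ioo]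
    apply setIntegral_mono_on
      (((intervalIntegrable_iff_integrableOn_Ioc_of_le ht₁pos.le).1 hEint).mono_set Set.Ioo_subset_Ioc_self)
      (((intervalIntegrable_iff_integrableOn_Ioc_of_le ht₁pos.le).1 hψint).mono_set Set.Ioo_subset_Ioc_self)
      measurableSet_Ioo
    intro r hr
    exact (hlt r hr.1.le hr.2).le
  have hFTC : (∫ r in (0:ℝ)..t₁, ψ r) = ψ t₁ / K - ψ 0 / K :=
    intervalIntegral.integral_eq_sub_of_hasDerivAt (f := fun u => ψ u / K)
      (fun r _ => hψderiv r) hψint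
  have hψ0 : ψ 0 = ε := by rw [hψdef]; simp
  have hkey := h t₁ ht₁pos.le (le_trans ht₁S.1.2 hs₀T)
  have h2 : K * (∫ r in (0:ℝ)..t₁, E r) ≤ K * ∫ r in (0:ℝ)..t₁, ψ r :=
    mul_le_mul_of_nonneg_left hmono hK.le
  have h3 : K * (∫ r in (0:ℝ)..t₁, ψ r) = ψ t₁ - ε := by
    rw [hFTC, hψ0]; field_simp
  have h4 : ψ t₁ ≤ E t₁ := ht₁S.2
  linarith



set_option maxHeartbeats 1000000 in
/-- **Uniform dissipativity.** Fix `0 < c ≤ C` and `N ≥ 2`. There is `δ > 0` such that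
for every measurable family `Q` of tridiagonal generators with off-diagonal entries in
`[c, C]`, every `p₀ ∈ Σ_N`, and every Carathéodory solution `p` of `p' = Q(t) p`,
`p 0 = p₀`, all components of `p 1` are at least `δ`, and `p 1 ∈ Σ_N`. -/
theorem tridiag_uniform_dissipative {N : ℕ} (hN : 2 ≤ N)
    (c C : ℝ) (hc : 0 < c) (hcC : c ≤ C) :
    ∃ δ > (0 : ℝ),
      ∀ Q : ℝ → Matrix (Fin N) (Fin N) ℝ, IsTridiagGenFamily N c C Q →
      ∀ p₀ ∈ probSimplex N,
      ∀ p : ℝ → (Fin N → ℝ), ContinuousOn p (Set.Ici (0 : ℝ)) →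
        (∀ s : ℝ, 0 ≤ s → p s = p₀ + ∫ r in (0 : ℝ)..s, (Q r).mulVec (p r)) →
        (∀ i, δ ≤ p 1 i) ∧ p 1 ∈ probSimplex N := by
  have hC : 0 < C := lt_of_lt_of_le hc hcC
  have hN0 : (0:ℝ) < N := by positivity
  set K : ℝ := N * C with hKdef
  have hK : 0 < K := by positivity
  have hN1 : (1:ℝ) ≤ N := by exact_mod_cast (by omega : 1 ≤ N)
  have hCK : C ≤ K := by nlinarith
  -- the sequence of lower bounds
  set a : ℕ → ℝ := fun d => Nat.rec (Real.exp (-K) / N)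
    (fun _ ad => (c * ad / K) * (1 - Real.exp (-(K / N)))) d with hadef
  have ha0 : a 0 = Real.exp (-K) / N := rfl
  have haS : ∀ d, a (d+1) = (c * a d / K) * (1 - Real.exp (-(K / N))) := fun d => rfl
  have hexp1 : Real.exp (-(K / N)) < 1 := by
    rw [Real.exp_lt_one_iff]
    have := div_pos hK hN0
    linarith
  have hapos : ∀ d, 0 < a d := by
    intro d
    induction d with
    | zero => rw [ha0]; positivity
    | succ d ih =>
        rw [haS]
        have h1 : 0 < 1 - Real.exp (-(K / N)) := by linarith
        positivity
  have hamono : ∀ d, a (d+1) ≤ a d := by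
    intro d
    rw [haS]
    have h1 : c * a d / K ≤ a d := by
      rw [div_le_iff₀ hK]
      nlinarith [(hapos d).le]
    nlinarith [(hapos d).le, Real.exp_pos (-(K/N)), h1, hexp1.le]
  refine ⟨a (N-1), hapos _, ?_⟩
  intro Q hQfam p₀ hp₀ p hpc hp
  obtain ⟨hQmeas, hQt⟩ := hQfam
  set F : ℝ → Fin N → ℝ := fun r => (Q r).mulVec (p r) with hFdef
  have hF : ∀ r i, F r i = ∑ j, Q r i j * p r j := by
    intro r i
    simp [hFdef, Matrix.mulVec, dotProduct]
  -- entry bounds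
  have hQoff : ∀ r (i j : Fin N), i ≠ j → 0 ≤ Q r i j ∧ Q r i j ≤ C := by
    intro r i j hij
    obtain ⟨hz, hoff, _⟩ := hQt r
    have hij' : (i:ℕ) ≠ (j:ℕ) := fun h => hij (Fin.ext h)
    by_cases h1 : (i:ℕ)+1 = (j:ℕ) ∨ (j:ℕ)+1 = (i:ℕ)
    · have h2 := hoff i j h1
      exact ⟨le_trans hc.le h2.1, h2.2⟩
    · push_neg at h1
      have h2 : (i:ℕ)+2 ≤ (j:ℕ) ∨ (j:ℕ)+2 ≤ (i:ℕ) := by omega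
      rw [hz i j h2]
      exact ⟨le_rfl, hC.le⟩
  have hQdiag : ∀ r (j : Fin N), -K ≤ Q r j j ∧ Q r j j ≤ 0 := by
    intro r j
    have hcol := (hQt r).2.2 j
    have hsplit : Q r j j + ∑ i ∈ Finset.univ.erase j, Q r i j = 0 := by
      have h := Finset.add_sum_erase Finset.univ (fun i => Q r i j) (Finset.mem_univ j)
      simp only [hcol] at h
      exact h
    have h0 : 0 ≤ ∑ i ∈ Finset.univ.erase j, Q r i j :=
      Finset.sum_nonneg fun i hi => (hQoff r i j (Finset.ne_of_mem_erase hi)).1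
    have h1 : ∑ i ∈ Finset.univ.erase j, Q r i j ≤ ((Finset.univ.erase j).card : ℝ) * C := by
      have := Finset.sum_le_card_nsmul (Finset.univ.erase j) (fun i => Q r i j) C
        (fun i hi => (hQoff r i j (Finset.ne_of_mem_erase hi)).2)
      simpa [nsmul_eq_mul] using this
    have hcard : ((Finset.univ.erase j).card : ℝ) ≤ N := by
      have : (Finset.univ.erase j).card ≤ N := by
        simpa using Finset.card_erase_le.trans (by simp)
      exact_mod_cast this
    constructor
    · nlinarith
    · linarith
  have hQb : ∀ r (i j : Fin N), |Q r i j| ≤ K := by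
    intro r i j
    by_cases h : i = j
    · subst h
      rw [abs_le]
      exact ⟨(hQdiag r i).1, le_trans (hQdiag r i).2 hK.le⟩
    · rw [abs_le]
      exact ⟨le_trans (by linarith) (hQoff r i j h).1, le_trans (hQoff r i j h).2 hCK⟩
  have hp0 : p 0 = p₀ := by simpa using hp 0 le_rfl
  -- bound on p
  obtain ⟨M, hM⟩ := isCompact_Icc.exists_bound_of_continuousOn
    (hpc.mono (Set.Icc_subset_Ici_self : Set.Icc (0:ℝ) 1 ⊆ Set.Ici 0))
  have hM0 : 0 ≤ M := le_trans (norm_nonneg _) (hM 0 ⟨le_rfl, zero_le_one⟩)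
  have hM' : ∀ r, 0 ≤ r → r ≤ 1 → ∀ j, |p r j| ≤ M := by
    intro r h1 h2 j
    calc |p r j| ≤ ‖p r‖ := by
          simpa [Real.norm_eq_abs] using norm_le_pi_norm (p r) j
    _ ≤ M := hM r ⟨h1, h2⟩
  -- integrability (componentwise)
  have hFci : ∀ (i : Fin N) (t s : ℝ), 0 ≤ t → t ≤ s → s ≤ 1 →
      IntervalIntegrable (fun r => F r i) volume t s := by
    intro i t s ht hts hs
    rw [intervalIntegrable_iff_integrableOn_Ioc_of_le hts]
    have hpae : AEMeasurable p (volume.restrict (Set.Ioc t s)) :=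
      ((hpc.mono (fun r hr => le_trans ht hr.1.le)).aemeasurable measurableSet_Ioc)
    have hmeas : AEMeasurable (fun r => F r i) (volume.restrict (Set.Ioc t s)) := by
      simp only [hF]
      apply Finset.aemeasurable_fun_sum
      intro j _
      exact ((hQmeas i j).aemeasurable).mul ((measurable_pi_apply j).comp_aemeasurable hpae)
    apply Integrable.mono' (integrable_const ((N:ℝ) * (K * M))) hmeas.aestronglyMeasurable
    filter_upwards [ae_restrict_mem measurableSet_Ioc] with r hr
    rw [hF, Real.norm_eq_abs]
    calc |∑ j, Q r i j * p r j| ≤ ∑ j, |Q r i j * p r j| := Finset.abs_sum_le_sum_abs _ _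
    _ ≤ ∑ _j : Fin N, K * M := by
        apply Finset.sum_le_sum
        intro j _
        rw [abs_mul]
        exact mul_le_mul (hQb r i j) (hM' r (le_trans ht hr.1.le) (le_trans hr.2 hs) j)
          (abs_nonneg _) hK.le
    _ = (N:ℝ) * (K * M) := by simp [Finset.sum_const, Finset.card_univ]
  -- vector integrability
  have hFvi : ∀ (s : ℝ), 0 ≤ s → s ≤ 1 → IntegrableOn F (Set.Ioc 0 s) := by
    intro s hs hs1
    have hpae : AEMeasurable p (volume.restrict (Set.Ioc 0 s)) :=
      ((hpc.mono (fun r hr => hr.1.le)).aemeasurable measurableSet_Ioc)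
    have hQaem : Measurable (fun t => (fun i j => Q t i j : Fin N → Fin N → ℝ)) := by
      apply measurable_pi_iff.2; intro i; apply measurable_pi_iff.2; intro j
      exact hQmeas i j
    have hmv : Measurable (fun q : (Fin N → Fin N → ℝ) × (Fin N → ℝ) =>
        (fun i => ∑ j, q.1 i j * q.2 j : Fin N → ℝ)) := by
      apply measurable_pi_iff.2
      intro i
      apply Finset.measurable_sum
      intro j _
      exact ((measurable_pi_apply j).comp ((measurable_pi_apply i).comp measurable_fst)).mul
        ((measurable_pi_apply j).comp measurable_snd)
    have hmeas : AEMeasurable F (volume.restrict (Set.Ioc 0 s)) := by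
      have h := hmv.comp_aemeasurable ((hQaem.aemeasurable).prodMk hpae)
      have heq : F = (fun q : (Fin N → Fin N → ℝ) × (Fin N → ℝ) =>
          (fun i => ∑ j, q.1 i j * q.2 j : Fin N → ℝ)) ∘ (fun r => ((fun i j => Q r i j), p r)) := by
        funext r
        funext i
        simp [hF r i]
      rw [heq]
      exact h
    apply Integrable.mono' (integrable_const ((N:ℝ) * (K * M))) hmeas.aestronglyMeasurable
    filter_upwards [ae_restrict_mem measurableSet_Ioc] with r hr
    apply pi_norm_le_iff_of_nonneg (by positivity) |>.2
    intro i
    rw [Real.norm_eq_abs, hF]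
    calc |∑ j, Q r i j * p r j| ≤ ∑ j, |Q r i j * p r j| := Finset.abs_sum_le_sum_abs _ _
    _ ≤ ∑ _j : Fin N, K * M := by
        apply Finset.sum_le_sum
        intro j _
        rw [abs_mul]
        exact mul_le_mul (hQb r i j) (hM' r hr.1.le (le_trans hr.2 hs1) j)
          (abs_nonneg _) hK.le
    _ = (N:ℝ) * (K * M) := by simp [Finset.sum_const, Finset.card_univ]
  have hIapp : ∀ s, 0 ≤ s → s ≤ 1 → ∀ i,
      (∫ r in (0:ℝ)..s, F r) i = ∫ r in (0:ℝ)..s, F r i := by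
    intro s h0 h1 i
    rw [intervalIntegral.integral_of_le h0, intervalIntegral.integral_of_le h0]
    have := (ContinuousLinearMap.proj (R := ℝ) (φ := fun _ : Fin N => ℝ) i).integral_comp_comm
      (hFvi s h0 h1)
    simpa using this.symm
  have hstep : ∀ t s, 0 ≤ t → t ≤ s → s ≤ 1 → ∀ i,
      p s i = p t i + ∫ r in t..s, F r i := by
    intro t s ht hts hs i
    have hps := hp s (le_trans ht hts)
    have hpt := hp t ht
    have h1 : p s i = p₀ i + (∫ r in (0:ℝ)..s, F r) i := by rw [hps]; rfl
    have h2 : p t i = p₀ i + (∫ r in (0:ℝ)..t, F r) i := by rw [hpt]; rfl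
    rw [h1, h2, hIapp s (le_trans ht hts) hs i, hIapp t ht (le_trans hts hs) i]
    have h3 := intervalIntegral.integral_interval_sub_left
      (hFci i 0 s le_rfl (le_trans ht hts) hs) (hFci i 0 t le_rfl ht (le_trans hts hs))
    linarith [h3]
  have hsum1 : ∀ s, 0 ≤ s → s ≤ 1 → ∑ i, p s i = 1 := by
    intro s hs hs1
    have h1 : ∀ i, p s i = p 0 i + ∫ r in (0:ℝ)..s, F r i := hstep 0 s le_rfl hs hs1
    calc ∑ i, p s i = ∑ i, (p 0 i + ∫ r in (0:ℝ)..s, F r i) := by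
          apply Finset.sum_congr rfl; intro i _; exact h1 i
    _ = (∑ i, p 0 i) + ∑ i, ∫ r in (0:ℝ)..s, F r i := Finset.sum_add_distrib
    _ = 1 + ∫ r in (0:ℝ)..s, ∑ i, F r i := by
          rw [hp0, hp₀.1, intervalIntegral.integral_finset_sum
            (fun i _ => hFci i 0 s le_rfl hs hs1)]
    _ = 1 := by
          have : ∀ r, ∑ i, F r i = 0 := by
            intro r
            have hcol := (hQt r).2.2
            calc ∑ i, F r i = ∑ i, ∑ j, Q r i j * p r j := by
                  apply Finset.sum_congr rfl; intro i _; exact hF r i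
            _ = ∑ j, ∑ i, Q r i j * p r j := Finset.sum_comm
            _ = ∑ j, (∑ i, Q r i j) * p r j := by
                  apply Finset.sum_congr rfl; intro j _; rw [Finset.sum_mul]
            _ = 0 := by
                  apply Finset.sum_eq_zero; intro j _; rw [hcol j, zero_mul]
          simp [this]
  -- component continuity and integrability
  have hpcomp : ∀ i : Fin N, ContinuousOn (fun r => p r i) (Set.Icc (0:ℝ) 1) :=
    fun i => (continuous_apply i).comp_continuousOn (hpc.mono Set.Icc_subset_Ici_self)
  have hpii : ∀ (i : Fin N) t s, 0 ≤ t → t ≤ s → s ≤ 1 →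
      IntervalIntegrable (fun r => p r i) volume t s := by
    intro i t s ht hts hs
    apply ContinuousOn.intervalIntegrable
    apply (hpcomp i).mono
    rw [Set.uIcc_of_le hts]
    exact Set.Icc_subset_Icc ht hs
  -- nonnegativity via Gronwall
  set E : ℝ → ℝ := fun s => ∑ i, max (-(p s i)) 0 with hEdef
  have hEnn : ∀ s, 0 ≤ E s := fun s => Finset.sum_nonneg fun i _ => le_max_right _ _
  have hEcont : ContinuousOn E (Set.Icc 0 1) := by
    apply continuousOn_finset_sum
    intro i _
    exact (continuous_neg.max continuous_const).comp_continuousOn (hpcomp i)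
  have hEint : ∀ t s, 0 ≤ t → t ≤ s → s ≤ 1 → IntervalIntegrable E volume t s := by
    intro t s ht hts hs
    apply ContinuousOn.intervalIntegrable
    apply hEcont.mono
    rw [Set.uIcc_of_le hts]
    exact Set.Icc_subset_Icc ht hs
  have hInn : ∀ t s, 0 ≤ t → t ≤ s → s ≤ 1 → 0 ≤ ∫ r in t..s, E r :=
    fun t s ht hts hs => intervalIntegral.integral_nonneg hts (fun u _ => hEnn u)
  have hEkey : ∀ s, 0 ≤ s → s ≤ 1 → E s ≤ K * ∫ r in (0:ℝ)..s, E r := by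
    intro s hs hs1
    have hterm : ∀ i : Fin N, max (-(p s i)) 0 ≤ C * ∫ r in (0:ℝ)..s, E r := by
      intro i
      by_cases hpos : 0 ≤ p s i
      · have hmx : max (-(p s i)) 0 = 0 := max_eq_right (by linarith)
        rw [hmx]
        have := hInn 0 s le_rfl hs hs1
        positivity
      · push_neg at hpos
        set S : Set ℝ := {r ∈ Set.Icc 0 s | 0 ≤ p r i} with hSdef
        have h0S : (0:ℝ) ∈ S := ⟨⟨le_rfl, hs⟩, by rw [hp0]; exact hp₀.2 i⟩
        have hScl : IsClosed S := by
          have hSeq : S = Set.Icc 0 s ∩ (fun r => p r i) ⁻¹' Set.Ici 0 := by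
            ext r; simp [hSdef, and_comm]
          rw [hSeq]
          exact ContinuousOn.preimage_isClosed_of_isClosed
            ((hpcomp i).mono (Set.Icc_subset_Icc le_rfl hs1)) isClosed_Icc isClosed_Ici
        have hScomp : IsCompact S := isCompact_Icc.of_isClosed_subset hScl (fun r hr => hr.1)
        have ht₁S : sSup S ∈ S := hScomp.sSup_mem ⟨0, h0S⟩
        set t₁ := sSup S with ht₁def
        have hneg : ∀ r, t₁ < r → r ≤ s → p r i < 0 := by
          intro r h1 h2
          by_contra hcontra
          push_neg at hcontra
          exact absurd (le_csSup hScomp.bddAbove ⟨⟨le_trans ht₁S.1.1 h1.le, h2⟩, hcontra⟩)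
            (not_le.2 h1)
        have ht₁s : t₁ < s := by
          rcases lt_or_eq_of_le ht₁S.1.2 with h | h
          · exact h
          · exact absurd (h ▸ ht₁S.2) (not_le.2 hpos)
        have ht₁0 : 0 ≤ t₁ := ht₁S.1.1
        have hpt : ∀ r, t₁ < r → r ≤ s → -(C * E r) ≤ F r i := by
          intro r h1 h2
          rw [hF]
          have hterm2 : ∀ j : Fin N, -(C * max (-(p r j)) 0) ≤ Q r i j * p r j := by
            intro j
            by_cases hji : j = i
            · subst hji
              have hpj : p r j ≤ 0 := (hneg r h1 h2).le
              have h3 : 0 ≤ Q r j j * p r j := by nlinarith [(hQdiag r j).2, hpj]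
              have h4 : 0 ≤ max (-(p r j)) 0 := le_max_right _ _
              nlinarith
            · obtain ⟨hq0, hqC⟩ := hQoff r i j (fun h => hji h.symm)
              by_cases hpj : 0 ≤ p r j
              · have hmx : max (-(p r j)) 0 = 0 := max_eq_right (by linarith)
                rw [hmx]
                simpa using mul_nonneg hq0 hpj
              · push_neg at hpj
                have hmx : max (-(p r j)) 0 = -(p r j) := max_eq_left (by linarith)
                rw [hmx]
                have h5 := mul_le_mul_of_nonpos_right hqC hpj.le
                linarith
          calc -(C * E r) = ∑ j, -(C * max (-(p r j)) 0) := by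
                rw [hEdef]
                simp [Finset.mul_sum]
          _ ≤ ∑ j, Q r i j * p r j := Finset.sum_le_sum fun j _ => hterm2 j
        have heq := hstep t₁ s ht₁0 ht₁s.le hs1 i
        have hmx : max (-(p s i)) 0 = -(p s i) := max_eq_left (by linarith)
        have hge : -(∫ r in t₁..s, F r i) ≤ ∫ r in t₁..s, C * E r := by
          have hi1 : IntervalIntegrable (fun r => -(F r i)) volume t₁ s :=
            (hFci i t₁ s ht₁0 ht₁s.le hs1).neg
          have hi2 : IntervalIntegrable (fun r => C * E r) volume t₁ s :=
            (hEint t₁ s ht₁0 ht₁s.le hs1).const_mul C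
          rw [← intervalIntegral.integral_neg]
          rw [intervalIntegral.integral_of_le ht₁s.le, intervalIntegral.integral_of_le ht₁s.le]
          apply setIntegral_mono_on
            ((intervalIntegrable_iff_integrableOn_Ioc_of_le ht₁s.le).1 hi1)
            ((intervalIntegrable_iff_integrableOn_Ioc_of_le ht₁s.le).1 hi2)
            measurableSet_Ioc
          intro r hr
          have := hpt r hr.1 hr.2
          linarith
        have hsplitI : (∫ r in (0:ℝ)..s, E r)
            = (∫ r in (0:ℝ)..t₁, E r) + ∫ r in t₁..s, E r :=
          (intervalIntegral.integral_add_adjacent_intervals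
            (hEint 0 t₁ le_rfl ht₁0 (le_trans ht₁s.le hs1))
            (hEint t₁ s ht₁0 ht₁s.le hs1)).symm
        have h0t₁ : 0 ≤ ∫ r in (0:ℝ)..t₁, E r := hInn 0 t₁ le_rfl ht₁0 (le_trans ht₁s.le hs1)
        have hCE : (∫ r in t₁..s, C * E r) = C * ∫ r in t₁..s, E r :=
          intervalIntegral.integral_const_mul C E
        have hp1nn : 0 ≤ p t₁ i := ht₁S.2
        have hq : C * (∫ r in (0:ℝ)..s, E r)
            = C * (∫ r in (0:ℝ)..t₁, E r) + C * ∫ r in t₁..s, E r := by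
          rw [hsplitI]; ring
        linarith [hge, hCE, hq, mul_nonneg hC.le h0t₁, hp1nn, hmx, heq]
    calc E s = ∑ i, max (-(p s i)) 0 := rfl
    _ ≤ ∑ _i : Fin N, C * ∫ r in (0:ℝ)..s, E r := Finset.sum_le_sum fun i _ => hterm i
    _ = K * ∫ r in (0:ℝ)..s, E r := by
        simp [Finset.sum_const, Finset.card_univ, hKdef]
        ring
  have hEzero := gron_zero K 1 hK E hEcont hEkey
  have hnonneg : ∀ r, 0 ≤ r → r ≤ 1 → ∀ i, 0 ≤ p r i := by
    intro r h1 h2 i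
    have h3 : max (-(p r i)) 0 ≤ E r := by
      simp only [hEdef]
      exact Finset.single_le_sum (f := fun j => max (-(p r j)) 0)
        (fun j _ => le_max_right _ _) (Finset.mem_univ i)
    have h4 := hEzero r h1 h2
    have h5 : -(p r i) ≤ max (-(p r i)) 0 := le_max_left _ _
    linarith
  -- lower bound on F via diagonal
  have hFlow : ∀ r, 0 ≤ r → r ≤ 1 → ∀ i : Fin N, (-K) * p r i ≤ F r i := by
    intro r h1 h2 i
    rw [hF]
    have hsp := Finset.add_sum_erase Finset.univ (fun j => Q r i j * p r j) (Finset.mem_univ i)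
    have herase : 0 ≤ ∑ j ∈ Finset.univ.erase i, Q r i j * p r j :=
      Finset.sum_nonneg fun j hj =>
        mul_nonneg (hQoff r i j (fun h => (Finset.ne_of_mem_erase hj) h.symm)).1
          (hnonneg r h1 h2 j)
    have hdg : (-K) * p r i ≤ Q r i i * p r i :=
      mul_le_mul_of_nonneg_right (by linarith [(hQdiag r i).1]) (hnonneg r h1 h2 i)
    linarith
  -- decay estimate
  have hdecay : ∀ (i : Fin N) t s, 0 ≤ t → t ≤ s → s ≤ 1 →
      p t i * Real.exp (K * (t - s)) ≤ p s i := by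
    intro i t s ht hts hs1
    have hineq : ∀ s₁ s₂, t ≤ s₁ → s₁ ≤ s₂ → s₂ ≤ 1 →
        (fun r => p r i) s₁ - K * (∫ r in s₁..s₂, p r i) + 0 * (s₂ - s₁) ≤ (fun r => p r i) s₂ := by
      intro s₁ s₂ h1 h2 h3
      have heq := hstep s₁ s₂ (le_trans ht h1) h2 h3 i
      have hmono : (∫ r in s₁..s₂, (-K) * p r i) ≤ ∫ r in s₁..s₂, F r i := by
        rw [intervalIntegral.integral_of_le h2, intervalIntegral.integral_of_le h2]
        apply setIntegral_mono_on
          ((intervalIntegrable_iff_integrableOn_Ioc_of_le h2).1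
            ((hpii i s₁ s₂ (le_trans ht h1) h2 h3).const_mul (-K)))
          ((intervalIntegrable_iff_integrableOn_Ioc_of_le h2).1
            (hFci i s₁ s₂ (le_trans ht h1) h2 h3))
          measurableSet_Ioc
        intro r hr
        exact hFlow r (le_trans (le_trans ht h1) hr.1.le) (le_trans hr.2 h3) i
      rw [intervalIntegral.integral_const_mul] at hmono
      simp only
      linarith
    have hcomp := gron_comp K 0 (p t i) t 1 hK (fun r => p r i)
      ((hpcomp i).mono (Set.Icc_subset_Icc ht le_rfl)) le_rfl (le_trans hts hs1)
      hineq s hts hs1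
    simpa using hcomp
  -- gain from a neighbour
  have hgain : ∀ (i jn : Fin N), ((i:ℕ)+1 = (jn:ℕ) ∨ (jn:ℕ)+1 = (i:ℕ)) →
      ∀ b t, 0 ≤ b → 0 ≤ t → t ≤ 1 →
      (∀ r, t ≤ r → r ≤ 1 → b ≤ p r jn) → ∀ s, t ≤ s → s ≤ 1 →
      (0 - c * b / K) * Real.exp (K * (t - s)) + c * b / K ≤ p s i := by
    intro i jn hadj b t hb ht ht1 hlow s hts hs1
    have hjni : jn ≠ i := by
      intro h
      subst h
      rcases hadj with h | h <;> omega
    have hineq : ∀ s₁ s₂, t ≤ s₁ → s₁ ≤ s₂ → s₂ ≤ 1 →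
        (fun r => p r i) s₁ - K * (∫ r in s₁..s₂, p r i) + (c * b) * (s₂ - s₁)
          ≤ (fun r => p r i) s₂ := by
      intro s₁ s₂ h1 h2 h3
      have heq := hstep s₁ s₂ (le_trans ht h1) h2 h3 i
      have hptw : ∀ r, s₁ ≤ r → r ≤ s₂ → (-K) * p r i + c * b ≤ F r i := by
        intro r hr1 hr2
        have hr0 : 0 ≤ r := le_trans (le_trans ht h1) hr1
        have hr1' : r ≤ 1 := le_trans hr2 h3
        rw [hF]
        have hsp := Finset.add_sum_erase Finset.univ (fun j => Q r i j * p r j)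
          (Finset.mem_univ i)
        have hjn_mem : jn ∈ Finset.univ.erase i := Finset.mem_erase.2 ⟨hjni, Finset.mem_univ jn⟩
        have herase : Q r i jn * p r jn ≤ ∑ j ∈ Finset.univ.erase i, Q r i j * p r j :=
          Finset.single_le_sum
            (fun j hj => mul_nonneg
              (hQoff r i j (fun h => (Finset.ne_of_mem_erase hj) h.symm)).1
              (hnonneg r hr0 hr1' j)) hjn_mem
        have hQc : c ≤ Q r i jn := ((hQt r).2.1 i jn hadj).1
        have hcb : c * b ≤ Q r i jn * p r jn :=
          mul_le_mul hQc (hlow r (le_trans h1 hr1) hr1') hb (le_trans hc.le hQc)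
        have hdg : (-K) * p r i ≤ Q r i i * p r i :=
          mul_le_mul_of_nonneg_right (by linarith [(hQdiag r i).1]) (hnonneg r hr0 hr1' i)
        linarith
      have hmono : (∫ r in s₁..s₂, ((-K) * p r i + c * b)) ≤ ∫ r in s₁..s₂, F r i := by
        rw [intervalIntegral.integral_of_le h2, intervalIntegral.integral_of_le h2]
        apply setIntegral_mono_on
          ((intervalIntegrable_iff_integrableOn_Ioc_of_le h2).1
            (((hpii i s₁ s₂ (le_trans ht h1) h2 h3).const_mul (-K)).add
              intervalIntegrable_const))
          ((intervalIntegrable_iff_integrableOn_Ioc_of_le h2).1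
            (hFci i s₁ s₂ (le_trans ht h1) h2 h3))
          measurableSet_Ioc
        intro r hr
        exact hptw r hr.1.le hr.2
      have hadd : (∫ r in s₁..s₂, ((-K) * p r i + c * b))
          = (-K) * (∫ r in s₁..s₂, p r i) + (c * b) * (s₂ - s₁) := by
        rw [intervalIntegral.integral_add
          ((hpii i s₁ s₂ (le_trans ht h1) h2 h3).const_mul (-K)) intervalIntegrable_const,
          intervalIntegral.integral_const_mul, intervalIntegral.integral_const]
        rw [smul_eq_mul]
        ring
      rw [hadd] at hmono
      simp only
      linarith
    exact gron_comp K (c*b) 0 t 1 hK (fun r => p r i)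
      ((hpcomp i).mono (Set.Icc_subset_Icc ht le_rfl)) (hnonneg t ht ht1 i) ht1
      hineq s hts hs1
  -- initial mass
  have hNe : Nonempty (Fin N) := ⟨⟨0, by omega⟩⟩
  have hj₀ : ∃ j₀ : Fin N, 1 / (N:ℝ) ≤ p₀ j₀ := by
    by_contra hcon
    push_neg at hcon
    have hlt : ∑ j, p₀ j < ∑ _j : Fin N, 1/(N:ℝ) :=
      Finset.sum_lt_sum_of_nonempty Finset.univ_nonempty (fun j _ => hcon j)
    rw [hp₀.1] at hlt
    have : ∑ _j : Fin N, 1/(N:ℝ) = 1 := by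
      simp [Finset.sum_const, Finset.card_univ]
      field_simp
    rw [this] at hlt
    exact lt_irrefl 1 hlt
  obtain ⟨j₀, hj₀⟩ := hj₀
  -- the propagation induction
  have hind : ∀ d : ℕ, ∀ i : Fin N, Nat.dist (i:ℕ) (j₀:ℕ) ≤ d →
      ∀ s, ((d:ℝ))/N ≤ s → s ≤ 1 → a d ≤ p s i := by
    intro d
    induction d with
    | zero =>
      intro i hdist s hs hs1
      have hij : i = j₀ := Fin.ext (Nat.eq_of_dist_eq_zero (Nat.le_zero.1 hdist))
      subst hij
      have hs0 : 0 ≤ s := by simpa using hs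
      have hd := hdecay i 0 s le_rfl hs0 hs1
      rw [hp0] at hd
      have h1 : Real.exp (-K) ≤ Real.exp (K * (0 - s)) := by
        rw [Real.exp_le_exp]
        nlinarith
      calc a 0 = Real.exp (-K) * (1/(N:ℝ)) := by rw [ha0]; ring
      _ ≤ Real.exp (K*(0-s)) * p₀ i :=
          mul_le_mul h1 hj₀ (by positivity) (Real.exp_pos _).le
      _ = p₀ i * Real.exp (K*(0-s)) := mul_comm _ _
      _ ≤ p s i := hd
    | succ d ih =>
      intro i hdist s hs hs1
      have hs' : ((d:ℝ)+1)/N ≤ s := by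
        have hcst : (((d+1 : ℕ)):ℝ) = (d:ℝ) + 1 := by push_cast; ring
        rw [← hcst]
        exact hs
      have hsplitd : ((d:ℝ)+1)/N = (d:ℝ)/N + 1/N := by ring
      have hdd : (d:ℝ)/N ≤ ((d:ℝ)+1)/N := by
        rw [hsplitd]
        have : 0 < 1/(N:ℝ) := by positivity
        linarith
      have hdN : (d:ℝ)/N ≤ 1 := le_trans hdd (le_trans hs' hs1)
      have hd0 : 0 ≤ (d:ℝ)/N := by positivity
      rcases lt_or_eq_of_le hdist with hlt | heq
      · have hle : Nat.dist (i:ℕ) (j₀:ℕ) ≤ d := Nat.lt_succ_iff.1 hlt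
        have := ih i hle s (le_trans hdd hs') hs1
        linarith [hamono d]
      · -- dist = d + 1, pick a neighbour one step closer to j₀
        have hne : (i:ℕ) ≠ (j₀:ℕ) := by
          intro h
          rw [Nat.dist_eq_zero h] at heq
          omega
        have hiN : (i:ℕ) < N := i.isLt
        have hjN : (j₀:ℕ) < N := j₀.isLt
        obtain ⟨jn, hadj, hdist2⟩ :
            ∃ jn : Fin N, ((i:ℕ)+1 = (jn:ℕ) ∨ (jn:ℕ)+1 = (i:ℕ)) ∧
              Nat.dist (jn:ℕ) (j₀:ℕ) ≤ d := by
          rcases Nat.lt_or_ge (i:ℕ) (j₀:ℕ) with hlt2 | hge2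
          · refine ⟨⟨(i:ℕ)+1, by omega⟩, Or.inl rfl, ?_⟩
            simp only [Nat.dist] at heq ⊢
            omega
          · have hgt : (j₀:ℕ) < (i:ℕ) := lt_of_le_of_ne hge2 (fun h => hne h.symm)
            refine ⟨⟨(i:ℕ)-1, by omega⟩, Or.inr (by simp; omega), ?_⟩
            simp only [Nat.dist] at heq ⊢
            omega
        have hlow : ∀ r, (d:ℝ)/N ≤ r → r ≤ 1 → a d ≤ p r jn :=
          fun r h1 h2 => ih jn hdist2 r h1 h2
        have hg := hgain i jn hadj (a d) ((d:ℝ)/N) (hapos d).le hd0 hdN hlow s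
          (le_trans hdd hs') hs1
        have hexp2 : Real.exp (K*((d:ℝ)/N - s)) ≤ Real.exp (-(K/N)) := by
          rw [Real.exp_le_exp]
          have h6 : (d:ℝ)/N - s ≤ -(1/N) := by linarith
          have h7 := mul_le_mul_of_nonneg_left h6 hK.le
          have h8 : K * (-(1/(N:ℝ))) = -(K/N) := by ring
          linarith
        rw [haS]
        have hB : 0 ≤ c * a d / K := div_nonneg (mul_nonneg hc.le (hapos d).le) hK.le
        nlinarith [hg, mul_le_mul_of_nonneg_left hexp2 hB]
  -- conclusion
  have hfinal : ∀ i : Fin N, a (N-1) ≤ p 1 i := by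
    intro i
    apply hind (N-1) i ?_ 1 ?_ le_rfl
    · have h1 : (i:ℕ) < N := i.isLt
      have h2 : (j₀:ℕ) < N := j₀.isLt
      simp only [Nat.dist]
      omega
    · rw [div_le_one hN0]
      have : ((N-1:ℕ):ℝ) ≤ (N:ℝ) := by exact_mod_cast Nat.sub_le N 1
      linarith
  exact ⟨hfinal, hsum1 1 zero_le_one le_rfl, fun i => le_trans (hapos (N-1)).le (hfinal i)⟩
end
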